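/- arXiv:1911.05883 — 5 statements merged into one kernel-verified Lean document; each statement's English description precedes it below -/
import Mathlib

section
/- Let m, n be positive integers, λ_{ij} > 0 for 1 ≤ i ≤ m, 1 ≤ j ≤ n, α_i = ∑_{j=1}^n λ_{ij}, β_j = ∑_{i=1}^m λ_{ij}, and let ρ < 2. Then the logarithmic derivative (ln f)', where f(t) = [∏_{i=1}^m Γ(1+α_i t) · ∏_{j=1}^n Γ(1+β_j t)] / [∏_{i=1}^m ∏_{j=1}^n Γ(1+λ_{ij} t)]^ρ, is strictly increasing and concave on (0, ∞), and the image of (0, ∞) under (ln f)' is exactly the open interval (−γ(2−ρ)∑_{i=1}^m ∑_{j=1}^n λ_{ij}, ∞), where γ is the Euler–Mascheroni constant. -/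
open Finset Filter Topology

namespace LogDerivGammaAux

noncomputable def S1 (x : ℝ) : ℝ := ∑' k : ℕ, (1/((k:ℝ)+1) - 1/((k:ℝ)+1+x))
noncomputable def S2 (x : ℝ) : ℝ := ∑' k : ℕ, 1/((k:ℝ)+1+x)^2
noncomputable def S3 (x : ℝ) : ℝ := ∑' k : ℕ, 1/((k:ℝ)+1+x)^3
noncomputable def S4 (x : ℝ) : ℝ := ∑' k : ℕ, 1/((k:ℝ)+1+x)^4
noncomputable def L (x : ℝ) : ℝ := ∑' k : ℕ, (x/((k:ℝ)+1) - Real.log (1 + x/((k:ℝ)+1)))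

lemma summable_base : Summable (fun k : ℕ => 1/((k:ℝ)+1)^2) := by
  have := Real.summable_one_div_nat_pow (p := 2) |>.mpr one_lt_two
  have h2 := (summable_nat_add_iff 1).mpr this
  refine h2.congr fun k => ?_
  push_cast
  ring

lemma K_pos (k : ℕ) : (0:ℝ) < (k:ℝ)+1 := by positivity

lemma Kx_pos {x : ℝ} (hx : 0 ≤ x) (k : ℕ) : (0:ℝ) < (k:ℝ)+1+x := by positivity

lemma one_le_Kx {x : ℝ} (hx : 0 ≤ x) (k : ℕ) : (1:ℝ) ≤ (k:ℝ)+1+x := by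
  have : (0:ℝ) ≤ (k:ℝ) := k.cast_nonneg
  linarith

lemma summable_pow {x : ℝ} (hx : 0 ≤ x) (m : ℕ) (hm : 2 ≤ m) :
    Summable (fun k : ℕ => 1/((k:ℝ)+1+x)^m) := by
  refine Summable.of_nonneg_of_le (fun k => by positivity) (fun k => ?_) summable_base
  have h1 := one_le_Kx hx k
  have h2 : ((k:ℝ)+1)^2 ≤ ((k:ℝ)+1+x)^2 := by nlinarith [K_pos k]
  have h3 : ((k:ℝ)+1+x)^2 ≤ ((k:ℝ)+1+x)^m := pow_le_pow_right₀ h1 hm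
  have h4 : (0:ℝ) < ((k:ℝ)+1)^2 := by positivity
  exact one_div_le_one_div_of_le h4 (h2.trans h3)

lemma summable_S2 {x : ℝ} (hx : 0 ≤ x) : Summable (fun k : ℕ => 1/((k:ℝ)+1+x)^2) :=
  summable_pow hx 2 le_rfl
lemma summable_S3 {x : ℝ} (hx : 0 ≤ x) : Summable (fun k : ℕ => 1/((k:ℝ)+1+x)^3) :=
  summable_pow hx 3 (by norm_num)
lemma summable_S4 {x : ℝ} (hx : 0 ≤ x) : Summable (fun k : ℕ => 1/((k:ℝ)+1+x)^4) :=
  summable_pow hx 4 (by norm_num)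

lemma S1_term_eq {x : ℝ} (hx : 0 ≤ x) (k : ℕ) :
    1/((k:ℝ)+1) - 1/((k:ℝ)+1+x) = x/(((k:ℝ)+1)*((k:ℝ)+1+x)) := by
  field_simp
  ring

lemma S1_term_nonneg {x : ℝ} (hx : 0 ≤ x) (k : ℕ) :
    0 ≤ 1/((k:ℝ)+1) - 1/((k:ℝ)+1+x) := by
  rw [S1_term_eq hx]
  positivity

lemma S1_term_le {x : ℝ} (hx : 0 ≤ x) (k : ℕ) :
    1/((k:ℝ)+1) - 1/((k:ℝ)+1+x) ≤ x * (1/((k:ℝ)+1)^2) := by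
  rw [S1_term_eq hx]
  have h1 := K_pos k
  have h2 : ((k:ℝ)+1)^2 ≤ ((k:ℝ)+1)*((k:ℝ)+1+x) := by nlinarith
  have h3 : x/(((k:ℝ)+1)*((k:ℝ)+1+x)) ≤ x/((k:ℝ)+1)^2 :=
    div_le_div_of_nonneg_left hx (by positivity) h2
  calc x/(((k:ℝ)+1)*((k:ℝ)+1+x)) ≤ x/((k:ℝ)+1)^2 := h3
    _ = x * (1/((k:ℝ)+1)^2) := by ring

lemma summable_S1 {x : ℝ} (hx : 0 ≤ x) :
    Summable (fun k : ℕ => 1/((k:ℝ)+1) - 1/((k:ℝ)+1+x)) :=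
  Summable.of_nonneg_of_le (S1_term_nonneg hx) (S1_term_le hx) (summable_base.mul_left x)

lemma log_term_bounds {u : ℝ} (hu : 0 ≤ u) :
    0 ≤ u - Real.log (1+u) ∧ u - Real.log (1+u) ≤ u^2 := by
  constructor
  · have h := Real.log_le_sub_one_of_pos (x := 1+u) (by linarith)
    linarith
  · have h := Real.log_le_sub_one_of_pos (x := 1/(1+u)) (by positivity)
    have h2 : Real.log (1/(1+u)) = - Real.log (1+u) := by
      rw [one_div, Real.log_inv]
    rw [h2] at h
    have h3 : 1/(1+u) - 1 = -u/(1+u) := by field_simp; ring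
    rw [h3, neg_div] at h
    have h4 : u/(1+u) ≤ Real.log (1+u) := by linarith
    have h5 : u - u/(1+u) = u^2/(1+u) := by field_simp; ring
    have h6 : u^2/(1+u) ≤ u^2 := by
      apply div_le_self (by positivity) (by linarith)
    linarith

lemma summable_L {x : ℝ} (hx : 0 ≤ x) :
    Summable (fun k : ℕ => x/((k:ℝ)+1) - Real.log (1 + x/((k:ℝ)+1))) := by
  refine Summable.of_nonneg_of_le
    (fun k => (log_term_bounds (by positivity)).1)
    (fun k => ?_) ((summable_base.mul_left (x^2)))
  have h := (log_term_bounds (u := x/((k:ℝ)+1)) (by positivity)).2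
  calc x/((k:ℝ)+1) - Real.log (1 + x/((k:ℝ)+1)) ≤ (x/((k:ℝ)+1))^2 := h
    _ = x^2 * (1/((k:ℝ)+1)^2) := by rw [div_pow]; ring


-- new material
lemma pow_bound {y : ℝ} (hy : 0 ≤ y) (k : ℕ) {m : ℕ} (hm : 2 ≤ m) :
    1/((k:ℝ)+1+y)^m ≤ 1/((k:ℝ)+1)^2 := by
  have h1 := one_le_Kx hy k
  have h2 : ((k:ℝ)+1)^2 ≤ ((k:ℝ)+1+y)^2 := by nlinarith [K_pos k]
  have h3 : ((k:ℝ)+1+y)^2 ≤ ((k:ℝ)+1+y)^m := pow_le_pow_right₀ h1 hm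
  exact one_div_le_one_div_of_le (by positivity) (h2.trans h3)

lemma hasDerivAt_term1 (k : ℕ) {y : ℝ} (hy : 0 < y) :
    HasDerivAt (fun z => 1/((k:ℝ)+1) - 1/((k:ℝ)+1+z)) (1/((k:ℝ)+1+y)^2) y := by
  have h0 : ((k:ℝ)+1+y) ≠ 0 := (Kx_pos hy.le k).ne'
  have h1 : HasDerivAt (fun z : ℝ => (k:ℝ)+1+z) 1 y := (hasDerivAt_id y).const_add _
  have h2 := h1.fun_inv h0
  have h3 := (hasDerivAt_const y (1/((k:ℝ)+1))).fun_sub h2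
  have h4 : HasDerivAt (fun z => 1/((k:ℝ)+1) - 1/((k:ℝ)+1+z)) (0 - -1/((k:ℝ)+1+y)^2) y := by
    simpa only [one_div] using h3
  have h5 : (0:ℝ) - -1/((k:ℝ)+1+y)^2 = 1/((k:ℝ)+1+y)^2 := by ring
  rwa [h5] at h4

lemma hasDerivAt_term2 (k : ℕ) {y : ℝ} (hy : 0 < y) :
    HasDerivAt (fun z => 1/((k:ℝ)+1+z)^2) (-2 * (1/((k:ℝ)+1+y)^3)) y := by
  have h0 : ((k:ℝ)+1+y) ≠ 0 := (Kx_pos hy.le k).ne'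
  have h1 : HasDerivAt (fun z : ℝ => (k:ℝ)+1+z) 1 y := (hasDerivAt_id y).const_add _
  have h2 := (h1.fun_pow 2).fun_inv (pow_ne_zero 2 h0)
  simp only [one_div]
  convert! h2 using 1
  field_simp
  ring

lemma hasDerivAt_term3 (k : ℕ) {y : ℝ} (hy : 0 < y) :
    HasDerivAt (fun z => 1/((k:ℝ)+1+z)^3) (-3 * (1/((k:ℝ)+1+y)^4)) y := by
  have h0 : ((k:ℝ)+1+y) ≠ 0 := (Kx_pos hy.le k).ne'
  have h1 : HasDerivAt (fun z : ℝ => (k:ℝ)+1+z) 1 y := (hasDerivAt_id y).const_add _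
  have h2 := (h1.fun_pow 3).fun_inv (pow_ne_zero 3 h0)
  simp only [one_div]
  convert! h2 using 1
  field_simp
  ring

lemma hasDerivAt_S1 {x : ℝ} (hx : 0 < x) : HasDerivAt S1 (S2 x) x := by
  refine hasDerivAt_tsum_of_isPreconnected summable_base isOpen_Ioi
    (convex_Ioi (0:ℝ)).isPreconnected (fun k y hy => hasDerivAt_term1 k hy)
    (fun k y hy => ?_) (Set.mem_Ioi.mpr one_pos) (summable_S1 zero_le_one) hx
  rw [Real.norm_eq_abs, abs_of_nonneg (by positivity)]
  exact pow_bound (le_of_lt hy) k le_rfl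

lemma hasDerivAt_S2 {x : ℝ} (hx : 0 < x) : HasDerivAt S2 (-2 * S3 x) x := by
  have h : HasDerivAt S2 (∑' k : ℕ, (-2 * (1/((k:ℝ)+1+x)^3))) x := by
    refine hasDerivAt_tsum_of_isPreconnected (summable_base.mul_left 2) isOpen_Ioi
      (convex_Ioi (0:ℝ)).isPreconnected (fun k y hy => hasDerivAt_term2 k hy)
      (fun k y hy => ?_) (Set.mem_Ioi.mpr one_pos) (summable_S2 zero_le_one) hx
    rw [Real.norm_eq_abs, abs_mul,
      abs_of_nonneg (le_of_lt (div_pos one_pos (pow_pos (Kx_pos (le_of_lt hy) k) 3)))]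
    have : |(-2:ℝ)| = 2 := by norm_num
    rw [this]
    have := pow_bound (le_of_lt hy) k (show 2 ≤ 3 by norm_num)
    nlinarith
  rwa [tsum_mul_left] at h

lemma hasDerivAt_S3 {x : ℝ} (hx : 0 < x) : HasDerivAt S3 (-3 * S4 x) x := by
  have h : HasDerivAt S3 (∑' k : ℕ, (-3 * (1/((k:ℝ)+1+x)^4))) x := by
    refine hasDerivAt_tsum_of_isPreconnected (summable_base.mul_left 3) isOpen_Ioi
      (convex_Ioi (0:ℝ)).isPreconnected (fun k y hy => hasDerivAt_term3 k hy)
      (fun k y hy => ?_) (Set.mem_Ioi.mpr one_pos) (summable_S3 zero_le_one) hx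
    rw [Real.norm_eq_abs, abs_mul,
      abs_of_nonneg (le_of_lt (div_pos one_pos (pow_pos (Kx_pos (le_of_lt hy) k) 4)))]
    have : |(-3:ℝ)| = 3 := by norm_num
    rw [this]
    have := pow_bound (le_of_lt hy) k (show 2 ≤ 4 by norm_num)
    nlinarith
  rwa [tsum_mul_left] at h

lemma hasDerivAt_termL (k : ℕ) {y : ℝ} (hy : 0 < y) :
    HasDerivAt (fun z => z/((k:ℝ)+1) - Real.log (1 + z/((k:ℝ)+1)))
      (1/((k:ℝ)+1) - 1/((k:ℝ)+1+y)) y := by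
  have hK := K_pos k
  have h0 : (1 : ℝ) + y/((k:ℝ)+1) ≠ 0 := by positivity
  have h1 : HasDerivAt (fun z : ℝ => z/((k:ℝ)+1)) (1/((k:ℝ)+1)) y := by
    simpa using (hasDerivAt_id y).div_const ((k:ℝ)+1)
  have h2 := ((h1.const_add 1).log h0)
  have h3 := h1.fun_sub h2
  convert! h3 using 1
  have hKy : ((k:ℝ)+1+y) ≠ 0 := (Kx_pos hy.le k).ne'
  field_simp

lemma hasDerivAt_L {x : ℝ} (hx : 0 < x) : HasDerivAt L (S1 x) x := by
  refine hasDerivAt_tsum_of_isPreconnected (summable_base.mul_left (x+1)) isOpen_Ioo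
    (convex_Ioo (0:ℝ) (x+1)).isPreconnected (fun k y hy => hasDerivAt_termL k hy.1)
    (fun k y hy => ?_) (Set.mem_Ioo.mpr ⟨hx, by linarith⟩) (summable_L hx.le)
    (Set.mem_Ioo.mpr ⟨hx, by linarith⟩)
  rw [Real.norm_eq_abs, abs_of_nonneg (S1_term_nonneg hy.1.le k)]
  refine (S1_term_le hy.1.le k).trans ?_
  have h2 := hy.2
  have hk : (0:ℝ) ≤ 1/((k:ℝ)+1)^2 := by positivity
  nlinarith


/-- positivity -/
lemma S1_nonneg {x : ℝ} (hx : 0 ≤ x) : 0 ≤ S1 x := tsum_nonneg (S1_term_nonneg hx)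

lemma S1_pos {x : ℝ} (hx : 0 < x) : 0 < S1 x := by
  refine Summable.tsum_pos (summable_S1 hx.le) (S1_term_nonneg hx.le) 0 ?_
  simp only [Nat.cast_zero, zero_add]
  have h2 : 1/(1+x) < 1/1 := one_div_lt_one_div_of_lt one_pos (by linarith)
  norm_num at h2 ⊢
  linarith

lemma S2_pos {x : ℝ} (hx : 0 ≤ x) : 0 < S2 x := by
  refine Summable.tsum_pos (summable_S2 hx) (fun k => by positivity) 0 ?_
  exact div_pos one_pos (pow_pos (Kx_pos hx 0) 2)

lemma S3_pos {x : ℝ} (hx : 0 ≤ x) : 0 < S3 x := by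
  refine Summable.tsum_pos (summable_S3 hx) (fun k => by positivity) 0 ?_
  exact div_pos one_pos (pow_pos (Kx_pos hx 0) 3)

lemma S1_le {x : ℝ} (hx : 0 ≤ x) : S1 x ≤ x * (∑' k : ℕ, 1/((k:ℝ)+1)^2) := by
  rw [← tsum_mul_left]
  exact Summable.tsum_le_tsum (S1_term_le hx) (summable_S1 hx) (summable_base.mul_left x)

/-- Abel/telescoping: `∑ (k+1)(c k − c (k+1)) = ∑ c k`. -/
lemma abel_tsum (c : ℕ → ℝ) (hc : Summable c)
    (h0 : Tendsto (fun k : ℕ => ((k:ℝ)+1) * c k) atTop (𝓝 0))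
    (hs : Summable (fun k : ℕ => ((k:ℝ)+1)*(c k - c (k+1)))) :
    ∑' k : ℕ, ((k:ℝ)+1)*(c k - c (k+1)) = ∑' k : ℕ, c k := by
  set e : ℕ → ℝ := fun k => ((k:ℝ)+1) * c k with he
  have hterm : ∀ k : ℕ, ((k:ℝ)+1)*(c k - c (k+1)) = (e k - e (k+1)) + c (k+1) := by
    intro k; simp only [he]; push_cast; ring
  have hsum_shift : Summable (fun k : ℕ => c (k+1)) := (summable_nat_add_iff 1).mpr hc
  have hsd : Summable (fun k : ℕ => e k - e (k+1)) := by
    have := hs.sub hsum_shift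
    exact this.congr (fun k => by rw [hterm k]; ring)
  have htel : ∑' k : ℕ, (e k - e (k+1)) = e 0 := by
    have hH : HasSum (fun k : ℕ => e k - e (k+1)) (e 0) := by
      rw [hsd.hasSum_iff_tendsto_nat]
      have : ∀ n : ℕ, ∑ i ∈ range n, (e i - e (i+1)) = e 0 - e n := by
        intro n; exact Finset.sum_range_sub' e n
      simp_rw [this]
      simpa using tendsto_const_nhds.sub h0
    exact hH.tsum_eq
  calc ∑' k : ℕ, ((k:ℝ)+1)*(c k - c (k+1))
      = ∑' k : ℕ, ((e k - e (k+1)) + c (k+1)) := by exact tsum_congr hterm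
    _ = (∑' k : ℕ, (e k - e (k+1))) + ∑' k : ℕ, c (k+1) := Summable.tsum_add hsd hsum_shift
    _ = e 0 + ((∑' k : ℕ, c k) - c 0) := by
        rw [htel]
        congr 1
        have := Summable.tsum_eq_zero_add hc
        linarith [this]
    _ = ∑' k : ℕ, c k := by simp [he]


lemma key2 {y : ℝ} (hy : 1 ≤ y) : 1/y^2 - 1/(y+1)^2 ≤ 2/y^3 := by
  have hy0 : 0 < y := lt_of_lt_of_le one_pos hy
  have hy1 : 0 < y + 1 := by linarith
  rw [div_sub_div _ _ (by positivity) (by positivity), div_le_div_iff₀ (by positivity) (by positivity)]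
  ring_nf
  nlinarith [sq_nonneg y, pow_pos hy0 3, pow_pos hy0 2]

lemma key3 {y : ℝ} (hy : 1 ≤ y) : 1/y^3 - 1/(y+1)^3 ≤ 3/y^4 := by
  have hy0 : 0 < y := lt_of_lt_of_le one_pos hy
  have hy1 : 0 < y + 1 := by linarith
  rw [div_sub_div _ _ (by positivity) (by positivity), div_le_div_iff₀ (by positivity) (by positivity)]
  ring_nf
  nlinarith [pow_pos hy0 2, pow_pos hy0 3, pow_pos hy0 4, sq_nonneg y]

lemma tendsto_kc2 {x : ℝ} (hx : 0 ≤ x) :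
    Tendsto (fun k : ℕ => ((k:ℝ)+1) * (1/((k:ℝ)+1+x)^2)) atTop (𝓝 0) := by
  apply squeeze_zero (fun k => by positivity) (g := fun k : ℕ => 1/((k:ℝ)+1))
  · intro k
    have h1 := Kx_pos hx k
    have h2 := K_pos k
    rw [mul_one_div, div_le_div_iff₀ (by positivity) h2]
    nlinarith [one_le_Kx hx k]
  · exact tendsto_one_div_add_atTop_nhds_zero_nat

lemma tendsto_kc3 {x : ℝ} (hx : 0 ≤ x) :
    Tendsto (fun k : ℕ => ((k:ℝ)+1) * (1/((k:ℝ)+1+x)^3)) atTop (𝓝 0) := by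
  apply squeeze_zero (fun k => by positivity) (g := fun k : ℕ => 1/((k:ℝ)+1))
  · intro k
    have h1 := Kx_pos hx k
    have h2 := K_pos k
    rw [mul_one_div, div_le_div_iff₀ (by positivity) h2]
    have h3 := one_le_Kx hx k
    nlinarith [pow_pos h1 2]
  · exact tendsto_one_div_add_atTop_nhds_zero_nat

lemma c2_succ {x : ℝ} (k : ℕ) :
    1/(((k+1:ℕ):ℝ)+1+x)^2 = 1/((((k:ℝ)+1+x)+1))^2 := by push_cast; ring_nf

lemma c3_succ {x : ℝ} (k : ℕ) :
    1/(((k+1:ℕ):ℝ)+1+x)^3 = 1/((((k:ℝ)+1+x)+1))^3 := by push_cast; ring_nf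

lemma U2 {x : ℝ} (hx : 0 < x) : 2*x*S3 x ≤ S2 x := by
  set c : ℕ → ℝ := fun k => 1/((k:ℝ)+1+x)^2 with hc
  have hterm_le : ∀ k : ℕ, ((k:ℝ)+1)*(c k - c (k+1)) ≤ 2*((k:ℝ)+1)/((k:ℝ)+1+x)^3 := by
    intro k
    have h1 := one_le_Kx hx.le k
    have h2 := key2 h1
    have h3 : c (k+1) = 1/((((k:ℝ)+1+x)+1))^2 := c2_succ k
    have h4 : (0:ℝ) ≤ (k:ℝ)+1 := (K_pos k).le
    calc ((k:ℝ)+1)*(c k - c (k+1)) ≤ ((k:ℝ)+1)*(2/((k:ℝ)+1+x)^3) := by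
          apply mul_le_mul_of_nonneg_left _ h4
          have hck : c k = 1/((k:ℝ)+1+x)^2 := rfl
          rw [hck, h3]
          exact h2
      _ = 2*((k:ℝ)+1)/((k:ℝ)+1+x)^3 := by ring
  have hnonneg : ∀ k : ℕ, 0 ≤ ((k:ℝ)+1)*(c k - c (k+1)) := by
    intro k
    have h1 := Kx_pos hx.le k
    have h3 : c (k+1) = 1/((((k:ℝ)+1+x)+1))^2 := c2_succ k
    have : c (k+1) ≤ c k := by
      have hck : c k = 1/((k:ℝ)+1+x)^2 := rfl
      rw [hck, h3]
      apply one_div_le_one_div_of_le (by positivity)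
      nlinarith
    have h4 : (0:ℝ) ≤ (k:ℝ)+1 := (K_pos k).le
    nlinarith
  have hTsummable : Summable (fun k : ℕ => 2*((k:ℝ)+1)/((k:ℝ)+1+x)^3) := by
    refine Summable.of_nonneg_of_le (fun k => by positivity) (fun k => ?_)
      (summable_base.mul_left 2)
    have h1 := Kx_pos hx.le k
    have h2 := K_pos k
    have h3 : ((k:ℝ)+1)^3 ≤ ((k:ℝ)+1+x)^3 := pow_le_pow_left₀ h2.le (by linarith) 3
    calc 2*((k:ℝ)+1)/((k:ℝ)+1+x)^3 ≤ 2*((k:ℝ)+1)/((k:ℝ)+1)^3 :=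
          div_le_div_of_nonneg_left (by positivity) (by positivity) h3
      _ = 2*(1/((k:ℝ)+1)^2) := by field_simp
  have hs : Summable (fun k : ℕ => ((k:ℝ)+1)*(c k - c (k+1))) :=
    Summable.of_nonneg_of_le hnonneg hterm_le hTsummable
  have habel : ∑' k : ℕ, ((k:ℝ)+1)*(c k - c (k+1)) = S2 x :=
    abel_tsum c (summable_S2 hx.le) (tendsto_kc2 hx.le) hs
  have hle : ∑' k : ℕ, ((k:ℝ)+1)*(c k - c (k+1)) ≤ ∑' k : ℕ, 2*((k:ℝ)+1)/((k:ℝ)+1+x)^3 :=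
    Summable.tsum_le_tsum hterm_le hs hTsummable
  have hT : ∑' k : ℕ, 2*((k:ℝ)+1)/((k:ℝ)+1+x)^3 = 2*S2 x - 2*x*S3 x := by
    have : ∀ k : ℕ, 2*((k:ℝ)+1)/((k:ℝ)+1+x)^3 = 2*(1/((k:ℝ)+1+x)^2) - 2*x*(1/((k:ℝ)+1+x)^3) := by
      intro k
      have h1 := (Kx_pos hx.le k).ne'
      field_simp
      ring
    rw [tsum_congr this,
      Summable.tsum_sub ((summable_S2 hx.le).mul_left 2) ((summable_S3 hx.le).mul_left (2*x)),
      tsum_mul_left, tsum_mul_left]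
    rfl
  rw [habel, hT] at hle
  linarith

lemma U3 {x : ℝ} (hx : 0 < x) : 3*x*S4 x ≤ 2*S3 x := by
  set c : ℕ → ℝ := fun k => 1/((k:ℝ)+1+x)^3 with hc
  have hterm_le : ∀ k : ℕ, ((k:ℝ)+1)*(c k - c (k+1)) ≤ 3*((k:ℝ)+1)/((k:ℝ)+1+x)^4 := by
    intro k
    have h1 := one_le_Kx hx.le k
    have h2 := key3 h1
    have h3 : c (k+1) = 1/((((k:ℝ)+1+x)+1))^3 := c3_succ k
    have h4 : (0:ℝ) ≤ (k:ℝ)+1 := (K_pos k).le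
    calc ((k:ℝ)+1)*(c k - c (k+1)) ≤ ((k:ℝ)+1)*(3/((k:ℝ)+1+x)^4) := by
          apply mul_le_mul_of_nonneg_left _ h4
          have hck : c k = 1/((k:ℝ)+1+x)^3 := rfl
          rw [hck, h3]
          exact h2
      _ = 3*((k:ℝ)+1)/((k:ℝ)+1+x)^4 := by ring
  have hnonneg : ∀ k : ℕ, 0 ≤ ((k:ℝ)+1)*(c k - c (k+1)) := by
    intro k
    have h1 := Kx_pos hx.le k
    have h3 : c (k+1) = 1/((((k:ℝ)+1+x)+1))^3 := c3_succ k
    have : c (k+1) ≤ c k := by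
      have hck : c k = 1/((k:ℝ)+1+x)^3 := rfl
      rw [hck, h3]
      apply one_div_le_one_div_of_le (by positivity)
      nlinarith [pow_pos h1 2]
    have h4 : (0:ℝ) ≤ (k:ℝ)+1 := (K_pos k).le
    nlinarith
  have hTsummable : Summable (fun k : ℕ => 3*((k:ℝ)+1)/((k:ℝ)+1+x)^4) := by
    refine Summable.of_nonneg_of_le (fun k => by positivity) (fun k => ?_)
      (summable_base.mul_left 3)
    have h1 := Kx_pos hx.le k
    have h2 := K_pos k
    have h3 : ((k:ℝ)+1)^4 ≤ ((k:ℝ)+1+x)^4 := pow_le_pow_left₀ h2.le (by linarith) 4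
    calc 3*((k:ℝ)+1)/((k:ℝ)+1+x)^4 ≤ 3*((k:ℝ)+1)/((k:ℝ)+1)^4 :=
          div_le_div_of_nonneg_left (by positivity) (by positivity) h3
      _ = 3*(1/((k:ℝ)+1)^3) := by field_simp
      _ ≤ 3*(1/((k:ℝ)+1)^2) := by
          have h5 : 1/((k:ℝ)+1)^3 ≤ 1/((k:ℝ)+1)^2 := by
            apply one_div_le_one_div_of_le (by positivity)
            nlinarith [h2]
          linarith
  have hs : Summable (fun k : ℕ => ((k:ℝ)+1)*(c k - c (k+1))) :=
    Summable.of_nonneg_of_le hnonneg hterm_le hTsummable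
  have habel : ∑' k : ℕ, ((k:ℝ)+1)*(c k - c (k+1)) = S3 x :=
    abel_tsum c (summable_S3 hx.le) (tendsto_kc3 hx.le) hs
  have hle : ∑' k : ℕ, ((k:ℝ)+1)*(c k - c (k+1)) ≤ ∑' k : ℕ, 3*((k:ℝ)+1)/((k:ℝ)+1+x)^4 :=
    Summable.tsum_le_tsum hterm_le hs hTsummable
  have hT : ∑' k : ℕ, 3*((k:ℝ)+1)/((k:ℝ)+1+x)^4 = 3*S3 x - 3*x*S4 x := by
    have : ∀ k : ℕ, 3*((k:ℝ)+1)/((k:ℝ)+1+x)^4 = 3*(1/((k:ℝ)+1+x)^3) - 3*x*(1/((k:ℝ)+1+x)^4) := by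
      intro k
      have h1 := (Kx_pos hx.le k).ne'
      field_simp
      ring
    rw [tsum_congr this,
      Summable.tsum_sub ((summable_S3 hx.le).mul_left 3) ((summable_S4 hx.le).mul_left (3*x)),
      tsum_mul_left, tsum_mul_left]
    rfl
  rw [habel, hT] at hle
  linarith



lemma hasDerivAt_xS2 {x : ℝ} (hx : 0 < x) :
    HasDerivAt (fun y => y * S2 y) (S2 x - 2*x*S3 x) x := by
  have h := (hasDerivAt_id x).fun_mul (hasDerivAt_S2 hx)
  convert! h using 1
  simp [id]
  ring

lemma hasDerivAt_x2S3 {x : ℝ} (hx : 0 < x) :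
    HasDerivAt (fun y => y^2 * S3 y) (2*x*S3 x - 3*x^2*S4 x) x := by
  have h := (hasDerivAt_pow 2 x).fun_mul (hasDerivAt_S3 hx)
  convert! h using 1
  ring

lemma mono_xS2 : MonotoneOn (fun y => y * S2 y) (Set.Ioi (0:ℝ)) := by
  refine monotoneOn_of_deriv_nonneg (convex_Ioi 0) ?_ ?_ ?_
  · exact fun x hx => (hasDerivAt_xS2 hx).differentiableAt.continuousAt.continuousWithinAt
  · rw [interior_Ioi]
    exact fun x hx => (hasDerivAt_xS2 hx).differentiableAt.differentiableWithinAt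
  · rw [interior_Ioi]
    intro x hx
    rw [(hasDerivAt_xS2 hx).deriv]
    linarith [U2 hx]

lemma mono_x2S3 : MonotoneOn (fun y => y^2 * S3 y) (Set.Ioi (0:ℝ)) := by
  refine monotoneOn_of_deriv_nonneg (convex_Ioi 0) ?_ ?_ ?_
  · exact fun x hx => (hasDerivAt_x2S3 hx).differentiableAt.continuousAt.continuousWithinAt
  · rw [interior_Ioi]
    exact fun x hx => (hasDerivAt_x2S3 hx).differentiableAt.differentiableWithinAt
  · rw [interior_Ioi]
    intro x hx
    rw [(hasDerivAt_x2S3 hx).deriv]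
    have hx' : (0:ℝ) < x := hx
    have h := U3 hx'
    nlinarith [mul_le_mul_of_nonneg_left h hx'.le]

lemma superadd2 {a b t : ℝ} (ha : 0 < a) (hb : 0 < b) (ht : 0 < t) :
    a^2*S2 (a*t) + b^2*S2 (b*t) ≤ (a+b)^2*S2 ((a+b)*t) := by
  have hat : a*t ∈ Set.Ioi (0:ℝ) := by exact mul_pos ha ht
  have hbt : b*t ∈ Set.Ioi (0:ℝ) := by exact mul_pos hb ht
  have habt : (a+b)*t ∈ Set.Ioi (0:ℝ) := by exact mul_pos (by linarith) ht
  have h1 := mono_xS2 hat habt (by nlinarith)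
  have h2 := mono_xS2 hbt habt (by nlinarith)
  simp only at h1 h2
  have h3 := add_le_add (mul_le_mul_of_nonneg_left h1 ha.le)
    (mul_le_mul_of_nonneg_left h2 hb.le)
  have e1 : a*((a*t) * S2 (a*t)) + b*((b*t) * S2 (b*t))
      = t*(a^2*S2 (a*t) + b^2*S2 (b*t)) := by ring
  have e2 : a*(((a+b)*t) * S2 ((a+b)*t)) + b*(((a+b)*t) * S2 ((a+b)*t))
      = t*((a+b)^2*S2 ((a+b)*t)) := by ring
  rw [e1, e2] at h3
  exact le_of_mul_le_mul_left h3 ht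

lemma superadd3 {a b t : ℝ} (ha : 0 < a) (hb : 0 < b) (ht : 0 < t) :
    a^3*S3 (a*t) + b^3*S3 (b*t) ≤ (a+b)^3*S3 ((a+b)*t) := by
  have hat : a*t ∈ Set.Ioi (0:ℝ) := by exact mul_pos ha ht
  have hbt : b*t ∈ Set.Ioi (0:ℝ) := by exact mul_pos hb ht
  have habt : (a+b)*t ∈ Set.Ioi (0:ℝ) := by exact mul_pos (by linarith) ht
  have h1 := mono_x2S3 hat habt (by nlinarith)
  have h2 := mono_x2S3 hbt habt (by nlinarith)
  simp only at h1 h2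
  have h3 := add_le_add (mul_le_mul_of_nonneg_left h1 ha.le)
    (mul_le_mul_of_nonneg_left h2 hb.le)
  have e1 : a*((a*t)^2 * S3 (a*t)) + b*((b*t)^2 * S3 (b*t))
      = t^2*(a^3*S3 (a*t) + b^3*S3 (b*t)) := by ring
  have e2 : a*(((a+b)*t)^2 * S3 ((a+b)*t)) + b*(((a+b)*t)^2 * S3 ((a+b)*t))
      = t^2*((a+b)^3*S3 ((a+b)*t)) := by ring
  rw [e1, e2] at h3
  exact le_of_mul_le_mul_left h3 (by positivity)

lemma superadd1 {a b t : ℝ} (ha : 0 < a) (hb : 0 < b) (ht : 0 < t) :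
    a*S1 (a*t) + b*S1 (b*t) ≤ (a+b)*S1 ((a+b)*t) := by
  have hat : 0 < a*t := mul_pos ha ht
  have hbt : 0 < b*t := mul_pos hb ht
  have habt : 0 < (a+b)*t := mul_pos (by linarith) ht
  have hsa := summable_S1 hat.le
  have hsb := summable_S1 hbt.le
  have hsab := summable_S1 habt.le
  rw [show a*S1 (a*t) = ∑' k : ℕ, a*(1/((k:ℝ)+1) - 1/((k:ℝ)+1+a*t)) from (tsum_mul_left).symm,
    show b*S1 (b*t) = ∑' k : ℕ, b*(1/((k:ℝ)+1) - 1/((k:ℝ)+1+b*t)) from (tsum_mul_left).symm,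
    show (a+b)*S1 ((a+b)*t) = ∑' k : ℕ, (a+b)*(1/((k:ℝ)+1) - 1/((k:ℝ)+1+(a+b)*t)) from
      (tsum_mul_left).symm,
    ← Summable.tsum_add (hsa.mul_left a) (hsb.mul_left b)]
  refine Summable.tsum_le_tsum (fun k => ?_) ((hsa.mul_left a).add (hsb.mul_left b)) (hsab.mul_left _)
  have h1 := Kx_pos hat.le k
  have h2 := Kx_pos hbt.le k
  have h3 := Kx_pos habt.le k
  have hu1 : 1/((k:ℝ)+1+(a+b)*t) ≤ 1/((k:ℝ)+1+a*t) :=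
    one_div_le_one_div_of_le h1 (by nlinarith)
  have hu2 : 1/((k:ℝ)+1+(a+b)*t) ≤ 1/((k:ℝ)+1+b*t) :=
    one_div_le_one_div_of_le h2 (by nlinarith)
  have hm1 := mul_le_mul_of_nonneg_left hu1 ha.le
  have hm2 := mul_le_mul_of_nonneg_left hu2 hb.le
  have expand : (a+b)*(1/((k:ℝ)+1) - 1/((k:ℝ)+1+(a+b)*t))
      - (a*(1/((k:ℝ)+1) - 1/((k:ℝ)+1+a*t)) + b*(1/((k:ℝ)+1) - 1/((k:ℝ)+1+b*t)))
      = (a*(1/((k:ℝ)+1+a*t)) - a*(1/((k:ℝ)+1+(a+b)*t)))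
        + (b*(1/((k:ℝ)+1+b*t)) - b*(1/((k:ℝ)+1+(a+b)*t))) := by ring
  linarith [hm1, hm2, expand]

/-- superadditivity over a nonempty finite sum -/
lemma sum_le_of_superadd {ι : Type*} (F : ℝ → ℝ)
    (hF : ∀ a b, 0 < a → 0 < b → F a + F b ≤ F (a+b))
    (s : Finset ι) (x : ι → ℝ) :
    s.Nonempty → (∀ i ∈ s, 0 < x i) → ∑ i ∈ s, F (x i) ≤ F (∑ i ∈ s, x i) := by
  classical
  induction s using Finset.cons_induction with
  | empty => intro hs _; exact absurd hs (by simp)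
  | cons i s hi ih =>
    intro _ hx
    rcases s.eq_empty_or_nonempty with h | h
    · subst h; simp
    · have hxi := hx i (Finset.mem_cons_self i s)
      have hxs : ∀ j ∈ s, 0 < x j := fun j hj => hx j (Finset.mem_cons.mpr (Or.inr hj))
      have hsum_pos : 0 < ∑ j ∈ s, x j := Finset.sum_pos hxs h
      rw [Finset.sum_cons, Finset.sum_cons]
      calc F (x i) + ∑ j ∈ s, F (x j) ≤ F (x i) + F (∑ j ∈ s, x j) := by
            linarith [ih h hxs]
        _ ≤ F (x i + ∑ j ∈ s, x j) := hF _ _ hxi hsum_pos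


lemma S1_tendsto_atTop : Tendsto S1 atTop atTop := by
  rw [tendsto_atTop]
  intro M
  obtain ⟨N, hN⟩ := (tendsto_atTop.mp Real.tendsto_sum_range_one_div_nat_succ_atTop (M+1)).exists
  filter_upwards [eventually_ge_atTop (max (N:ℝ) 1)] with x hx
  have hx1 : (1:ℝ) ≤ x := le_trans (le_max_right _ _) hx
  have hxN : (N:ℝ) ≤ x := le_trans (le_max_left _ _) hx
  have hx0 : (0:ℝ) < x := by linarith
  have hsum := Summable.sum_le_tsum (range N) (fun k _ => S1_term_nonneg hx0.le k) (summable_S1 hx0.le)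
  have hterm : ∀ k ∈ range N, 1/((k:ℝ)+1) - 1/x ≤ 1/((k:ℝ)+1) - 1/((k:ℝ)+1+x) := by
    intro k _
    have h2 : 1/((k:ℝ)+1+x) ≤ 1/x := one_div_le_one_div_of_le hx0 (by linarith [K_pos k])
    linarith
  have h3 : ∑ k ∈ range N, (1/((k:ℝ)+1) - 1/x) ≤ ∑ k ∈ range N, (1/((k:ℝ)+1) - 1/((k:ℝ)+1+x)) :=
    Finset.sum_le_sum hterm
  have h4 : ∑ k ∈ range N, (1/((k:ℝ)+1) - 1/x)
      = (∑ k ∈ range N, 1/((k:ℝ)+1)) - N*(1/x) := by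
    rw [Finset.sum_sub_distrib, Finset.sum_const, card_range, nsmul_eq_mul]
  have h5 : (N:ℝ)*(1/x) ≤ 1 := by
    rw [mul_one_div, div_le_one hx0]
    exact hxN
  have h6 : ∑ k ∈ range N, 1/((k:ℝ)+1) = ∑ k ∈ range N, 1/((k:ℕ)+1 : ℝ) := by
    push_cast; rfl
  calc M ≤ (∑ k ∈ range N, 1/((k:ℝ)+1)) - 1 := by
        rw [h6]
        have := hN
        push_cast at this ⊢
        linarith
    _ ≤ ∑ k ∈ range N, (1/((k:ℝ)+1) - 1/x) := by rw [h4]; linarith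
    _ ≤ ∑ k ∈ range N, (1/((k:ℝ)+1) - 1/((k:ℝ)+1+x)) := h3
    _ ≤ S1 x := hsum

lemma S1_tendsto_zero : Tendsto S1 (𝓝[>] (0:ℝ)) (𝓝 0) := by
  set C := ∑' k : ℕ, 1/((k:ℝ)+1)^2 with hC
  apply squeeze_zero' (f := S1) (g := fun x => x * C)
  · filter_upwards [self_mem_nhdsWithin] with x hx
    exact S1_nonneg (le_of_lt hx)
  · filter_upwards [self_mem_nhdsWithin] with x hx
    exact S1_le (le_of_lt hx)
  · have h : Tendsto (fun x : ℝ => x * C) (𝓝 0) (𝓝 0) := by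
      simpa using (tendsto_id (x := 𝓝 (0:ℝ))).mul_const C
    exact h.mono_left nhdsWithin_le_nhds



lemma harmonic_cast (n : ℕ) : ((harmonic n : ℚ) : ℝ) = ∑ k ∈ range n, 1/((k:ℝ)+1) := by
  rw [harmonic]
  push_cast
  exact Finset.sum_congr rfl (fun k _ => by rw [one_div])

lemma log_factorial (n : ℕ) : Real.log (n.factorial : ℝ) = ∑ k ∈ range n, Real.log ((k:ℝ)+1) := by
  have h : ((n.factorial : ℕ) : ℝ) = ∏ k ∈ range n, ((k:ℝ)+1) := by
    rw [← Finset.prod_range_add_one_eq_factorial]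
    push_cast
    rfl
  rw [h, Real.log_prod (fun k _ => (K_pos k).ne')]

lemma weierstrass_partial {x : ℝ} (hx : 0 < x) {n : ℕ} (hn : 1 ≤ n) :
    (∑ k ∈ range n, (x/((k:ℝ)+1) - Real.log (1 + x/((k:ℝ)+1))))
      - x * (((harmonic n : ℚ) : ℝ) - Real.log n)
    = Real.log (Real.GammaSeq (1+x) n) + (Real.log (1+x+n) - Real.log n) := by
  have hn0 : (0:ℝ) < n := by exact_mod_cast hn
  -- rewrite each log(1 + x/(k+1))
  have hlog : ∀ k : ℕ, Real.log (1 + x/((k:ℝ)+1)) =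
      Real.log ((k:ℝ)+1+x) - Real.log ((k:ℝ)+1) := by
    intro k
    have h1 : (1:ℝ) + x/((k:ℝ)+1) = ((k:ℝ)+1+x)/((k:ℝ)+1) := by
      field_simp
    rw [h1, Real.log_div (Kx_pos hx.le k).ne' (K_pos k).ne']
  -- LHS simplification
  have hL : ∑ k ∈ range n, (x/((k:ℝ)+1) - Real.log (1 + x/((k:ℝ)+1)))
      = x * ((harmonic n : ℚ) : ℝ)
        - ∑ k ∈ range n, Real.log ((k:ℝ)+1+x) + ∑ k ∈ range n, Real.log ((k:ℝ)+1) := by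
    rw [Finset.sum_congr rfl (fun k _ => by rw [hlog k])]
    rw [show (fun k : ℕ => x/((k:ℝ)+1) - (Real.log ((k:ℝ)+1+x) - Real.log ((k:ℝ)+1)))
      = fun k : ℕ => x*(1/((k:ℝ)+1)) - Real.log ((k:ℝ)+1+x) + Real.log ((k:ℝ)+1) from
      funext (fun k => by ring)]
    rw [Finset.sum_add_distrib, Finset.sum_sub_distrib, ← Finset.mul_sum, harmonic_cast]
  -- log of GammaSeq
  have hprod_pos : ∀ j ∈ range (n+1), (0:ℝ) < 1+x+(j:ℝ) := by
    intro j _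
    positivity
  have hG : Real.log (Real.GammaSeq (1+x) n)
      = (1+x) * Real.log n + Real.log (n.factorial : ℝ)
        - ∑ j ∈ range (n+1), Real.log (1+x+(j:ℝ)) := by
    rw [Real.GammaSeq]
    have hfact_pos : (0:ℝ) < (n.factorial : ℝ) := by exact_mod_cast n.factorial_pos
    have hpow_pos : (0:ℝ) < (n:ℝ) ^ ((1:ℝ)+x) := Real.rpow_pos_of_pos hn0 _
    have hprod_pos' : (0:ℝ) < ∏ j ∈ range (n+1), ((1+x) + (j:ℝ)) :=
      Finset.prod_pos (fun j hj => by linarith [hprod_pos j hj])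
    have hlogprod : Real.log (∏ j ∈ range (n+1), ((1+x) + (j:ℝ)))
        = ∑ j ∈ range (n+1), Real.log ((1+x)+(j:ℝ)) :=
      Real.log_prod (fun j hj => (hprod_pos j hj).ne')
    rw [Real.log_div (by positivity) hprod_pos'.ne', Real.log_mul hpow_pos.ne' hfact_pos.ne',
      Real.log_rpow hn0, hlogprod]
  -- index shift: ∑_{k<n} log(k+1+x) = ∑_{j<n+1} log(1+x+j) - log(1+x+n)
  have hshift : ∑ k ∈ range n, Real.log ((k:ℝ)+1+x)
      = ∑ j ∈ range (n+1), Real.log (1+x+(j:ℝ)) - Real.log (1+x+(n:ℝ)) := by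
    rw [Finset.sum_range_succ]
    have : ∀ k ∈ range n, Real.log ((k:ℝ)+1+x) = Real.log (1+x+(k:ℝ)) := by
      intro k _
      congr 1
      ring
    rw [Finset.sum_congr rfl this]
    ring
  rw [hL, hG, hshift, log_factorial]
  ring_nf

lemma log_Gamma_eq {x : ℝ} (hx : 0 < x) :
    Real.log (Real.Gamma (1+x)) = -(Real.eulerMascheroniConstant * x) + L x := by
  have hP : Tendsto (fun n : ℕ => ∑ k ∈ range n,
      (x/((k:ℝ)+1) - Real.log (1 + x/((k:ℝ)+1)))) atTop (𝓝 (L x)) :=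
    (summable_L hx.le).hasSum.tendsto_sum_nat
  have hg : Tendsto (fun n : ℕ => x * (((harmonic n:ℚ):ℝ) - Real.log n)) atTop
      (𝓝 (x * Real.eulerMascheroniConstant)) :=
    Real.tendsto_harmonic_sub_log.const_mul x
  have hA : Tendsto (fun n : ℕ => (∑ k ∈ range n,
      (x/((k:ℝ)+1) - Real.log (1 + x/((k:ℝ)+1))))
        - x * (((harmonic n:ℚ):ℝ) - Real.log n)) atTop
      (𝓝 (L x - x * Real.eulerMascheroniConstant)) := hP.sub hg
  have hΓpos : 0 < Real.Gamma (1+x) := Real.Gamma_pos_of_pos (by linarith)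
  have hGS : Tendsto (fun n : ℕ => Real.log (Real.GammaSeq (1+x) n)) atTop
      (𝓝 (Real.log (Real.Gamma (1+x)))) :=
    ((Real.continuousAt_log hΓpos.ne').tendsto).comp (Real.GammaSeq_tendsto_Gamma (1+x))
  have hlog1 : Tendsto (fun n : ℕ => Real.log (1+x+(n:ℝ)) - Real.log n) atTop (𝓝 0) := by
    have h1 : Tendsto (fun n : ℕ => (1+x)/(n:ℝ) + 1) atTop (𝓝 1) := by
      simpa using (tendsto_const_div_atTop_nhds_zero_nat (1+x)).add_const 1
    have h2 : Tendsto (fun n : ℕ => Real.log ((1+x)/(n:ℝ) + 1)) atTop (𝓝 0) := by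
      simpa using h1.log one_ne_zero
    apply h2.congr'
    filter_upwards [eventually_ge_atTop 1] with n hn
    have hn0 : (0:ℝ) < n := by exact_mod_cast hn
    rw [show (1+x)/(n:ℝ) + 1 = (1+x+(n:ℝ))/n by field_simp,
      Real.log_div (by positivity) hn0.ne']
  have hB : Tendsto (fun n : ℕ => Real.log (Real.GammaSeq (1+x) n)
      + (Real.log (1+x+(n:ℝ)) - Real.log n)) atTop (𝓝 (Real.log (Real.Gamma (1+x)))) := by
    simpa using hGS.add hlog1
  have heq : (fun n : ℕ => (∑ k ∈ range n,
      (x/((k:ℝ)+1) - Real.log (1 + x/((k:ℝ)+1))))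
        - x * (((harmonic n:ℚ):ℝ) - Real.log n)) =ᶠ[atTop]
      (fun n : ℕ => Real.log (Real.GammaSeq (1+x) n)
        + (Real.log (1+x+(n:ℝ)) - Real.log n)) := by
    filter_upwards [eventually_ge_atTop 1] with n hn
    exact weierstrass_partial hx hn
  have := tendsto_nhds_unique (hA.congr' heq) hB
  linarith


lemma hasDerivAt_lin {a t : ℝ} : HasDerivAt (fun s : ℝ => a*s) a t := by
  simpa using (hasDerivAt_id t).const_mul a

lemma hasDerivAt_logGamma_lin {a t : ℝ} (ha : 0 < a) (ht : 0 < t) :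
    HasDerivAt (fun s => Real.log (Real.Gamma (1 + a*s)))
      (a * (-Real.eulerMascheroniConstant + S1 (a*t))) t := by
  have hat : 0 < a*t := mul_pos ha ht
  have hmodel : HasDerivAt (fun s : ℝ => -(Real.eulerMascheroniConstant * (a*s)) + L (a*s))
      (a * (-Real.eulerMascheroniConstant + S1 (a*t))) t := by
    have h1 : HasDerivAt (fun s : ℝ => a*s) a t := hasDerivAt_lin
    have h3 := (hasDerivAt_L hat).comp t h1
    have h4 : HasDerivAt (fun s : ℝ => -(Real.eulerMascheroniConstant * (a*s)))
        (-(Real.eulerMascheroniConstant * a)) t := by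
      simpa using (h1.const_mul Real.eulerMascheroniConstant).fun_neg
    have h5 := h4.fun_add h3
    convert! h5 using 1
    ring
  refine hmodel.congr_of_eventuallyEq ?_
  filter_upwards [Ioi_mem_nhds ht] with s hs
  exact log_Gamma_eq (mul_pos ha (Set.mem_Ioi.mp hs))

lemma hasDerivAt_term_g {a t : ℝ} (ha : 0 < a) (ht : 0 < t) :
    HasDerivAt (fun s => a * (-Real.eulerMascheroniConstant + S1 (a*s)))
      (a^2 * S2 (a*t)) t := by
  have hat : 0 < a*t := mul_pos ha ht
  have h3 := ((hasDerivAt_S1 hat).comp t hasDerivAt_lin).const_add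
    (-Real.eulerMascheroniConstant)
  have h4 := h3.const_mul a
  convert! h4 using 1
  ring

lemma hasDerivAt_term_g2 {a t : ℝ} (ha : 0 < a) (ht : 0 < t) :
    HasDerivAt (fun s => a^2 * S2 (a*s)) (-2 * (a^3 * S3 (a*t))) t := by
  have hat : 0 < a*t := mul_pos ha ht
  have h3 := ((hasDerivAt_S2 hat).comp t hasDerivAt_lin).const_mul (a^2)
  convert! h3 using 1
  ring

lemma sum_mul_neg_add {ι : Type*} (s : Finset ι) (w v : ι → ℝ) (c : ℝ) :
    ∑ i ∈ s, w i * (c + v i) = c * ∑ i ∈ s, w i + ∑ i ∈ s, w i * v i := by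
  rw [Finset.mul_sum, ← Finset.sum_add_distrib]
  exact Finset.sum_congr rfl (fun i _ => by ring)



end LogDerivGammaAux

open LogDerivGammaAux


theorem log_deriv_ratio_gamma_rho_lt_two
    (m n : ℕ) (hm : 0 < m) (hn : 0 < n)
    (lam : Fin m → Fin n → ℝ) (hlam : ∀ i j, 0 < lam i j)
    (α : Fin m → ℝ) (hα : ∀ i, α i = ∑ j : Fin n, lam i j)
    (β : Fin n → ℝ) (hβ : ∀ j, β j = ∑ i : Fin m, lam i j)
    (ρ : ℝ) (hρ : ρ < 2)
    (f : ℝ → ℝ)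
    (hf : ∀ t, f t =
      ((∏ i : Fin m, Real.Gamma (1 + α i * t)) * ∏ j : Fin n, Real.Gamma (1 + β j * t)) /
        (∏ i : Fin m, ∏ j : Fin n, Real.Gamma (1 + lam i j * t)) ^ ρ) :
    StrictMonoOn (deriv (fun s => Real.log (f s))) (Set.Ioi 0) ∧
      ConcaveOn ℝ (Set.Ioi (0 : ℝ)) (deriv (fun s => Real.log (f s))) ∧
      deriv (fun s => Real.log (f s)) '' Set.Ioi 0 =
        Set.Ioi (-(Real.eulerMascheroniConstant * (2 - ρ) *
          ∑ i : Fin m, ∑ j : Fin n, lam i j)) := by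
  classical
  have hnN : Nonempty (Fin n) := ⟨⟨0, hn⟩⟩
  have hmN : Nonempty (Fin m) := ⟨⟨0, hm⟩⟩
  set γ := Real.eulerMascheroniConstant with hγ
  have hαpos : ∀ i, 0 < α i := fun i => by
    rw [hα]; exact Finset.sum_pos (fun j _ => hlam i j) Finset.univ_nonempty
  have hβpos : ∀ j, 0 < β j := fun j => by
    rw [hβ]; exact Finset.sum_pos (fun i _ => hlam i j) Finset.univ_nonempty
  set Λ : ℝ := ∑ i : Fin m, ∑ j : Fin n, lam i j with hΛ
  have hΛα : ∑ i : Fin m, α i = Λ := Finset.sum_congr rfl (fun i _ => hα i)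
  have hΛβ : ∑ j : Fin n, β j = Λ := by
    rw [hΛ, Finset.sum_comm]; exact Finset.sum_congr rfl (fun j _ => hβ j)
  have hΛpos : 0 < Λ := by
    rw [← hΛα]; exact Finset.sum_pos (fun i _ => hαpos i) Finset.univ_nonempty
  set c0 : ℝ := -(γ * (2 - ρ) * Λ) with hc0
  set g : ℝ → ℝ := fun t =>
    (∑ i : Fin m, α i * (-γ + S1 (α i * t)))
      + (∑ j : Fin n, β j * (-γ + S1 (β j * t)))
      - ρ * ∑ i : Fin m, ∑ j : Fin n, lam i j * (-γ + S1 (lam i j * t)) with hgdef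
  -- log f has derivative g on Ioi 0
  have hlogf : ∀ t ∈ Set.Ioi (0:ℝ), HasDerivAt (fun s => Real.log (f s)) (g t) t := by
    intro t ht
    have ht' : (0:ℝ) < t := ht
    have h1 : HasDerivAt (fun s => ∑ i : Fin m, Real.log (Real.Gamma (1 + α i * s)))
        (∑ i : Fin m, α i * (-γ + S1 (α i * t))) t :=
      HasDerivAt.fun_sum (fun i _ => hasDerivAt_logGamma_lin (hαpos i) ht')
    have h2 : HasDerivAt (fun s => ∑ j : Fin n, Real.log (Real.Gamma (1 + β j * s)))
        (∑ j : Fin n, β j * (-γ + S1 (β j * t))) t :=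
      HasDerivAt.fun_sum (fun j _ => hasDerivAt_logGamma_lin (hβpos j) ht')
    have h3 : HasDerivAt
        (fun s => ∑ i : Fin m, ∑ j : Fin n, Real.log (Real.Gamma (1 + lam i j * s)))
        (∑ i : Fin m, ∑ j : Fin n, lam i j * (-γ + S1 (lam i j * t))) t :=
      HasDerivAt.fun_sum (fun i _ =>
        HasDerivAt.fun_sum (fun j _ => hasDerivAt_logGamma_lin (hlam i j) ht'))
    have hF := (h1.fun_add h2).fun_sub (h3.const_mul ρ)
    refine hF.congr_of_eventuallyEq ?_
    filter_upwards [Ioi_mem_nhds ht'] with s hs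
    have hs' : (0:ℝ) < s := hs
    have hΓα : ∀ i : Fin m, 0 < Real.Gamma (1 + α i * s) := fun i =>
      Real.Gamma_pos_of_pos (by have := mul_pos (hαpos i) hs'; linarith)
    have hΓβ : ∀ j : Fin n, 0 < Real.Gamma (1 + β j * s) := fun j =>
      Real.Gamma_pos_of_pos (by have := mul_pos (hβpos j) hs'; linarith)
    have hGlam : ∀ (i : Fin m) (j : Fin n), 0 < Real.Gamma (1 + lam i j * s) := fun i j =>
      Real.Gamma_pos_of_pos (by have := mul_pos (hlam i j) hs'; linarith)
    have hA : 0 < ∏ i : Fin m, Real.Gamma (1 + α i * s) :=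
      Finset.prod_pos (fun i _ => hΓα i)
    have hB : 0 < ∏ j : Fin n, Real.Gamma (1 + β j * s) :=
      Finset.prod_pos (fun j _ => hΓβ j)
    have hC : 0 < ∏ i : Fin m, ∏ j : Fin n, Real.Gamma (1 + lam i j * s) :=
      Finset.prod_pos (fun i _ => Finset.prod_pos (fun j _ => hGlam i j))
    rw [hf s, Real.log_div (mul_pos hA hB).ne' (Real.rpow_pos_of_pos hC ρ).ne',
      Real.log_mul hA.ne' hB.ne', Real.log_rpow hC,
      Real.log_prod (fun i _ => (hΓα i).ne'),
      Real.log_prod (fun j _ => (hΓβ j).ne'),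
      Real.log_prod (fun i _ => (Finset.prod_pos (fun j _ => hGlam i j)).ne')]
    rw [Finset.sum_congr rfl
      (fun i _ => Real.log_prod (fun j _ => (hGlam i j).ne'))]
  have hDeq : ∀ t ∈ Set.Ioi (0:ℝ), deriv (fun s => Real.log (f s)) t = g t :=
    fun t ht => (hlogf t ht).deriv
  -- derivative of g
  set g' : ℝ → ℝ := fun t =>
    (∑ i : Fin m, (α i)^2 * S2 (α i * t))
      + (∑ j : Fin n, (β j)^2 * S2 (β j * t))
      - ρ * ∑ i : Fin m, ∑ j : Fin n, (lam i j)^2 * S2 (lam i j * t) with hg'def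
  have hgderiv : ∀ t ∈ Set.Ioi (0:ℝ), HasDerivAt g (g' t) t := by
    intro t ht
    have ht' : (0:ℝ) < t := ht
    exact ((HasDerivAt.fun_sum (fun i _ => hasDerivAt_term_g (hαpos i) ht')).add
      (HasDerivAt.fun_sum (fun j _ => hasDerivAt_term_g (hβpos j) ht'))).sub
      ((HasDerivAt.fun_sum (fun i _ =>
        HasDerivAt.fun_sum (fun j _ => hasDerivAt_term_g (hlam i j) ht'))).const_mul ρ)
  set g'' : ℝ → ℝ := fun t =>
    -2 * ((∑ i : Fin m, (α i)^3 * S3 (α i * t))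
      + (∑ j : Fin n, (β j)^3 * S3 (β j * t))
      - ρ * ∑ i : Fin m, ∑ j : Fin n, (lam i j)^3 * S3 (lam i j * t)) with hg''def
  have hg'deriv : ∀ t ∈ Set.Ioi (0:ℝ), HasDerivAt g' (g'' t) t := by
    intro t ht
    have ht' : (0:ℝ) < t := ht
    have h : HasDerivAt g'
        ((∑ i : Fin m, -2 * ((α i)^3 * S3 (α i * t)))
          + (∑ j : Fin n, -2 * ((β j)^3 * S3 (β j * t)))
          - ρ * ∑ i : Fin m, ∑ j : Fin n, -2 * ((lam i j)^3 * S3 (lam i j * t))) t :=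
      ((HasDerivAt.fun_sum (fun (i : Fin m) _ => hasDerivAt_term_g2 (hαpos i) ht')).add
        (HasDerivAt.fun_sum (fun (j : Fin n) _ => hasDerivAt_term_g2 (hβpos j) ht'))).sub
        ((HasDerivAt.fun_sum (fun (i : Fin m) _ =>
          HasDerivAt.fun_sum (fun (j : Fin n) _ => hasDerivAt_term_g2 (hlam i j) ht'))).const_mul ρ)
    convert h using 1
    rw [hg''def]
    simp only [← Finset.mul_sum]
    ring
  -- positivity of g'
  have hg'pos : ∀ t ∈ Set.Ioi (0:ℝ), 0 < g' t := by
    intro t ht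
    have ht' : (0:ℝ) < t := ht
    have hA2 : ∀ i, ∑ j : Fin n, (lam i j)^2 * S2 (lam i j * t) ≤ (α i)^2 * S2 (α i * t) := by
      intro i
      have := sum_le_of_superadd (fun c => c^2 * S2 (c*t))
        (fun a b ha hb => superadd2 ha hb ht') Finset.univ (lam i)
        Finset.univ_nonempty (fun j _ => hlam i j)
      rwa [← hα i] at this
    have hB2 : ∀ j, ∑ i : Fin m, (lam i j)^2 * S2 (lam i j * t) ≤ (β j)^2 * S2 (β j * t) := by
      intro j
      have := sum_le_of_superadd (fun c => c^2 * S2 (c*t))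
        (fun a b ha hb => superadd2 ha hb ht') Finset.univ (fun i => lam i j)
        Finset.univ_nonempty (fun i _ => hlam i j)
      rwa [← hβ j] at this
    have hA2s : ∑ i : Fin m, ∑ j : Fin n, (lam i j)^2 * S2 (lam i j * t)
        ≤ ∑ i : Fin m, (α i)^2 * S2 (α i * t) := Finset.sum_le_sum (fun i _ => hA2 i)
    have hB2s : ∑ i : Fin m, ∑ j : Fin n, (lam i j)^2 * S2 (lam i j * t)
        ≤ ∑ j : Fin n, (β j)^2 * S2 (β j * t) := by
      rw [Finset.sum_comm]
      exact Finset.sum_le_sum (fun j _ => hB2 j)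
    have hD2pos : 0 < ∑ i : Fin m, ∑ j : Fin n, (lam i j)^2 * S2 (lam i j * t) :=
      Finset.sum_pos (fun i _ => Finset.sum_pos (fun j _ =>
        mul_pos (pow_pos (hlam i j) 2) (S2_pos (mul_pos (hlam i j) ht').le))
        Finset.univ_nonempty) Finset.univ_nonempty
    have : g' t = ((∑ i : Fin m, (α i)^2 * S2 (α i * t))
          - ∑ i : Fin m, ∑ j : Fin n, (lam i j)^2 * S2 (lam i j * t))
        + ((∑ j : Fin n, (β j)^2 * S2 (β j * t))
          - ∑ i : Fin m, ∑ j : Fin n, (lam i j)^2 * S2 (lam i j * t))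
        + (2 - ρ) * ∑ i : Fin m, ∑ j : Fin n, (lam i j)^2 * S2 (lam i j * t) := by
      rw [hg'def]; ring
    rw [this]
    have h2ρ : 0 < 2 - ρ := by linarith
    nlinarith [mul_pos h2ρ hD2pos]
  -- nonpositivity of g''
  have hg''nonpos : ∀ t ∈ Set.Ioi (0:ℝ), g'' t ≤ 0 := by
    intro t ht
    have ht' : (0:ℝ) < t := ht
    have hA3 : ∀ i, ∑ j : Fin n, (lam i j)^3 * S3 (lam i j * t) ≤ (α i)^3 * S3 (α i * t) := by
      intro i
      have := sum_le_of_superadd (fun c => c^3 * S3 (c*t))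
        (fun a b ha hb => superadd3 ha hb ht') Finset.univ (lam i)
        Finset.univ_nonempty (fun j _ => hlam i j)
      rwa [← hα i] at this
    have hB3 : ∀ j, ∑ i : Fin m, (lam i j)^3 * S3 (lam i j * t) ≤ (β j)^3 * S3 (β j * t) := by
      intro j
      have := sum_le_of_superadd (fun c => c^3 * S3 (c*t))
        (fun a b ha hb => superadd3 ha hb ht') Finset.univ (fun i => lam i j)
        Finset.univ_nonempty (fun i _ => hlam i j)
      rwa [← hβ j] at this
    have hA3s : ∑ i : Fin m, ∑ j : Fin n, (lam i j)^3 * S3 (lam i j * t)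
        ≤ ∑ i : Fin m, (α i)^3 * S3 (α i * t) := Finset.sum_le_sum (fun i _ => hA3 i)
    have hB3s : ∑ i : Fin m, ∑ j : Fin n, (lam i j)^3 * S3 (lam i j * t)
        ≤ ∑ j : Fin n, (β j)^3 * S3 (β j * t) := by
      rw [Finset.sum_comm]
      exact Finset.sum_le_sum (fun j _ => hB3 j)
    have hD3pos : 0 < ∑ i : Fin m, ∑ j : Fin n, (lam i j)^3 * S3 (lam i j * t) :=
      Finset.sum_pos (fun i _ => Finset.sum_pos (fun j _ =>
        mul_pos (pow_pos (hlam i j) 3) (S3_pos (mul_pos (hlam i j) ht').le))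
        Finset.univ_nonempty) Finset.univ_nonempty
    have h2ρ : 0 < 2 - ρ := by linarith
    have hBpos : 0 < (∑ i : Fin m, (α i)^3 * S3 (α i * t))
        + (∑ j : Fin n, (β j)^3 * S3 (β j * t))
        - ρ * ∑ i : Fin m, ∑ j : Fin n, (lam i j)^3 * S3 (lam i j * t) := by
      nlinarith [mul_pos h2ρ hD3pos]
    rw [hg''def]
    show -2 * ((∑ i : Fin m, (α i)^3 * S3 (α i * t))
      + (∑ j : Fin n, (β j)^3 * S3 (β j * t))
      - ρ * ∑ i : Fin m, ∑ j : Fin n, (lam i j)^3 * S3 (lam i j * t)) ≤ 0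
    linarith
  -- continuity & monotonicity of g
  have hgcont : ContinuousOn g (Set.Ioi 0) :=
    fun t ht => (hgderiv t ht).differentiableAt.continuousAt.continuousWithinAt
  have hgmono : StrictMonoOn g (Set.Ioi 0) := by
    refine strictMonoOn_of_deriv_pos (convex_Ioi 0) hgcont ?_
    rw [interior_Ioi]
    intro t ht
    rw [(hgderiv t ht).deriv]
    exact hg'pos t ht
  have hev : ∀ t ∈ Set.Ioi (0:ℝ), deriv g =ᶠ[𝓝 t] g' := by
    intro t ht
    filter_upwards [Ioi_mem_nhds ht] with z hz
    exact (hgderiv z hz).deriv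
  have hgconc : ConcaveOn ℝ (Set.Ioi 0) g := by
    refine concaveOn_of_deriv2_nonpos (convex_Ioi 0) hgcont ?_ ?_ ?_
    · rw [interior_Ioi]
      exact fun t ht => (hgderiv t ht).differentiableAt.differentiableWithinAt
    · rw [interior_Ioi]
      intro t ht
      exact ((hg'deriv t ht).differentiableAt.congr_of_eventuallyEq
        (hev t ht)).differentiableWithinAt
    · rw [interior_Ioi]
      intro t ht
      have h1 : deriv (deriv g) t = deriv g' t := (hev t ht).deriv_eq
      rw [show deriv^[2] g t = deriv (deriv g) t from rfl, h1, (hg'deriv t ht).deriv]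
      exact hg''nonpos t ht
  -- split g as c0 + positive part
  have hd2 : ∀ t : ℝ, ∑ i : Fin m, ∑ j : Fin n, lam i j * (-γ + S1 (lam i j * t))
      = -γ * Λ + ∑ i : Fin m, ∑ j : Fin n, lam i j * S1 (lam i j * t) := by
    intro t
    rw [Finset.sum_congr rfl (fun i (_ : i ∈ Finset.univ) =>
      sum_mul_neg_add Finset.univ (lam i) (fun j => S1 (lam i j * t)) (-γ)),
      Finset.sum_add_distrib, ← Finset.mul_sum, ← hΛ]
  have hgsplit : ∀ t : ℝ, g t = c0 + (((∑ i : Fin m, α i * S1 (α i * t))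
      - ∑ i : Fin m, ∑ j : Fin n, lam i j * S1 (lam i j * t))
      + ((∑ j : Fin n, β j * S1 (β j * t))
      - ∑ i : Fin m, ∑ j : Fin n, lam i j * S1 (lam i j * t))
      + (2 - ρ) * ∑ i : Fin m, ∑ j : Fin n, lam i j * S1 (lam i j * t)) := by
    intro t
    rw [hgdef]
    show (∑ i : Fin m, α i * (-γ + S1 (α i * t)))
      + (∑ j : Fin n, β j * (-γ + S1 (β j * t)))
      - ρ * ∑ i : Fin m, ∑ j : Fin n, lam i j * (-γ + S1 (lam i j * t)) = _
    rw [sum_mul_neg_add Finset.univ α (fun i => S1 (α i * t)) (-γ), hΛα,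
      sum_mul_neg_add Finset.univ β (fun j => S1 (β j * t)) (-γ), hΛβ,
      hd2 t, hc0]
    ring
  have hgaps : ∀ t ∈ Set.Ioi (0:ℝ),
      (∑ i : Fin m, ∑ j : Fin n, lam i j * S1 (lam i j * t)
        ≤ ∑ i : Fin m, α i * S1 (α i * t))
      ∧ (∑ i : Fin m, ∑ j : Fin n, lam i j * S1 (lam i j * t)
        ≤ ∑ j : Fin n, β j * S1 (β j * t))
      ∧ 0 < ∑ i : Fin m, ∑ j : Fin n, lam i j * S1 (lam i j * t) := by
    intro t ht
    have ht' : (0:ℝ) < t := ht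
    refine ⟨Finset.sum_le_sum (fun i _ => ?_), ?_, ?_⟩
    · have := sum_le_of_superadd (fun c => c * S1 (c*t))
        (fun a b ha hb => superadd1 ha hb ht') Finset.univ (lam i)
        Finset.univ_nonempty (fun j _ => hlam i j)
      rwa [← hα i] at this
    · rw [Finset.sum_comm]
      refine Finset.sum_le_sum (fun j _ => ?_)
      have := sum_le_of_superadd (fun c => c * S1 (c*t))
        (fun a b ha hb => superadd1 ha hb ht') Finset.univ (fun i => lam i j)
        Finset.univ_nonempty (fun i _ => hlam i j)
      rwa [← hβ j] at this
    · exact Finset.sum_pos (fun i _ => Finset.sum_pos (fun j _ =>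
        mul_pos (hlam i j) (S1_pos (mul_pos (hlam i j) ht'))) Finset.univ_nonempty)
        Finset.univ_nonempty
  have h2ρ : 0 < 2 - ρ := by linarith
  have hlow : ∀ t ∈ Set.Ioi (0:ℝ), c0 < g t := by
    intro t ht
    obtain ⟨hg1, hg2, hg3⟩ := hgaps t ht
    rw [hgsplit t]
    nlinarith [mul_pos h2ρ hg3]
  -- upper bound for small t
  set C : ℝ := ∑' k : ℕ, 1/((k:ℝ)+1)^2 with hCdef
  have hCnonneg : 0 ≤ C := tsum_nonneg (fun k => by positivity)
  set Q : ℝ := C * ((∑ i : Fin m, (α i)^2) + (∑ j : Fin n, (β j)^2)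
      + |ρ| * ∑ i : Fin m, ∑ j : Fin n, (lam i j)^2) with hQdef
  have hQnonneg : 0 ≤ Q := by
    refine mul_nonneg hCnonneg (add_nonneg (add_nonneg ?_ ?_) (mul_nonneg (abs_nonneg ρ) ?_))
    · exact Finset.sum_nonneg fun i _ => sq_nonneg _
    · exact Finset.sum_nonneg fun j _ => sq_nonneg _
    · exact Finset.sum_nonneg fun i _ => Finset.sum_nonneg fun j _ => sq_nonneg _
  have hub : ∀ t : ℝ, 0 < t → g t ≤ c0 + t * Q := by
    intro t ht'
    have hterm : ∀ a : ℝ, 0 < a → a * S1 (a*t) ≤ a^2 * C * t := by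
      intro a ha
      have h := S1_le (mul_pos ha ht').le
      calc a * S1 (a*t) ≤ a * ((a*t) * C) := by
            refine mul_le_mul_of_nonneg_left ?_ ha.le
            rw [hCdef]
            exact h
        _ = a^2 * C * t := by ring
    have hsumα : ∑ i : Fin m, α i * S1 (α i * t) ≤ (∑ i : Fin m, (α i)^2) * C * t := by
      calc ∑ i : Fin m, α i * S1 (α i * t) ≤ ∑ i : Fin m, (α i)^2 * C * t :=
            Finset.sum_le_sum (fun i _ => hterm _ (hαpos i))
        _ = (∑ i : Fin m, (α i)^2) * C * t := by rw [← Finset.sum_mul, ← Finset.sum_mul]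
    have hsumβ : ∑ j : Fin n, β j * S1 (β j * t) ≤ (∑ j : Fin n, (β j)^2) * C * t := by
      calc ∑ j : Fin n, β j * S1 (β j * t) ≤ ∑ j : Fin n, (β j)^2 * C * t :=
            Finset.sum_le_sum (fun j _ => hterm _ (hβpos j))
        _ = (∑ j : Fin n, (β j)^2) * C * t := by rw [← Finset.sum_mul, ← Finset.sum_mul]
    have hsuml : ∑ i : Fin m, ∑ j : Fin n, lam i j * S1 (lam i j * t)
        ≤ (∑ i : Fin m, ∑ j : Fin n, (lam i j)^2) * C * t := by
      calc ∑ i : Fin m, ∑ j : Fin n, lam i j * S1 (lam i j * t)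
          ≤ ∑ i : Fin m, ∑ j : Fin n, (lam i j)^2 * C * t :=
            Finset.sum_le_sum (fun i _ => Finset.sum_le_sum (fun j _ => hterm _ (hlam i j)))
        _ = (∑ i : Fin m, ∑ j : Fin n, (lam i j)^2) * C * t := by
            rw [Finset.sum_mul, Finset.sum_mul]
            exact Finset.sum_congr rfl (fun i _ => by rw [Finset.sum_mul, Finset.sum_mul])
    have hD1nonneg : 0 ≤ ∑ i : Fin m, ∑ j : Fin n, lam i j * S1 (lam i j * t) :=
      Finset.sum_nonneg fun i _ => Finset.sum_nonneg fun j _ =>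
        mul_nonneg (hlam i j).le (S1_nonneg (mul_pos (hlam i j) ht').le)
    have hρD : -ρ * (∑ i : Fin m, ∑ j : Fin n, lam i j * S1 (lam i j * t))
        ≤ |ρ| * (∑ i : Fin m, ∑ j : Fin n, lam i j * S1 (lam i j * t)) :=
      mul_le_mul_of_nonneg_right (neg_le_abs ρ) hD1nonneg
    have hρD2 : |ρ| * (∑ i : Fin m, ∑ j : Fin n, lam i j * S1 (lam i j * t))
        ≤ |ρ| * ((∑ i : Fin m, ∑ j : Fin n, (lam i j)^2) * C * t) :=
      mul_le_mul_of_nonneg_left hsuml (abs_nonneg ρ)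
    have hQexp : t * Q = (∑ i : Fin m, (α i)^2) * C * t + (∑ j : Fin n, (β j)^2) * C * t
        + |ρ| * ((∑ i : Fin m, ∑ j : Fin n, (lam i j)^2) * C * t) := by
      rw [hQdef]; ring
    rw [hgsplit t, hQexp]
    nlinarith [hsumα, hsumβ, hρD, hρD2]
  -- conclusion
  refine ⟨?_, ?_, ?_⟩
  · intro x hx z hz hxz
    rw [hDeq x hx, hDeq z hz]
    exact hgmono hx hz hxz
  · obtain ⟨hconv, hineq⟩ := hgconc
    refine ⟨convex_Ioi 0, ?_⟩
    intro x hx z hz a b ha hb hab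
    have hxz : a • x + b • z ∈ Set.Ioi (0:ℝ) := hconv hx hz ha hb hab
    rw [hDeq x hx, hDeq z hz, hDeq _ hxz]
    exact hineq hx hz ha hb hab
  · ext y
    simp only [Set.mem_image, Set.mem_Ioi]
    constructor
    · rintro ⟨t, ht, rfl⟩
      rw [hDeq t ht]
      exact hlow t ht
    · intro hy
      have hQ1 : (0:ℝ) < Q + 1 := by linarith
      have hyc : 0 < y - c0 := by linarith
      obtain ⟨t0, ht0pos, hgt0⟩ : ∃ t0 : ℝ, 0 < t0 ∧ g t0 < y := by
        have ht0pos : 0 < (y - c0)/(2*(Q+1)) := div_pos hyc (by linarith)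
        refine ⟨(y - c0)/(2*(Q+1)), ht0pos, ?_⟩
        have h1 := hub _ ht0pos
        have h4 : (y - c0)/(2*(Q+1)) * Q < y - c0 := by
          rw [div_mul_eq_mul_div, div_lt_iff₀ (by linarith)]
          exact mul_lt_mul_of_pos_left (by linarith) hyc
        linarith
      set lam0 : ℝ := lam ⟨0,hm⟩ ⟨0,hn⟩ with hlam0
      have hlam0pos : 0 < lam0 := hlam _ _
      have hglb : ∀ t ∈ Set.Ioi (0:ℝ), c0 + (2-ρ)*(lam0 * S1 (lam0 * t)) ≤ g t := by
        intro t ht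
        have ht' : (0:ℝ) < t := ht
        obtain ⟨hg1, hg2, hg3⟩ := hgaps t ht
        have hsingle : lam0 * S1 (lam0 * t)
            ≤ ∑ i : Fin m, ∑ j : Fin n, lam i j * S1 (lam i j * t) := by
          calc lam0 * S1 (lam0 * t)
              ≤ ∑ j : Fin n, lam ⟨0,hm⟩ j * S1 (lam ⟨0,hm⟩ j * t) :=
                Finset.single_le_sum (fun j _ => mul_nonneg (hlam _ j).le
                  (S1_nonneg (mul_pos (hlam _ j) ht').le)) (Finset.mem_univ _)
            _ ≤ ∑ i : Fin m, ∑ j : Fin n, lam i j * S1 (lam i j * t) :=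
                Finset.single_le_sum (fun i _ => Finset.sum_nonneg (fun j _ =>
                  mul_nonneg (hlam i j).le (S1_nonneg (mul_pos (hlam i j) ht').le)))
                  (Finset.mem_univ _)
        rw [hgsplit t]
        nlinarith [mul_le_mul_of_nonneg_left hsingle h2ρ.le]
      have htop : Tendsto (fun t => lam0 * S1 (lam0 * t)) atTop atTop := by
        have h1 : Tendsto (fun t : ℝ => lam0 * t) atTop atTop :=
          Tendsto.const_mul_atTop hlam0pos tendsto_id
        exact Tendsto.const_mul_atTop hlam0pos (S1_tendsto_atTop.comp h1)
      have hev1 : ∀ᶠ t in atTop, y < c0 + (2-ρ)*(lam0 * S1 (lam0 * t)) := by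
        have h : Tendsto (fun t => c0 + (2-ρ)*(lam0 * S1 (lam0 * t))) atTop atTop :=
          tendsto_atTop_add_const_left _ c0 (Tendsto.const_mul_atTop h2ρ htop)
        exact h.eventually_gt_atTop y
      obtain ⟨t1, ht1a, ht1b⟩ := (hev1.and (eventually_gt_atTop (max t0 0))).exists
      have ht1pos : 0 < t1 := lt_of_le_of_lt (le_max_right t0 0) ht1b
      have ht01 : t0 < t1 := lt_of_le_of_lt (le_max_left t0 0) ht1b
      have hgt1 : y < g t1 := lt_of_lt_of_le ht1a (hglb t1 ht1pos)
      have hsub : Set.Icc t0 t1 ⊆ Set.Ioi (0:ℝ) := fun z hz => lt_of_lt_of_le ht0pos hz.1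
      have hivt := intermediate_value_Icc (le_of_lt ht01) (hgcont.mono hsub)
      obtain ⟨t, htmem, hgt⟩ := hivt ⟨le_of_lt hgt0, le_of_lt hgt1⟩
      exact ⟨t, hsub htmem, by rw [hDeq t (hsub htmem)]; exact hgt⟩
end

section
/- Let m, n be positive integers with m ≥ 2 or n ≥ 2, let λ_{ij} > 0 for 1 ≤ i ≤ m, 1 ≤ j ≤ n, α_i = ∑_{j=1}^n λ_{ij}, β_j = ∑_{i=1}^m λ_{ij}, and take ρ = 2. Then f(t) = [∏_{i=1}^m Γ(1+α_i t) · ∏_{j=1}^n Γ(1+β_j t)] / [∏_{i=1}^m ∏_{j=1}^n Γ(1+λ_{ij} t)]² is strictly increasing on (0, ∞), f(t) → 1 as t → 0⁺, and f(t) → ∞ as t → ∞; consequently the image of (0, ∞) under f is the open interval (1, ∞). -/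
open Finset Filter

section helpers

variable {ι : Type*}

-- product of monotone nonneg functions is monotone
lemma myMulMono {f g : ℝ → ℝ} {S : Set ℝ} (hf : MonotoneOn f S) (hg : MonotoneOn g S)
    (hf0 : ∀ x ∈ S, 0 ≤ f x) (hg0 : ∀ x ∈ S, 0 ≤ g x) :
    MonotoneOn (fun x => f x * g x) S := fun x hx y hy hxy =>
  mul_le_mul (hf hx hy hxy) (hg hx hy hxy) (hg0 x hx) ((hf0 x hx).trans (hf hx hy hxy))

lemma myMulStrict {f g : ℝ → ℝ} {S : Set ℝ} (hf : MonotoneOn f S) (hg : StrictMonoOn g S)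
    (hf0 : ∀ x ∈ S, 0 < f x) (hg0 : ∀ x ∈ S, 0 ≤ g x) :
    StrictMonoOn (fun x => f x * g x) S := by
  intro x hx y hy hxy
  calc f x * g x < f x * g y := mul_lt_mul_of_pos_left (hg hx hy hxy) (hf0 x hx)
  _ ≤ f y * g y := mul_le_mul_of_nonneg_right (hf hx hy hxy.le) (hg0 y hy)

lemma myMulStrict' {f g : ℝ → ℝ} {S : Set ℝ} (hf : StrictMonoOn f S) (hg : MonotoneOn g S)
    (hf0 : ∀ x ∈ S, 0 ≤ f x) (hg0 : ∀ x ∈ S, 0 < g x) :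
    StrictMonoOn (fun x => f x * g x) S := by
  have := myMulStrict hg hf hg0 hf0
  intro x hx y hy hxy
  have := this hx hy hxy
  simpa [mul_comm] using this

lemma myProdMono {f : ι → ℝ → ℝ} {S : Set ℝ} (s : Finset ι)
    (hf : ∀ i ∈ s, MonotoneOn (f i) S) (hf0 : ∀ i ∈ s, ∀ x ∈ S, 0 ≤ f i x) :
    MonotoneOn (fun x => ∏ i ∈ s, f i x) S := by
  classical
  induction s using Finset.induction_on with
  | empty => simpa using monotoneOn_const
  | insert a s' hni ih =>
    simp only [Finset.prod_insert hni]
    exact myMulMono (hf a (by simp)) (ih (fun i hi => hf i (by simp [hi]))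
      (fun i hi => hf0 i (by simp [hi])))
      (fun x hx => hf0 a (by simp) x hx)
      (fun x hx => Finset.prod_nonneg fun i hi => hf0 i (by simp [hi]) x hx)

lemma myProdStrict {f : ι → ℝ → ℝ} {S : Set ℝ} (s : Finset ι) (hs : s.Nonempty)
    (hf : ∀ i ∈ s, StrictMonoOn (f i) S) (hf0 : ∀ i ∈ s, ∀ x ∈ S, 0 < f i x) :
    StrictMonoOn (fun x => ∏ i ∈ s, f i x) S := by
  classical
  induction s using Finset.induction_on with
  | empty => exact absurd hs (by simp)
  | insert a s' hni ih =>
    simp only [Finset.prod_insert hni]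
    rcases s'.eq_empty_or_nonempty with rfl | hne
    · simpa using hf a (by simp)
    · exact myMulStrict' (hf a (by simp))
        (myProdMono s' (fun i hi => (hf i (by simp [hi])).monotoneOn)
          (fun i hi x hx => (hf0 i (by simp [hi]) x hx).le))
        (fun x hx => (hf0 a (by simp) x hx).le)
        (fun x hx => Finset.prod_pos fun i hi => hf0 i (by simp [hi]) x hx)

end helpers

noncomputable def myQ {ι : Type*} (c : ℝ) (s : Finset ι) (lam : ι → ℝ) (t : ℝ) : ℝ :=
  (∏ j ∈ s, (c + lam j * t)) / (c + (∑ j ∈ s, lam j) * t)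

section Qlem
variable {ι : Type*} {c : ℝ} {s : Finset ι} {lam : ι → ℝ}

lemma mySum_nonneg (hl : ∀ j ∈ s, 0 < lam j) : 0 ≤ ∑ j ∈ s, lam j :=
  Finset.sum_nonneg fun j hj => (hl j hj).le

lemma myDen_pos (hc : 0 < c) (hl : ∀ j ∈ s, 0 < lam j) {t : ℝ} (ht : 0 ≤ t) :
    0 < c + (∑ j ∈ s, lam j) * t := by
  have := mySum_nonneg hl
  nlinarith [mul_nonneg this ht]

lemma myQ_pos (hc : 0 < c) (hl : ∀ j ∈ s, 0 < lam j) {t : ℝ} (ht : 0 ≤ t) :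
    0 < myQ c s lam t := by
  unfold myQ
  apply div_pos
  · exact Finset.prod_pos fun j hj => by nlinarith [hl j hj]
  · exact myDen_pos hc hl ht

lemma myTwo (c a b : ℝ) (hc : 0 < c) (ha : 0 < a) (hb : 0 < b) :
    StrictMonoOn (fun t => (c + a*t)*(c + b*t) / (c + (a+b)*t)) (Set.Ici 0) := by
  intro x hx y hy hxy
  simp only [Set.mem_Ici] at hx hy
  have d1 : 0 < c + (a+b)*x := by nlinarith
  have d2 : 0 < c + (a+b)*y := by nlinarith
  rw [div_lt_div_iff₀ d1 d2]
  have hy' : 0 < y := lt_of_le_of_lt hx hxy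
  have k1 : 0 < a*b*c*((y-x)*(y+x)) :=
    mul_pos (mul_pos (mul_pos ha hb) hc) (mul_pos (sub_pos.2 hxy) (by linarith))
  have k2 : 0 ≤ a*b*(a+b)*(x*y*(y-x)) :=
    mul_nonneg (by positivity) (mul_nonneg (mul_nonneg hx hy'.le) (sub_pos.2 hxy).le)
  nlinarith [k1, k2]

lemma myTwo_pos (c a b : ℝ) (hc : 0 < c) (ha : 0 < a) (hb : 0 < b) {t : ℝ} (ht : 0 ≤ t) :
    0 < (c + a*t)*(c + b*t) / (c + (a+b)*t) := by
  have h1 : 0 < c + a*t := by nlinarith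
  have h2 : 0 < c + b*t := by nlinarith
  have h3 : 0 < c + (a+b)*t := by nlinarith
  exact div_pos (mul_pos h1 h2) h3

end Qlem

section Qlem2
variable {ι : Type*} [DecidableEq ι] {c : ℝ} {lam : ι → ℝ}

lemma myQ_insert {s : Finset ι} {a : ι} (ha : a ∉ s) (hc : 0 < c)
    (hl : ∀ j ∈ s, 0 < lam j) :
    Set.EqOn (myQ c (insert a s) lam)
      (fun t => myQ c s lam t *
        ((c + (∑ j ∈ s, lam j)*t)*(c + lam a*t)/(c + (∑ j ∈ s, lam j + lam a)*t)))
      (Set.Ici 0) := by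
  intro t ht
  simp only [Set.mem_Ici] at ht
  have d1 : 0 < c + (∑ j ∈ s, lam j) * t := by
    have := mySum_nonneg hl
    nlinarith [mul_nonneg this ht]
  unfold myQ
  rw [Finset.prod_insert ha, Finset.sum_insert ha, add_comm (lam a)]
  show _ = _ / _ * (_ / _)
  rw [div_mul_div_comm]
  rw [show (∏ j ∈ s, (c + lam j * t)) * ((c + (∑ j ∈ s, lam j) * t) * (c + lam a * t))
      = (c + (∑ j ∈ s, lam j)*t) * ((c + lam a * t) * ∏ j ∈ s, (c + lam j * t)) from by ring]
  rw [mul_div_mul_left _ _ d1.ne']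

lemma myQ_mono {s : Finset ι} (hs : s.Nonempty) (hc : 0 < c)
    (hl : ∀ j ∈ s, 0 < lam j) : MonotoneOn (myQ c s lam) (Set.Ici 0) := by
  classical
  induction s using Finset.induction_on with
  | empty => exact absurd hs (by simp)
  | insert a s' hni ih =>
    rcases s'.eq_empty_or_nonempty with rfl | hne
    · intro x hx y hy hxy
      simp only [Set.mem_Ici] at hx hy
      have h1 : 0 < c + lam a * x := by nlinarith [hl a (by simp)]
      have h2 : 0 < c + lam a * y := by nlinarith [hl a (by simp)]
      simp [myQ, div_self h1.ne', div_self h2.ne']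
    · have hl' : ∀ j ∈ s', 0 < lam j := fun j hj => hl j (by simp [hj])
      have hSa : 0 < lam a := hl a (by simp)
      have hS' : 0 < ∑ j ∈ s', lam j := Finset.sum_pos hl' hne
      have hmono := myMulMono (ih hne hl')
        ((myTwo c (∑ j ∈ s', lam j) (lam a) hc hS' hSa).monotoneOn)
        (fun x hx => (myQ_pos hc hl' hx).le)
        (fun x hx => (myTwo_pos c (∑ j ∈ s', lam j) (lam a) hc hS' hSa (Set.mem_Ici.1 hx)).le)
      exact MonotoneOn.congr hmono (myQ_insert hni hc hl').symm

lemma myQ_strict {s : Finset ι} (hs : 2 ≤ s.card) (hc : 0 < c)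
    (hl : ∀ j ∈ s, 0 < lam j) : StrictMonoOn (myQ c s lam) (Set.Ici 0) := by
  classical
  obtain ⟨a, ha⟩ := Finset.card_pos.1 (by omega : 0 < s.card)
  have hins : s = insert a (s.erase a) := (Finset.insert_erase ha).symm
  have hni : a ∉ s.erase a := Finset.notMem_erase a s
  have hne : (s.erase a).Nonempty := Finset.card_pos.1 (by
    rw [Finset.card_erase_of_mem ha]; omega)
  have hl' : ∀ j ∈ s.erase a, 0 < lam j := fun j hj => hl j (Finset.mem_of_mem_erase hj)
  have hSa : 0 < lam a := hl a ha
  have hS' : 0 < ∑ j ∈ s.erase a, lam j := Finset.sum_pos hl' hne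
  have hstrict := myMulStrict (myQ_mono hne hc hl')
    (myTwo c (∑ j ∈ s.erase a, lam j) (lam a) hc hS' hSa)
    (fun x hx => myQ_pos hc hl' hx)
    (fun x hx => (myTwo_pos c (∑ j ∈ s.erase a, lam j) (lam a) hc hS' hSa (Set.mem_Ici.1 hx)).le)
  have hfin := StrictMonoOn.congr hstrict (myQ_insert hni hc hl').symm
  rwa [← hins] at hfin
end Qlem2

section Qlem3
variable {ι : Type*} [DecidableEq ι] {lam : ι → ℝ}

lemma myQ_zero (s : Finset ι) : myQ 1 s lam 0 = 1 := by simp [myQ]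

lemma myQ_ge_one {s : Finset ι} (hs : s.Nonempty) (hl : ∀ j ∈ s, 0 < lam j)
    {t : ℝ} (ht : 0 ≤ t) : 1 ≤ myQ 1 s lam t := by
  have := myQ_mono hs one_pos hl (Set.self_mem_Ici) (Set.mem_Ici.2 ht) ht
  rwa [myQ_zero] at this

lemma myQ_growth {s : Finset ι} (hs : 2 ≤ s.card) (hl : ∀ j ∈ s, 0 < lam j) :
    ∃ ε > 0, ∀ t : ℝ, 1 ≤ t → ε * t ≤ myQ 1 s lam t := by
  obtain ⟨a, haS, b, hbS, hab⟩ := Finset.one_lt_card.1 hs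
  set Sl := ∑ j ∈ s, lam j with hSdef
  have hS0 : 0 ≤ Sl := mySum_nonneg hl
  have hla : 0 < lam a := hl a haS
  have hlb : 0 < lam b := hl b hbS
  refine ⟨lam a * lam b / (1 + Sl), by positivity, fun t ht => ?_⟩
  have ht0 : 0 < t := lt_of_lt_of_le one_pos ht
  have hbS' : b ∈ s.erase a := Finset.mem_erase.2 ⟨fun h => hab (h.symm ▸ rfl), hbS⟩
  have hprod : lam a * lam b * t^2 ≤ ∏ j ∈ s, (1 + lam j * t) := by
    rw [← Finset.mul_prod_erase s _ haS, ← Finset.mul_prod_erase _ _ hbS']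
    have hrest0 : (∏ _j ∈ (s.erase a).erase b, (1:ℝ)) ≤
        ∏ j ∈ (s.erase a).erase b, (1 + lam j * t) := by
      refine Finset.prod_le_prod (by simp) ?_
      intro j hj
      nlinarith [hl j (Finset.mem_of_mem_erase (Finset.mem_of_mem_erase hj))]
    have hrest : (1:ℝ) ≤ ∏ j ∈ (s.erase a).erase b, (1 + lam j * t) := by
      simpa using hrest0
    have h2 : lam a * lam b * t^2 ≤ (1 + lam a * t) * (1 + lam b * t) := by nlinarith
    nlinarith [mul_pos (mul_pos (by nlinarith : (0:ℝ) < 1 + lam a * t)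
      (by nlinarith : (0:ℝ) < 1 + lam b * t)) ht0]
  have hden : 0 < 1 + Sl * t := by nlinarith
  rw [myQ, le_div_iff₀ hden]
  have key : lam a * lam b / (1 + Sl) * t * (1 + Sl * t) ≤ lam a * lam b * t^2 := by
    rw [div_mul_eq_mul_div, div_mul_eq_mul_div, div_le_iff₀ (by positivity)]
    nlinarith [mul_nonneg (mul_nonneg (mul_pos hla hlb).le ht0.le)
      (by linarith : (0:ℝ) ≤ t - 1)]
  exact key.trans hprod
end Qlem3

lemma myOneLeProd {ι : Type*} {s : Finset ι} {f : ι → ℝ} (h : ∀ i ∈ s, 1 ≤ f i) :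
    1 ≤ ∏ i ∈ s, f i := by
  have h0 := Finset.prod_le_prod (f := fun _ : ι => (1:ℝ)) (g := f)
    (by simp) (by simpa using h)
  simpa using h0

lemma myProd_ge_single {ι : Type*} [DecidableEq ι] {s : Finset ι} {f : ι → ℝ} {a : ι}
    (ha : a ∈ s) (h : ∀ i ∈ s, 1 ≤ f i) : f a ≤ ∏ i ∈ s, f i := by
  rw [← Finset.mul_prod_erase s _ ha]
  have h1 : 1 ≤ ∏ i ∈ s.erase a, f i :=
    myOneLeProd fun i hi => h i (Finset.mem_of_mem_erase hi)
  nlinarith [h a ha]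

section Rho
variable {m n : ℕ} {lam : Fin m → Fin n → ℝ} {α : Fin m → ℝ} {β : Fin n → ℝ} {c : ℝ}

noncomputable def myRho (lam : Fin m → Fin n → ℝ) (α : Fin m → ℝ) (β : Fin n → ℝ)
    (c t : ℝ) : ℝ :=
  (∏ i, ∏ j, (c + lam i j * t))^2 / ((∏ i, (c + α i * t)) * ∏ j, (c + β j * t))

lemma myRho_eq (hα : ∀ i, α i = ∑ j, lam i j) (hβ : ∀ j, β j = ∑ i, lam i j) :
    myRho lam α β c = fun t =>
      (∏ i, myQ c Finset.univ (lam i) t) * ∏ j, myQ c Finset.univ (fun i => lam i j) t := by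
  funext t
  unfold myRho myQ
  simp only [hα, hβ]
  rw [Finset.prod_div_distrib, Finset.prod_div_distrib, div_mul_div_comm,
    show (∏ j, ∏ i, (c + lam i j * t)) = ∏ i, ∏ j, (c + lam i j * t) from Finset.prod_comm,
    ← sq]

lemma myRho_pos (hm : 0 < m) (hn : 0 < n) (hα : ∀ i, α i = ∑ j, lam i j)
    (hβ : ∀ j, β j = ∑ i, lam i j) (hc : 0 < c) (hl : ∀ i j, 0 < lam i j)
    {t : ℝ} (ht : 0 ≤ t) : 0 < myRho lam α β c t := by
  rw [myRho_eq hα hβ]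
  exact mul_pos (Finset.prod_pos fun i _ => myQ_pos hc (fun j _ => hl i j) ht)
    (Finset.prod_pos fun j _ => myQ_pos hc (fun i _ => hl i j) ht)

lemma myRho_mono (hm : 0 < m) (hn : 0 < n) (hα : ∀ i, α i = ∑ j, lam i j)
    (hβ : ∀ j, β j = ∑ i, lam i j) (hc : 0 < c) (hl : ∀ i j, 0 < lam i j) :
    MonotoneOn (myRho lam α β c) (Set.Ici 0) := by
  rw [myRho_eq hα hβ]
  have hu1 : (Finset.univ : Finset (Fin n)).Nonempty := Finset.univ_nonempty_iff.2 ⟨⟨0, hn⟩⟩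
  have hu2 : (Finset.univ : Finset (Fin m)).Nonempty := Finset.univ_nonempty_iff.2 ⟨⟨0, hm⟩⟩
  exact myMulMono
    (myProdMono _ (fun i _ => myQ_mono hu1 hc (fun j _ => hl i j))
      (fun i _ x hx => (myQ_pos hc (fun j _ => hl i j) hx).le))
    (myProdMono _ (fun j _ => myQ_mono hu2 hc (fun i _ => hl i j))
      (fun j _ x hx => (myQ_pos hc (fun i _ => hl i j) hx).le))
    (fun x hx => Finset.prod_nonneg fun i _ => (myQ_pos hc (fun j _ => hl i j) hx).le)
    (fun x hx => Finset.prod_nonneg fun j _ => (myQ_pos hc (fun i _ => hl i j) hx).le)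

lemma myRho_strict (hm : 0 < m) (hn : 0 < n) (hmn : 2 ≤ m ∨ 2 ≤ n)
    (hα : ∀ i, α i = ∑ j, lam i j) (hβ : ∀ j, β j = ∑ i, lam i j) (hc : 0 < c)
    (hl : ∀ i j, 0 < lam i j) :
    StrictMonoOn (myRho lam α β c) (Set.Ici 0) := by
  rw [myRho_eq hα hβ]
  have hu1 : (Finset.univ : Finset (Fin n)).Nonempty := Finset.univ_nonempty_iff.2 ⟨⟨0, hn⟩⟩
  have hu2 : (Finset.univ : Finset (Fin m)).Nonempty := Finset.univ_nonempty_iff.2 ⟨⟨0, hm⟩⟩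
  have cardn : (Finset.univ : Finset (Fin n)).card = n := by simp
  have cardm : (Finset.univ : Finset (Fin m)).card = m := by simp
  rcases hmn with hm2 | hn2
  · exact myMulStrict
      (myProdMono _ (fun i _ => myQ_mono hu1 hc (fun j _ => hl i j))
        (fun i _ x hx => (myQ_pos hc (fun j _ => hl i j) hx).le))
      (myProdStrict _ hu1 (fun j _ => myQ_strict (by omega) hc (fun i _ => hl i j))
        (fun j _ x hx => myQ_pos hc (fun i _ => hl i j) hx))
      (fun x hx => Finset.prod_pos fun i _ => myQ_pos hc (fun j _ => hl i j) hx)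
      (fun x hx => (Finset.prod_pos fun j _ => myQ_pos hc (fun i _ => hl i j) hx).le)
  · exact myMulStrict'
      (myProdStrict _ hu2 (fun i _ => myQ_strict (by omega) hc (fun j _ => hl i j))
        (fun i _ x hx => myQ_pos hc (fun j _ => hl i j) hx))
      (myProdMono _ (fun j _ => myQ_mono hu2 hc (fun i _ => hl i j))
        (fun j _ x hx => (myQ_pos hc (fun i _ => hl i j) hx).le))
      (fun x hx => (Finset.prod_pos fun i _ => myQ_pos hc (fun j _ => hl i j) hx).le)
      (fun x hx => Finset.prod_pos fun j _ => myQ_pos hc (fun i _ => hl i j) hx)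

lemma myRho_ge_one (hm : 0 < m) (hn : 0 < n) (hα : ∀ i, α i = ∑ j, lam i j)
    (hβ : ∀ j, β j = ∑ i, lam i j) (hl : ∀ i j, 0 < lam i j) {t : ℝ} (ht : 0 ≤ t) :
    1 ≤ myRho lam α β 1 t := by
  rw [myRho_eq hα hβ]
  have hu1 : (Finset.univ : Finset (Fin n)).Nonempty := Finset.univ_nonempty_iff.2 ⟨⟨0, hn⟩⟩
  have hu2 : (Finset.univ : Finset (Fin m)).Nonempty := Finset.univ_nonempty_iff.2 ⟨⟨0, hm⟩⟩
  have h1 : (1:ℝ) ≤ ∏ i, myQ 1 Finset.univ (lam i) t :=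
    myOneLeProd fun i _ => myQ_ge_one hu1 (fun j _ => hl i j) ht
  have h2 : (1:ℝ) ≤ ∏ j, myQ 1 Finset.univ (fun i => lam i j) t :=
    myOneLeProd fun j _ => myQ_ge_one hu2 (fun i _ => hl i j) ht
  have := mul_le_mul h1 h2 zero_le_one (zero_le_one.trans h1)
  simpa using this

lemma myRho_growth (hm : 0 < m) (hn : 0 < n) (hmn : 2 ≤ m ∨ 2 ≤ n)
    (hα : ∀ i, α i = ∑ j, lam i j) (hβ : ∀ j, β j = ∑ i, lam i j)
    (hl : ∀ i j, 0 < lam i j) :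
    ∃ ε > 0, ∀ t : ℝ, 1 ≤ t → ε * t ≤ myRho lam α β 1 t := by
  have hu1 : (Finset.univ : Finset (Fin n)).Nonempty := Finset.univ_nonempty_iff.2 ⟨⟨0, hn⟩⟩
  have hu2 : (Finset.univ : Finset (Fin m)).Nonempty := Finset.univ_nonempty_iff.2 ⟨⟨0, hm⟩⟩
  rcases hmn with hm2 | hn2
  · obtain ⟨j0⟩ : Nonempty (Fin n) := ⟨⟨0, hn⟩⟩
    obtain ⟨ε, hε, hgr⟩ := myQ_growth (s := (Finset.univ : Finset (Fin m)))
      (lam := fun i => lam i j0) (by simp; omega) (fun i _ => hl i j0)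
    refine ⟨ε, hε, fun t ht => ?_⟩
    have ht0 : (0:ℝ) ≤ t := by linarith
    rw [myRho_eq hα hβ]
    have h1 : (1:ℝ) ≤ ∏ i, myQ 1 Finset.univ (lam i) t :=
      myOneLeProd fun i _ => myQ_ge_one hu1 (fun j _ => hl i j) ht0
    have h2 : myQ 1 Finset.univ (fun i => lam i j0) t ≤
        ∏ j, myQ 1 Finset.univ (fun i => lam i j) t :=
      myProd_ge_single (Finset.mem_univ j0)
        (fun j _ => myQ_ge_one hu2 (fun i _ => hl i j) ht0)
    have h3 := hgr t ht
    have h4 : 0 < myQ 1 Finset.univ (fun i => lam i j0) t :=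
      myQ_pos one_pos (fun i _ => hl i j0) ht0
    calc ε * t ≤ myQ 1 Finset.univ (fun i => lam i j0) t := h3
    _ ≤ ∏ j, myQ 1 Finset.univ (fun i => lam i j) t := h2
    _ ≤ (∏ i, myQ 1 Finset.univ (lam i) t) * ∏ j, myQ 1 Finset.univ (fun i => lam i j) t := by
        have h5 : (0:ℝ) < ∏ j, myQ 1 Finset.univ (fun i => lam i j) t :=
          Finset.prod_pos fun j _ => myQ_pos one_pos (fun i _ => hl i j) ht0
        exact le_mul_of_one_le_left h5.le h1
  · obtain ⟨i0⟩ : Nonempty (Fin m) := ⟨⟨0, hm⟩⟩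
    obtain ⟨ε, hε, hgr⟩ := myQ_growth (s := (Finset.univ : Finset (Fin n)))
      (lam := lam i0) (by simp; omega) (fun j _ => hl i0 j)
    refine ⟨ε, hε, fun t ht => ?_⟩
    have ht0 : (0:ℝ) ≤ t := by linarith
    rw [myRho_eq hα hβ]
    have h2 : (1:ℝ) ≤ ∏ j, myQ 1 Finset.univ (fun i => lam i j) t :=
      myOneLeProd fun j _ => myQ_ge_one hu2 (fun i _ => hl i j) ht0
    have h1 : myQ 1 Finset.univ (lam i0) t ≤ ∏ i, myQ 1 Finset.univ (lam i) t :=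
      myProd_ge_single (Finset.mem_univ i0)
        (fun i _ => myQ_ge_one hu1 (fun j _ => hl i j) ht0)
    have h3 := hgr t ht
    have h4 : 0 < myQ 1 Finset.univ (lam i0) t := myQ_pos one_pos (fun j _ => hl i0 j) ht0
    calc ε * t ≤ myQ 1 Finset.univ (lam i0) t := h3
    _ ≤ ∏ i, myQ 1 Finset.univ (lam i) t := h1
    _ ≤ (∏ i, myQ 1 Finset.univ (lam i) t) * ∏ j, myQ 1 Finset.univ (fun i => lam i j) t :=
        le_mul_of_one_le_right (Finset.prod_nonneg fun i _ => (myQ_pos one_pos (fun j _ => hl i j) ht0).le) h2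
end Rho

section GS

lemma gsProd {ι : Type*} [Fintype ι] {N : ℕ} (hN0 : (0:ℝ) < (N:ℝ)) (x : ι → ℝ) :
    ∏ i, Real.GammaSeq (x i) N =
      Real.exp (Real.log N * ∑ i, x i) * ((Nat.factorial N : ℕ) : ℝ)^(Fintype.card ι) /
        ∏ i, ∏ r ∈ Finset.range (N+1), (x i + (r:ℝ)) := by
  unfold Real.GammaSeq
  rw [Finset.prod_div_distrib, Finset.prod_mul_distrib, Finset.prod_const, Finset.card_univ]
  congr 2
  simp only [Real.rpow_def_of_pos hN0]
  rw [← Real.exp_sum, Finset.mul_sum]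

variable {m n : ℕ} {lam : Fin m → Fin n → ℝ} {α : Fin m → ℝ} {β : Fin n → ℝ}

lemma myG_eq (hα : ∀ i, α i = ∑ j, lam i j) (hβ : ∀ j, β j = ∑ i, lam i j)
    (hl : ∀ i j, 0 < lam i j) {t : ℝ} (ht : 0 ≤ t) {N : ℕ} (hN : 0 < N) :
    ((∏ i, Real.GammaSeq (1 + α i * t) N) * ∏ j, Real.GammaSeq (1 + β j * t) N) /
      (∏ i, ∏ j, Real.GammaSeq (1 + lam i j * t) N) ^ 2
    = (Real.exp (Real.log N * ((m:ℝ) + n - 2*(m*n))) * ((Nat.factorial N : ℕ) : ℝ)^(m+n) / ((Nat.factorial N : ℕ) : ℝ)^(2*(m*n)))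
      * ∏ k ∈ Finset.range (N+1), myRho lam α β (1 + (k:ℝ)) t := by
  have hN0 : (0:ℝ) < (N:ℝ) := by exact_mod_cast hN
  set L : ℝ := Real.log N with hL
  set F : ℝ := ((Nat.factorial N : ℕ) : ℝ) with hF
  have hFpos : 0 < F := by rw [hF]; exact_mod_cast Nat.factorial_pos N
  set S : ℝ := ∑ i, ∑ j, lam i j with hS
  have hsumα : ∑ i, (1 + α i * t) = (m:ℝ) + S * t := by
    rw [Finset.sum_add_distrib, Finset.sum_const, Finset.card_univ, Fintype.card_fin]
    simp only [hα, hS]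
    rw [← Finset.sum_mul, nsmul_eq_mul, mul_one]
  have hsumβ : ∑ j, (1 + β j * t) = (n:ℝ) + S * t := by
    rw [Finset.sum_add_distrib, Finset.sum_const, Finset.card_univ, Fintype.card_fin]
    simp only [hβ, hS]
    rw [← Finset.sum_mul, nsmul_eq_mul, mul_one, Finset.sum_comm]
  have hsuml : (∑ p : Fin m × Fin n, (1 + lam p.1 p.2 * t)) = ((m*n : ℕ):ℝ) + S * t := by
    rw [Finset.sum_add_distrib, Finset.sum_const, Finset.card_univ]
    rw [show (Fintype.card (Fin m × Fin n)) = m*n from by simp]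
    simp only [hS]
    rw [← Finset.sum_mul, nsmul_eq_mul, mul_one, Fintype.sum_prod_type]
  have hPpos : ∀ y : ℝ, 0 ≤ y → 0 < ∏ r ∈ Finset.range (N+1), ((1 + y * t) + (r:ℝ)) := by
    intro y hy
    refine Finset.prod_pos fun r _ => ?_
    have : (0:ℝ) ≤ (r:ℝ) := Nat.cast_nonneg r
    nlinarith [mul_nonneg hy ht]
  have hαnn : ∀ i, 0 ≤ α i := fun i => by
    rw [hα]; exact Finset.sum_nonneg fun j _ => (hl i j).le
  have hβnn : ∀ j, 0 ≤ β j := fun j => by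
    rw [hβ]; exact Finset.sum_nonneg fun i _ => (hl i j).le
  -- block identities
  have e1 := gsProd (ι := Fin m) hN0 (fun i => 1 + α i * t)
  rw [hsumα, Fintype.card_fin] at e1
  have e2 := gsProd (ι := Fin n) hN0 (fun j => 1 + β j * t)
  rw [hsumβ, Fintype.card_fin] at e2
  have e3' := gsProd (ι := Fin m × Fin n) hN0 (fun p => 1 + lam p.1 p.2 * t)
  rw [hsuml, show (Fintype.card (Fin m × Fin n)) = m*n from by simp] at e3'
  have e3a : (∏ p : Fin m × Fin n, Real.GammaSeq (1 + lam p.1 p.2 * t) N)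
      = ∏ i, ∏ j, Real.GammaSeq (1 + lam i j * t) N := Fintype.prod_prod_type _
  have e3b : (∏ p : Fin m × Fin n, ∏ r ∈ Finset.range (N+1), ((1 + lam p.1 p.2 * t) + (r:ℝ)))
      = ∏ i, ∏ j, ∏ r ∈ Finset.range (N+1), ((1 + lam i j * t) + (r:ℝ)) :=
    Fintype.prod_prod_type _
  rw [e3a, e3b] at e3'
  -- rhs product identity
  have sw1 : ∏ k ∈ Finset.range (N+1), ∏ i : Fin m, ∏ j : Fin n, ((1+(k:ℝ)) + lam i j * t)
      = ∏ i, ∏ j, ∏ r ∈ Finset.range (N+1), ((1 + lam i j * t) + (r:ℝ)) := by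
    rw [Finset.prod_comm]
    refine Finset.prod_congr rfl fun i _ => ?_
    rw [Finset.prod_comm]
    exact Finset.prod_congr rfl fun j _ => Finset.prod_congr rfl fun r _ => by ring
  have sw2 : ∏ k ∈ Finset.range (N+1), ∏ i : Fin m, ((1+(k:ℝ)) + α i * t)
      = ∏ i, ∏ r ∈ Finset.range (N+1), ((1 + α i * t) + (r:ℝ)) := by
    rw [Finset.prod_comm]
    exact Finset.prod_congr rfl fun i _ => Finset.prod_congr rfl fun r _ => by ring
  have sw3 : ∏ k ∈ Finset.range (N+1), ∏ j : Fin n, ((1+(k:ℝ)) + β j * t)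
      = ∏ j, ∏ r ∈ Finset.range (N+1), ((1 + β j * t) + (r:ℝ)) := by
    rw [Finset.prod_comm]
    exact Finset.prod_congr rfl fun j _ => Finset.prod_congr rfl fun r _ => by ring
  have e4 : ∏ k ∈ Finset.range (N+1), myRho lam α β (1 + (k:ℝ)) t
      = (∏ i, ∏ j, ∏ r ∈ Finset.range (N+1), ((1 + lam i j * t) + (r:ℝ)))^2 /
        ((∏ i, ∏ r ∈ Finset.range (N+1), ((1 + α i * t) + (r:ℝ))) *
          ∏ j, ∏ r ∈ Finset.range (N+1), ((1 + β j * t) + (r:ℝ))) := by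
    unfold myRho
    rw [Finset.prod_div_distrib, Finset.prod_mul_distrib, Finset.prod_pow, sw1, sw2, sw3]
  rw [e1, e2, e3', e4]
  set PA := ∏ i, ∏ r ∈ Finset.range (N+1), ((1 + α i * t) + (r:ℝ)) with hPA
  set PB := ∏ j, ∏ r ∈ Finset.range (N+1), ((1 + β j * t) + (r:ℝ)) with hPB
  set PL := ∏ i, ∏ j, ∏ r ∈ Finset.range (N+1), ((1 + lam i j * t) + (r:ℝ)) with hPL
  have hPApos : 0 < PA := Finset.prod_pos fun i _ => hPpos (α i) (hαnn i)
  have hPBpos : 0 < PB := Finset.prod_pos fun j _ => hPpos (β j) (hβnn j)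
  have hPLpos : 0 < PL :=
    Finset.prod_pos fun i _ => Finset.prod_pos fun j _ => hPpos (lam i j) (hl i j).le
  have hexp : Real.exp (L * ((m:ℝ) + n - 2*(m*n)))
      = Real.exp (L * ((m:ℝ) + S*t)) * Real.exp (L * ((n:ℝ) + S*t)) /
        Real.exp (L * (((m*n:ℕ):ℝ) + S*t))^2 := by
    rw [sq, ← Real.exp_add, ← Real.exp_add, eq_div_iff (Real.exp_ne_zero _), ← Real.exp_add]
    congr 1
    push_cast
    ring
  rw [hexp]
  have h1 : Real.exp (L * ((m:ℝ) + S*t)) ≠ 0 := Real.exp_ne_zero _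
  have h2 : Real.exp (L * ((n:ℝ) + S*t)) ≠ 0 := Real.exp_ne_zero _
  have h3 : Real.exp (L * (((m*n:ℕ):ℝ) + S*t)) ≠ 0 := Real.exp_ne_zero _
  field_simp
  rw [hL, hF]
  ring_nf

end GS

section Key
variable {m n : ℕ} {lam : Fin m → Fin n → ℝ} {α : Fin m → ℝ} {β : Fin n → ℝ}

lemma myG_tendsto (hα : ∀ i, α i = ∑ j, lam i j) (hβ : ∀ j, β j = ∑ i, lam i j)
    (hl : ∀ i j, 0 < lam i j) {t : ℝ} (ht : 0 ≤ t) :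
    Tendsto (fun N => ((∏ i, Real.GammaSeq (1 + α i * t) N) *
        ∏ j, Real.GammaSeq (1 + β j * t) N) /
      (∏ i, ∏ j, Real.GammaSeq (1 + lam i j * t) N) ^ 2) atTop
      (nhds (((∏ i, Real.Gamma (1 + α i * t)) * ∏ j, Real.Gamma (1 + β j * t)) /
        (∏ i, ∏ j, Real.Gamma (1 + lam i j * t)) ^ 2)) := by
  have hden : (∏ i, ∏ j, Real.Gamma (1 + lam i j * t)) ^ 2 ≠ 0 := by
    refine ne_of_gt (pow_pos (Finset.prod_pos fun i _ => Finset.prod_pos fun j _ => ?_) 2)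
    exact Real.Gamma_pos_of_pos (by nlinarith [hl i j, mul_nonneg (hl i j).le ht])
  exact Tendsto.div
    ((tendsto_finset_prod _ fun i _ => Real.GammaSeq_tendsto_Gamma _).mul
      (tendsto_finset_prod _ fun j _ => Real.GammaSeq_tendsto_Gamma _))
    ((tendsto_finset_prod _ fun i _ =>
        tendsto_finset_prod _ fun j _ => Real.GammaSeq_tendsto_Gamma _).pow 2) hden

lemma myKey (hm : 0 < m) (hn : 0 < n)
    (hα : ∀ i, α i = ∑ j, lam i j) (hβ : ∀ j, β j = ∑ i, lam i j)
    (hl : ∀ i j, 0 < lam i j) {t1 t2 : ℝ} (h1 : 0 ≤ t1) (h12 : t1 ≤ t2) :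
    (((∏ i, Real.Gamma (1 + α i * t1)) * ∏ j, Real.Gamma (1 + β j * t1)) /
        (∏ i, ∏ j, Real.Gamma (1 + lam i j * t1)) ^ 2) * myRho lam α β 1 t2 ≤
    (((∏ i, Real.Gamma (1 + α i * t2)) * ∏ j, Real.Gamma (1 + β j * t2)) /
        (∏ i, ∏ j, Real.Gamma (1 + lam i j * t2)) ^ 2) * myRho lam α β 1 t1 := by
  have h2 : 0 ≤ t2 := h1.trans h12
  refine le_of_tendsto_of_tendsto
    ((myG_tendsto hα hβ hl h1).mul_const (myRho lam α β 1 t2))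
    ((myG_tendsto hα hβ hl h2).mul_const (myRho lam α β 1 t1)) ?_
  filter_upwards [eventually_gt_atTop 0] with N hN
  rw [myG_eq hα hβ hl h1 hN, myG_eq hα hβ hl h2 hN]
  have hR1 : 0 < myRho lam α β 1 t1 := myRho_pos hm hn hα hβ one_pos hl h1
  have hR2 : 0 < myRho lam α β 1 t2 := myRho_pos hm hn hα hβ one_pos hl h2
  have hW : (∏ k ∈ Finset.range (N+1), myRho lam α β (1 + (k:ℝ)) t1) * myRho lam α β 1 t2 ≤
      (∏ k ∈ Finset.range (N+1), myRho lam α β (1 + (k:ℝ)) t2) * myRho lam α β 1 t1 := by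
    rw [Finset.prod_range_succ', Finset.prod_range_succ']
    simp only [Nat.cast_zero, add_zero, Nat.cast_add, Nat.cast_one]
    have hT := myProdMono (ι := ℕ) (S := Set.Ici 0) (Finset.range N)
      (f := fun k x => myRho lam α β (1 + ((k:ℝ) + 1)) x)
      (fun k _ => myRho_mono hm hn hα hβ (by positivity) hl)
      (fun k _ x hx => (myRho_pos hm hn hα hβ (by positivity) hl hx).le)
      (Set.mem_Ici.2 h1) (Set.mem_Ici.2 h2) h12
    simp only at hT
    have key := mul_le_mul_of_nonneg_right hT
      (mul_nonneg hR1.le hR2.le)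
    nlinarith [key]
  have hC : (0:ℝ) ≤ Real.exp (Real.log N * ((m:ℝ) + n - 2*(m*n))) *
      ((Nat.factorial N : ℕ) : ℝ)^(m+n) / ((Nat.factorial N : ℕ) : ℝ)^(2*(m*n)) := by
    positivity
  calc _ = (Real.exp (Real.log N * ((m:ℝ) + n - 2*(m*n))) *
      ((Nat.factorial N : ℕ) : ℝ)^(m+n) / ((Nat.factorial N : ℕ) : ℝ)^(2*(m*n))) *
      ((∏ k ∈ Finset.range (N+1), myRho lam α β (1 + (k:ℝ)) t1) * myRho lam α β 1 t2) := by
        ring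
  _ ≤ (Real.exp (Real.log N * ((m:ℝ) + n - 2*(m*n))) *
      ((Nat.factorial N : ℕ) : ℝ)^(m+n) / ((Nat.factorial N : ℕ) : ℝ)^(2*(m*n))) *
      ((∏ k ∈ Finset.range (N+1), myRho lam α β (1 + (k:ℝ)) t2) * myRho lam α β 1 t1) :=
        mul_le_mul_of_nonneg_left hW hC
  _ = _ := by ring

end Key

theorem ratio_gamma_rho_two_increasing_image
    (m n : ℕ) (hm : 0 < m) (hn : 0 < n) (hmn : 2 ≤ m ∨ 2 ≤ n)
    (lam : Fin m → Fin n → ℝ) (hlam : ∀ i j, 0 < lam i j)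
    (α : Fin m → ℝ) (hα : ∀ i, α i = ∑ j : Fin n, lam i j)
    (β : Fin n → ℝ) (hβ : ∀ j, β j = ∑ i : Fin m, lam i j)
    (f : ℝ → ℝ)
    (hf : ∀ t, f t =
      ((∏ i : Fin m, Real.Gamma (1 + α i * t)) * ∏ j : Fin n, Real.Gamma (1 + β j * t)) /
        (∏ i : Fin m, ∏ j : Fin n, Real.Gamma (1 + lam i j * t)) ^ 2) :
    StrictMonoOn f (Set.Ioi 0) ∧
      Tendsto f (nhdsWithin 0 (Set.Ioi 0)) (nhds 1) ∧
      Tendsto f atTop atTop ∧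
      f '' Set.Ioi 0 = Set.Ioi 1 := by
  have hαnn : ∀ i, 0 ≤ α i := fun i => by
    rw [hα]; exact Finset.sum_nonneg fun j _ => (hlam i j).le
  have hβnn : ∀ j, 0 ≤ β j := fun j => by
    rw [hβ]; exact Finset.sum_nonneg fun i _ => (hlam i j).le
  -- positivity of f on [0,∞)
  have fpos : ∀ t : ℝ, 0 ≤ t → 0 < f t := by
    intro t ht
    rw [hf t]
    have g1 : ∀ i : Fin m, 0 < Real.Gamma (1 + α i * t) := fun i =>
      Real.Gamma_pos_of_pos (by nlinarith [mul_nonneg (hαnn i) ht])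
    have g2 : ∀ j : Fin n, 0 < Real.Gamma (1 + β j * t) := fun j =>
      Real.Gamma_pos_of_pos (by nlinarith [mul_nonneg (hβnn j) ht])
    have g3 : ∀ i j, 0 < Real.Gamma (1 + lam i j * t) := fun i j =>
      Real.Gamma_pos_of_pos (by nlinarith [mul_nonneg (hlam i j).le ht])
    exact div_pos (mul_pos (Finset.prod_pos fun i _ => g1 i)
      (Finset.prod_pos fun j _ => g2 j))
      (pow_pos (Finset.prod_pos fun i _ => Finset.prod_pos fun j _ => g3 i j) 2)
  -- key inequality
  have K : ∀ {t1 t2 : ℝ}, 0 ≤ t1 → t1 ≤ t2 →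
      f t1 * myRho lam α β 1 t2 ≤ f t2 * myRho lam α β 1 t1 := by
    intro t1 t2 h1 h12
    rw [hf t1, hf t2]
    exact myKey hm hn hα hβ hlam h1 h12
  -- strict monotonicity on Ici 0
  have strictIci : StrictMonoOn f (Set.Ici 0) := by
    intro t1 h1 t2 h2 h12
    simp only [Set.mem_Ici] at h1 h2
    have hk := K h1 h12.le
    have hρ : myRho lam α β 1 t1 < myRho lam α β 1 t2 :=
      myRho_strict hm hn hmn hα hβ one_pos hlam (Set.mem_Ici.2 h1) (Set.mem_Ici.2 h2) h12
    have hR2 : 0 < myRho lam α β 1 t2 := myRho_pos hm hn hα hβ one_pos hlam h2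
    have h' : f t1 * myRho lam α β 1 t2 < f t2 * myRho lam α β 1 t2 :=
      lt_of_le_of_lt hk (mul_lt_mul_of_pos_left hρ (fpos t2 h2))
    exact lt_of_mul_lt_mul_right h' hR2.le
  have f0 : f 0 = 1 := by
    rw [hf 0]
    simp [Real.Gamma_one]
  -- continuity
  have hcont : ∀ t : ℝ, 0 ≤ t → ContinuousAt f t := by
    intro t ht
    have hfe : f = fun t =>
        ((∏ i : Fin m, Real.Gamma (1 + α i * t)) * ∏ j : Fin n, Real.Gamma (1 + β j * t)) /
          (∏ i : Fin m, ∏ j : Fin n, Real.Gamma (1 + lam i j * t)) ^ 2 := funext hf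
    rw [hfe]
    have hG : ∀ c : ℝ, 0 ≤ c → ContinuousAt (fun x : ℝ => Real.Gamma (1 + c * x)) t := by
      intro c hc
      have hpos : (0:ℝ) < 1 + c * t := by nlinarith [mul_nonneg hc ht]
      have hne : ∀ k : ℕ, (1 + c * t) ≠ -(k:ℝ) := by
        intro k
        have hk0 : -(k:ℝ) ≤ 0 := neg_nonpos.2 (Nat.cast_nonneg k)
        exact ne_of_gt (lt_of_le_of_lt hk0 hpos)
      have hinner : ContinuousAt (fun x : ℝ => 1 + c * x) t := by fun_prop
      have hcomp := ContinuousAt.comp (x := t) (g := Real.Gamma)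
        (f := fun x : ℝ => 1 + c * x)
        (Real.differentiableAt_Gamma hne).continuousAt hinner
      exact hcomp
    have hnum : ContinuousAt (fun x : ℝ =>
        (∏ i : Fin m, Real.Gamma (1 + α i * x)) * ∏ j : Fin n, Real.Gamma (1 + β j * x)) t :=
      ContinuousAt.mul
        (tendsto_finset_prod _ fun i _ => hG (α i) (hαnn i))
        (tendsto_finset_prod _ fun j _ => hG (β j) (hβnn j))
    have hden : ContinuousAt (fun x : ℝ =>
        (∏ i : Fin m, ∏ j : Fin n, Real.Gamma (1 + lam i j * x)) ^ 2) t :=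
      ContinuousAt.pow (tendsto_finset_prod _ fun i _ =>
        tendsto_finset_prod _ fun j _ => hG (lam i j) (hlam i j).le) 2
    have hdne : (∏ i : Fin m, ∏ j : Fin n, Real.Gamma (1 + lam i j * t)) ^ 2 ≠ 0 := by
      refine ne_of_gt (pow_pos (Finset.prod_pos fun i _ => Finset.prod_pos fun j _ => ?_) 2)
      exact Real.Gamma_pos_of_pos (by nlinarith [mul_nonneg (hlam i j).le ht])
    exact hnum.div hden hdne
  -- limit at 0+
  have tend0 : Tendsto f (nhdsWithin 0 (Set.Ioi 0)) (nhds 1) := by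
    have h2 : Tendsto f (nhdsWithin 0 (Set.Ioi 0)) (nhds (f 0)) :=
      (hcont 0 le_rfl).continuousWithinAt (s := Set.Ioi 0)
    rwa [f0] at h2
  -- limit at infinity
  have tendTop : Tendsto f atTop atTop := by
    obtain ⟨ε, hε, hgr⟩ := myRho_growth hm hn hmn hα hβ hlam
    have hρ1 : 0 < myRho lam α β 1 1 := myRho_pos hm hn hα hβ one_pos hlam zero_le_one
    have hf1 : 0 < f 1 := fpos 1 zero_le_one
    refine tendsto_atTop_mono' atTop ?_
      (Tendsto.const_mul_atTop (div_pos hf1 hρ1)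
        (Tendsto.const_mul_atTop hε tendsto_id))
    filter_upwards [eventually_ge_atTop (1:ℝ)] with t ht
    have hk := K zero_le_one ht
    have hρt := hgr t ht
    -- f 1 * ρ t ≤ f t * ρ 1  and  ε t ≤ ρ t
    have hft : 0 < f t := fpos t (by linarith)
    simp only [id_eq]
    rw [div_mul_eq_mul_div, div_le_iff₀ hρ1]
    calc f 1 * (ε * t) ≤ f 1 * myRho lam α β 1 t := by nlinarith
    _ ≤ f t * myRho lam α β 1 1 := hk
  -- image
  have himage : f '' Set.Ioi 0 = Set.Ioi 1 := by
    ext y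
    simp only [Set.mem_image, Set.mem_Ioi]
    constructor
    · rintro ⟨t, ht, rfl⟩
      have := strictIci Set.self_mem_Ici (Set.mem_Ici.2 ht.le) ht
      rwa [f0] at this
    · intro hy
      have h1 : ∀ᶠ a in nhdsWithin 0 (Set.Ioi 0), f a < y := tend0.eventually_lt_const hy
      obtain ⟨a, hay, haI⟩ := (h1.and eventually_mem_nhdsWithin).exists
      have h2 : ∀ᶠ b in atTop, y ≤ f b ∧ a ≤ b :=
        (tendTop.eventually_ge_atTop y).and (eventually_ge_atTop a)
      obtain ⟨b, hyb, hab⟩ := h2.exists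
      have ha0 : (0:ℝ) < a := haI
      have hcontOn : ContinuousOn f (Set.Icc a b) := fun x hx =>
        (hcont x (ha0.le.trans hx.1)).continuousWithinAt
      have hmem : y ∈ Set.Icc (f a) (f b) := ⟨hay.le, hyb⟩
      obtain ⟨t, htIcc, hty⟩ := intermediate_value_Icc hab hcontOn hmem
      exact ⟨t, lt_of_lt_of_le ha0 htIcc.1, hty⟩
  exact ⟨strictIci.mono Set.Ioi_subset_Ici_self, tend0, tendTop, himage⟩
end

section
/- Let m, n be positive integers, λ_{ij} > 0 for 1 ≤ i ≤ m, 1 ≤ j ≤ n, α_i = ∑_{j=1}^n λ_{ij}, β_j = ∑_{i=1}^m λ_{ij}, and ρ ∈ ℝ. Then for every t > 0 the second derivative of ln f at t, where f(t) = [∏_{i=1}^m Γ(1+α_i t) · ∏_{j=1}^n Γ(1+β_j t)] / [∏_{i=1}^m ∏_{j=1}^n Γ(1+λ_{ij} t)]^ρ, admits the integral representation (ln f)''(t) = ∫₀^∞ u · ( ∑_{i=1}^m 1/(e^{u/α_i} − 1) + ∑_{j=1}^n 1/(e^{u/β_j} − 1) − ρ ∑_{i=1}^m ∑_{j=1}^n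 1/(e^{u/λ_{ij}} − 1) ) · e^{−tu} du. -/
open Finset MeasureTheory

open Filter Topology Set

namespace DigammaAux

noncomputable def seq (x : ℝ) (n : ℕ) : ℝ :=
  Real.log n - ∑ k ∈ Finset.range (n + 1), 1 / (x + k)

noncomputable def dig (x : ℝ) : ℝ := limUnder atTop (seq x)

noncomputable def trig (x : ℝ) : ℝ := ∑' k : ℕ, 1 / (x + k) ^ 2

lemma summable_sq : Summable (fun k : ℕ => 1 / ((k : ℝ) + 1) ^ 2) := by
  have := (summable_nat_add_iff (f := fun n : ℕ => 1 / (n : ℝ) ^ 2) 1).mpr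
    (Real.summable_one_div_nat_pow.mpr one_lt_two)
  simpa [Nat.cast_add] using this

lemma min_mul_le {a : ℝ} (ha : 0 < a) (k : ℕ) : min a 1 * ((k : ℝ) + 1) ≤ a + k := by
  have hk : (0:ℝ) ≤ (k:ℝ) := Nat.cast_nonneg k
  rcases le_total a 1 with h | h
  · rw [min_eq_left h]; nlinarith
  · rw [min_eq_right h]; nlinarith

/-- summability of `1/(k+1) - 1/(x+k+1)` -/
lemma summable_h {x : ℝ} (hx : 0 < x) :
    Summable (fun k : ℕ => 1 / ((k : ℝ) + 1) - 1 / (x + (k + 1))) := by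
  have key : ∀ k : ℕ, 1 / ((k : ℝ) + 1) - 1 / (x + (k + 1)) ≤ x * (1 / ((k : ℝ) + 1) ^ 2) := by
    intro k
    have h1 : (0:ℝ) < (k : ℝ) + 1 := by positivity
    have h2 : (0:ℝ) < x + ((k : ℝ) + 1) := by positivity
    rw [div_sub_div _ _ h1.ne' h2.ne', div_le_iff₀ (by positivity)]
    have hx2 : ((k:ℝ)+1) ≤ x + ((k:ℝ)+1) := by linarith
    have expand : x * (1 / ((k : ℝ) + 1) ^ 2) * (((k:ℝ) + 1) * (x + ((k:ℝ)+1)))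
        = x * ((x + ((k:ℝ)+1)) / ((k:ℝ)+1)) := by
      field_simp
    rw [expand]
    have h3 : (1:ℝ) ≤ (x + ((k:ℝ)+1)) / (((k:ℝ))+1) := by
      rw [le_div_iff₀ h1]; linarith
    nlinarith
  have nonneg : ∀ k : ℕ, 0 ≤ 1 / ((k : ℝ) + 1) - 1 / (x + (k + 1)) := by
    intro k
    have h1 : (0:ℝ) < (k : ℝ) + 1 := by positivity
    rw [sub_nonneg]
    exact one_div_le_one_div_of_le h1 (by linarith)
  exact Summable.of_nonneg_of_le nonneg key (summable_sq.mul_left x)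

lemma harmonic_cast (n : ℕ) : (harmonic n : ℝ) = ∑ k ∈ Finset.range n, 1 / ((k : ℝ) + 1) := by
  rw [harmonic, Rat.cast_sum]
  exact Finset.sum_congr rfl fun k _ => by push_cast; rw [one_div]

lemma seq_eq {x : ℝ} (n : ℕ) :
    seq x n = (∑ k ∈ Finset.range n, (1 / ((k : ℝ) + 1) - 1 / (x + (k + 1))))
      - ((harmonic n : ℝ) - Real.log n) - 1 / x := by
  unfold seq
  rw [Finset.sum_range_succ', Finset.sum_sub_distrib, harmonic_cast]
  push_cast
  ring

lemma tendsto_seq {x : ℝ} (hx : 0 < x) :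
    Tendsto (seq x) atTop
      (𝓝 ((∑' k : ℕ, (1 / ((k : ℝ) + 1) - 1 / (x + (k + 1))))
        - Real.eulerMascheroniConstant - 1 / x)) := by
  have h1 := (summable_h hx).hasSum.tendsto_sum_nat
  have h2 := Real.tendsto_harmonic_sub_log
  have := (h1.sub h2).sub (tendsto_const_nhds (x := 1 / x))
  exact this.congr fun n => (seq_eq n).symm

lemma tendsto_seq_dig {x : ℝ} (hx : 0 < x) : Tendsto (seq x) atTop (𝓝 (dig x)) := by
  have h := tendsto_seq hx
  rwa [dig, h.limUnder_eq]


noncomputable def Gn (n : ℕ) (y : ℝ) : ℝ :=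
  y * Real.log n + Real.log (Nat.factorial n) - ∑ k ∈ Finset.range (n + 1), Real.log (y + k)

lemma GammaSeq_pos {y : ℝ} (hy : 0 < y) {n : ℕ} (hn : 1 ≤ n) : 0 < Real.GammaSeq y n := by
  unfold Real.GammaSeq
  have h1 : (0:ℝ) < (n:ℝ) ^ y := Real.rpow_pos_of_pos (by exact_mod_cast hn) y
  have h2 : (0:ℝ) < ∏ j ∈ Finset.range (n+1), (y + j) := by
    apply Finset.prod_pos
    intro j _
    positivity
  positivity

lemma Gn_eq {y : ℝ} (hy : 0 < y) {n : ℕ} (hn : 1 ≤ n) :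
    Gn n y = Real.log (Real.GammaSeq y n) := by
  have hn0 : (0:ℝ) < (n:ℝ) := by exact_mod_cast hn
  have h1 : (0:ℝ) < (n:ℝ) ^ y := Real.rpow_pos_of_pos hn0 y
  have hfac : (0:ℝ) < (Nat.factorial n : ℝ) := by exact_mod_cast Nat.factorial_pos n
  have h2 : (0:ℝ) < ∏ j ∈ Finset.range (n+1), (y + j) := by
    apply Finset.prod_pos; intro j _; positivity
  rw [Real.GammaSeq, Real.log_div (by positivity) h2.ne', Real.log_mul h1.ne' hfac.ne',
    Real.log_rpow hn0, Real.log_prod (fun j _ => by positivity)]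
  rfl

lemma tendsto_Gn {y : ℝ} (hy : 0 < y) :
    Tendsto (fun n => Gn n y) atTop (𝓝 (Real.log (Real.Gamma y))) := by
  have h := (Real.GammaSeq_tendsto_Gamma y).log (Real.Gamma_pos_of_pos hy).ne'
  apply h.congr'
  filter_upwards [eventually_ge_atTop 1] with n hn
  exact (Gn_eq hy hn).symm

lemma hasDerivAt_Gn {y : ℝ} (hy : 0 < y) (n : ℕ) :
    HasDerivAt (Gn n) (seq y n) y := by
  have hsum : HasDerivAt (fun y : ℝ => ∑ k ∈ Finset.range (n+1), Real.log (y + k))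
      (∑ k ∈ Finset.range (n+1), 1 / (y + k)) y := by
    apply HasDerivAt.fun_sum
    intro k _
    have hk : (0:ℝ) < y + k := by positivity
    have := (Real.hasDerivAt_log hk.ne').comp y ((hasDerivAt_id y).add_const (k:ℝ))
    simpa [one_div, neg_div, Function.comp_def] using this
  have h1 : HasDerivAt (fun y : ℝ => y * Real.log n + Real.log (Nat.factorial n)) (Real.log n) y :=
    (hasDerivAt_mul_const (Real.log n)).add_const _
  exact h1.fun_sub hsum

lemma hasDerivAt_seq {y : ℝ} (hy : 0 < y) (n : ℕ) :
    HasDerivAt (fun y => seq y n) (∑ k ∈ Finset.range (n+1), 1 / (y + k) ^ 2) y := by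
  have hsum : HasDerivAt (fun y : ℝ => ∑ k ∈ Finset.range (n+1), 1 / (y + k))
      (∑ k ∈ Finset.range (n+1), -(1 / (y + k) ^ 2)) y := by
    apply HasDerivAt.fun_sum
    intro k _
    have hk : (0:ℝ) < y + k := by positivity
    have := ((hasDerivAt_id y).add_const (k:ℝ)).fun_inv hk.ne'
    simpa [one_div, neg_div] using this
  have h1 : HasDerivAt (fun _ : ℝ => Real.log n) 0 y := hasDerivAt_const y _
  have := h1.fun_sub hsum
  simpa [seq, Finset.sum_neg_distrib] using this


lemma tuo_succ {F : ℕ → ℝ → ℝ} {g : ℝ → ℝ} {s : Set ℝ}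
    (h : TendstoUniformlyOn F g atTop s) :
    TendstoUniformlyOn (fun n => F (n + 1)) g atTop s :=
  fun u hu => (tendsto_add_atTop_nat 1).eventually (h u hu)

lemma hk_nonneg {a y : ℝ} (ha : 0 < a) (hay : a ≤ y) (k : ℕ) :
    0 ≤ 1 / (a + k) - 1 / (y + k) := by
  have h1 : (0:ℝ) < a + k := by positivity
  rw [sub_nonneg]
  exact one_div_le_one_div_of_le h1 (by linarith)

lemma hk_le {a y b : ℝ} (ha : 0 < a) (hay : a ≤ y) (hyb : y ≤ b) (k : ℕ) :
    1 / (a + k) - 1 / (y + k) ≤ (b - a) * ((min a 1)⁻¹ ^ 2 * (1 / ((k:ℝ) + 1) ^ 2)) := by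
  set M := min a 1 with hM_def
  have hM : 0 < M := lt_min ha one_pos
  have hk0 : (0:ℝ) ≤ (k:ℝ) := Nat.cast_nonneg k
  have h1 : (0:ℝ) < a + k := by positivity
  have h2 : (0:ℝ) < y + k := by linarith
  have hMk : M * ((k:ℝ)+1) ≤ a + k := min_mul_le ha k
  have hMk' : (0:ℝ) < M * ((k:ℝ)+1) := by positivity
  have key : 1 / (a + k) - 1 / (y + k) = (y - a) / ((a + k) * (y + k)) := by
    field_simp
    ring
  rw [key]
  have step1 : (y - a) / ((a + k) * (y + k)) ≤ (b - a) / ((M * ((k:ℝ)+1)) ^ 2) := by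
    apply div_le_div₀ (by linarith) (by linarith) (by positivity)
    nlinarith
  refine step1.trans_eq ?_
  have hrw : (M⁻¹) ^ 2 * (1 / ((k:ℝ) + 1) ^ 2) = ((M * ((k:ℝ)+1)) ^ 2)⁻¹ := by
    rw [mul_pow, one_div, inv_pow, ← mul_inv]
  rw [hrw, div_eq_mul_inv]

lemma dig_decomp {a y : ℝ} (ha : 0 < a) (hay : a ≤ y) :
    dig y = dig a + ∑' k : ℕ, (1 / (a + k) - 1 / (y + k)) := by
  have hy : 0 < y := lt_of_lt_of_le ha hay
  have hsum : Summable (fun k : ℕ => 1 / (a + (k:ℝ)) - 1 / (y + k)) := by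
    apply Summable.of_nonneg_of_le (hk_nonneg ha hay) (hk_le ha hay le_rfl)
    exact (summable_sq.mul_left _).mul_left _
  have decomp : ∀ n : ℕ, seq y n = seq a n + ∑ k ∈ Finset.range (n+1), (1 / (a + k) - 1 / (y + k)) := by
    intro n
    unfold seq
    rw [Finset.sum_sub_distrib]
    ring
  have t1 : Tendsto (fun n => seq a n + ∑ k ∈ Finset.range (n+1), (1 / (a + (k:ℝ)) - 1 / (y + k)))
      atTop (𝓝 (dig a + ∑' k : ℕ, (1 / (a + (k:ℝ)) - 1 / (y + k)))) := by
    apply (tendsto_seq_dig ha).add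
    exact (hsum.hasSum.tendsto_sum_nat).comp (tendsto_add_atTop_nat 1)
  have t2 : Tendsto (fun n => seq a n + ∑ k ∈ Finset.range (n+1), (1 / (a + (k:ℝ)) - 1 / (y + k)))
      atTop (𝓝 (dig y)) := by
    apply (tendsto_seq_dig hy).congr
    intro n; rw [decomp n]
  exact tendsto_nhds_unique t2 t1

lemma tlu_level1 : TendstoLocallyUniformlyOn (fun (n : ℕ) (y : ℝ) => seq y n) dig atTop (Ioi 0) := by
  rw [tendstoLocallyUniformlyOn_iff_forall_isCompact isOpen_Ioi]
  intro K hK hKc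
  rcases K.eq_empty_or_nonempty with rfl | hne
  · exact tendstoUniformlyOn_empty
  have hbdd := hKc.bddBelow
  have hbdd' := hKc.bddAbove
  set a := sInf K with ha_def
  set b := sSup K with hb_def
  have haK : a ∈ K := hKc.sInf_mem hne
  have ha : 0 < a := hK haK
  have hsub : ∀ y ∈ K, a ≤ y := fun y hy => csInf_le hbdd hy
  have hsub' : ∀ y ∈ K, y ≤ b := fun y hy => le_csSup hbdd' hy
  have hu : Summable (fun k : ℕ => (b - a) * ((min a 1)⁻¹ ^ 2 * (1 / ((k:ℝ) + 1) ^ 2))) :=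
    (summable_sq.mul_left _).mul_left _
  have base : TendstoUniformlyOn
      (fun (n : ℕ) (y : ℝ) => ∑ k ∈ Finset.range n, (1 / (a + k) - 1 / (y + k)))
      (fun y => ∑' k : ℕ, (1 / (a + (k:ℝ)) - 1 / (y + k))) atTop K := by
    apply tendstoUniformlyOn_tsum_nat hu
    intro k y hy
    rw [Real.norm_eq_abs, abs_of_nonneg (hk_nonneg ha (hsub y hy) k)]
    exact hk_le ha (hsub y hy) (hsub' y hy) k
  have comb : TendstoUniformlyOn
      (fun (n : ℕ) (y : ℝ) => seq a n + ∑ k ∈ Finset.range (n+1), (1 / (a + k) - 1 / (y + k)))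
      (fun y => dig a + ∑' k : ℕ, (1 / (a + (k:ℝ)) - 1 / (y + k))) atTop K :=
    ((tendsto_seq_dig ha).tendstoUniformlyOn_const K).add (tuo_succ base)
  have comb2 := comb.congr (F' := fun (n : ℕ) (y : ℝ) => seq y n)
    (Eventually.of_forall fun n y _ => by
      dsimp only; simp only [seq]; rw [Finset.sum_sub_distrib]; ring)
  apply comb2.congr_right
  intro y hy
  exact (dig_decomp ha (hsub y hy)).symm

lemma tlu_level2 : TendstoLocallyUniformlyOn
    (fun (n : ℕ) (y : ℝ) => ∑ k ∈ Finset.range (n+1), 1 / (y + k) ^ 2) trig atTop (Ioi 0) := by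
  rw [tendstoLocallyUniformlyOn_iff_forall_isCompact isOpen_Ioi]
  intro K hK hKc
  rcases K.eq_empty_or_nonempty with rfl | hne
  · exact tendstoUniformlyOn_empty
  have hbdd := hKc.bddBelow
  set a := sInf K with ha_def
  have haK : a ∈ K := hKc.sInf_mem hne
  have ha : 0 < a := hK haK
  have hsub : ∀ y ∈ K, a ≤ y := fun y hy => csInf_le hbdd hy
  set M := min a 1 with hM_def
  have hM : 0 < M := lt_min ha one_pos
  have hu : Summable (fun k : ℕ => M⁻¹ ^ 2 * (1 / ((k:ℝ) + 1) ^ 2)) := summable_sq.mul_left _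
  have base : TendstoUniformlyOn
      (fun (n : ℕ) (y : ℝ) => ∑ k ∈ Finset.range n, 1 / (y + k) ^ 2)
      (fun y => ∑' k : ℕ, 1 / (y + (k:ℝ)) ^ 2) atTop K := by
    apply tendstoUniformlyOn_tsum_nat hu
    intro k y hy
    have hay := hsub y hy
    have hy0 : (0:ℝ) < y := hK hy
    have hyk : (0:ℝ) < y + k := by positivity
    have hMk : M * ((k:ℝ)+1) ≤ y + k := (min_mul_le ha k).trans (by linarith)
    have hMk' : (0:ℝ) < M * ((k:ℝ)+1) := by positivity
    rw [Real.norm_eq_abs, abs_of_nonneg (by positivity)]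
    have step : 1 / (y + (k:ℝ)) ^ 2 ≤ 1 / (M * ((k:ℝ)+1)) ^ 2 := by
      apply one_div_le_one_div_of_le (by positivity)
      nlinarith
    refine step.trans_eq ?_
    have hrw : (M⁻¹) ^ 2 * (1 / ((k:ℝ) + 1) ^ 2) = ((M * ((k:ℝ)+1)) ^ 2)⁻¹ := by
      rw [mul_pow, one_div, inv_pow, ← mul_inv]
    rw [hrw, one_div]
  exact tuo_succ base

lemma hasDerivAt_logGamma {x : ℝ} (hx : 0 < x) :
    HasDerivAt (fun y => Real.log (Real.Gamma y)) (dig x) x :=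
  hasDerivAt_of_tendstoLocallyUniformlyOn isOpen_Ioi tlu_level1
    (Eventually.of_forall fun n y hy => hasDerivAt_Gn hy n) (fun _ hy => tendsto_Gn hy) hx

lemma hasDerivAt_dig {x : ℝ} (hx : 0 < x) : HasDerivAt dig (trig x) x :=
  hasDerivAt_of_tendstoLocallyUniformlyOn isOpen_Ioi tlu_level2
    (Eventually.of_forall fun n y hy => hasDerivAt_seq hy n) (fun _ hy => tendsto_seq_dig hy) hx


lemma base_integrable : IntegrableOn (fun v : ℝ => v * Real.exp (-v)) (Ioi 0) := by
  have h := Real.GammaIntegral_convergent (s := 2) two_pos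
  apply h.congr_fun ?_ measurableSet_Ioi
  intro x hx
  dsimp only
  rw [show (2:ℝ) - 1 = 1 by norm_num, Real.rpow_one]
  ring

lemma base_integral : ∫ v in Ioi (0:ℝ), v * Real.exp (-v) = 1 := by
  have h := Real.Gamma_eq_integral (s := 2) two_pos
  rw [Real.Gamma_two] at h
  calc ∫ v in Ioi (0:ℝ), v * Real.exp (-v)
      = ∫ x in Ioi (0:ℝ), Real.exp (-x) * x ^ ((2:ℝ) - 1) := by
        apply setIntegral_congr_fun measurableSet_Ioi
        intro x hx
        dsimp only
        rw [show (2:ℝ) - 1 = 1 by norm_num, Real.rpow_one]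
        ring
    _ = 1 := h.symm

lemma integrable_mul_exp {c : ℝ} (hc : 0 < c) :
    IntegrableOn (fun u : ℝ => u * Real.exp (-c * u)) (Ioi 0) := by
  have h2 := (integrableOn_Ioi_comp_mul_left_iff (fun v : ℝ => v * Real.exp (-v)) 0 hc).mpr
    (by rw [mul_zero]; exact base_integrable)
  have h3 : IntegrableOn (fun u : ℝ => c⁻¹ * ((c * u) * Real.exp (-(c * u)))) (Ioi 0) :=
    h2.const_mul c⁻¹
  apply h3.congr_fun ?_ measurableSet_Ioi
  intro u hu
  dsimp only
  rw [neg_mul]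
  field_simp

lemma integral_mul_exp {c : ℝ} (hc : 0 < c) :
    ∫ u in Ioi (0:ℝ), u * Real.exp (-c * u) = 1 / c ^ 2 := by
  have h := integral_comp_mul_left_Ioi (fun v : ℝ => v * Real.exp (-v)) 0 hc
  rw [mul_zero, base_integral, smul_eq_mul, mul_one] at h
  calc ∫ u in Ioi (0:ℝ), u * Real.exp (-c * u)
      = ∫ u in Ioi (0:ℝ), c⁻¹ • ((fun v : ℝ => v * Real.exp (-v)) (c * u)) := by
        apply setIntegral_congr_fun measurableSet_Ioi
        intro u hu
        simp only [smul_eq_mul]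
        rw [neg_mul]
        field_simp
    _ = c⁻¹ • ∫ u in Ioi (0:ℝ), (fun v : ℝ => v * Real.exp (-v)) (c * u) := by
        rw [integral_smul]
    _ = c⁻¹ * c⁻¹ := by rw [h]; simp [smul_eq_mul]
    _ = 1 / c ^ 2 := by rw [one_div, ← mul_inv, sq]


lemma exp_sub_one_pos {a u : ℝ} (ha : 0 < a) (hu : 0 < u) : 0 < Real.exp (u / a) - 1 := by
  have h : (0:ℝ) < u / a := by positivity
  have h2 : Real.exp 0 < Real.exp (u / a) := Real.exp_lt_exp.mpr h
  rw [Real.exp_zero] at h2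
  linarith

lemma div_exp_sub_one_le {a u : ℝ} (ha : 0 < a) (hu : 0 < u) :
    u * (1 / (Real.exp (u / a) - 1)) ≤ a := by
  have h1 := exp_sub_one_pos ha hu
  have h2 : u / a + 1 ≤ Real.exp (u / a) := Real.add_one_le_exp _
  rw [mul_one_div, div_le_iff₀ h1]
  have : u / a * a ≤ (Real.exp (u / a) - 1) * a := by
    apply mul_le_mul_of_nonneg_right _ ha.le
    linarith
  rw [div_mul_cancel₀ _ ha.ne'] at this
  linarith [this]

lemma pointwise_tsum {a t u : ℝ} (ha : 0 < a) (hu : 0 < u) :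
    ∑' k : ℕ, u * Real.exp (-(t + (k + 1) / a) * u)
      = u * (1 / (Real.exp (u / a) - 1)) * Real.exp (-t * u) := by
  set r := Real.exp (-(u / a)) with hr_def
  have hr0 : 0 < r := Real.exp_pos _
  have hr1 : r < 1 := by
    rw [hr_def, Real.exp_lt_one_iff]
    have : (0:ℝ) < u / a := by positivity
    linarith
  have hterm : ∀ k : ℕ, u * Real.exp (-(t + (k + 1) / a) * u)
      = (u * Real.exp (-t * u)) * r ^ (k + 1) := by
    intro k
    have h2 : -(t + ((k:ℝ) + 1) / a) * u = -t * u + ((k + 1 : ℕ) : ℝ) * (-(u / a)) := by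
      push_cast
      field_simp
      ring
    rw [h2, Real.exp_add, Real.exp_nat_mul, ← hr_def, mul_assoc]
  calc ∑' k : ℕ, u * Real.exp (-(t + (k + 1) / a) * u)
      = ∑' k : ℕ, (u * Real.exp (-t * u)) * r ^ (k + 1) := by
        exact tsum_congr hterm
    _ = (u * Real.exp (-t * u)) * ∑' k : ℕ, r ^ (k + 1) := by rw [tsum_mul_left]
    _ = (u * Real.exp (-t * u)) * (r * (1 - r)⁻¹) := by
        congr 1
        calc ∑' k : ℕ, r ^ (k + 1) = ∑' k : ℕ, r * r ^ k := by
              exact tsum_congr fun k => by rw [pow_succ]; ring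
          _ = r * ∑' k : ℕ, r ^ k := by rw [tsum_mul_left]
          _ = r * (1 - r)⁻¹ := by rw [tsum_geometric_of_lt_one hr0.le hr1]
    _ = u * (1 / (Real.exp (u / a) - 1)) * Real.exp (-t * u) := by
        have hE : Real.exp (u / a) ≠ 0 := (Real.exp_pos _).ne'
        have hE1 : Real.exp (u / a) - 1 ≠ 0 := (exp_sub_one_pos ha hu).ne'
        have hrE : r = (Real.exp (u / a))⁻¹ := by
          rw [hr_def, ← Real.exp_neg]
        rw [hrE]
        rw [one_div, mul_comm (u * (Real.exp (u / a) - 1)⁻¹)]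
        have : (1 - (Real.exp (u / a))⁻¹)⁻¹ = Real.exp (u / a) / (Real.exp (u / a) - 1) := by
          rw [inv_eq_one_div]
          rw [eq_div_iff hE1]
          field_simp
        rw [this]
        field_simp
lemma summable_inv_c_sq {a t : ℝ} (ha : 0 < a) (ht : 0 < t) :
    Summable (fun k : ℕ => 1 / (t + ((k:ℝ) + 1) / a) ^ 2) := by
  have key : ∀ k : ℕ, 1 / (t + ((k:ℝ) + 1) / a) ^ 2 ≤ a ^ 2 * (1 / ((k:ℝ) + 1) ^ 2) := by
    intro k
    have h2 : (0:ℝ) < ((k:ℝ) + 1) / a := by positivity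
    have h1 : ((k:ℝ) + 1) / a ≤ t + ((k:ℝ) + 1) / a := by linarith
    have step : 1 / (t + ((k:ℝ) + 1) / a) ^ 2 ≤ 1 / (((k:ℝ) + 1) / a) ^ 2 := by
      apply one_div_le_one_div_of_le (by positivity)
      nlinarith
    refine step.trans_eq ?_
    rw [div_pow, one_div, inv_div, mul_one_div]
  exact Summable.of_nonneg_of_le (fun k => by positivity) key (summable_sq.mul_left _)

lemma key_integral {a t : ℝ} (ha : 0 < a) (ht : 0 < t) :
    ∫ u in Ioi (0:ℝ), u * (1 / (Real.exp (u / a) - 1)) * Real.exp (-t * u)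
      = a ^ 2 * trig (1 + a * t) := by
  have hc : ∀ k : ℕ, (0:ℝ) < t + ((k:ℝ) + 1) / a := fun k => by positivity
  have hmeas : ∀ k : ℕ, AEStronglyMeasurable
      (fun u : ℝ => u * Real.exp (-(t + ((k:ℝ) + 1) / a) * u)) (volume.restrict (Ioi 0)) := by
    intro k
    exact (continuous_id.mul (Real.continuous_exp.comp (continuous_const.mul continuous_id)
      )).aestronglyMeasurable
  have hint : ∀ k : ℕ, ∫ u in Ioi (0:ℝ), u * Real.exp (-(t + ((k:ℝ) + 1) / a) * u)
      = 1 / (t + ((k:ℝ) + 1) / a) ^ 2 := fun k => integral_mul_exp (hc k)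
  have hnorm : ∀ k : ℕ, ∫⁻ u in Ioi (0:ℝ), ‖u * Real.exp (-(t + ((k:ℝ) + 1) / a) * u)‖₊
      = ENNReal.ofReal (1 / (t + ((k:ℝ) + 1) / a) ^ 2) := by
    intro k
    rw [show (∫⁻ u in Ioi (0:ℝ), (‖u * Real.exp (-(t + ((k:ℝ) + 1) / a) * u)‖₊ : ENNReal)) = ∫⁻ u in Ioi (0:ℝ), ‖u * Real.exp (-(t + ((k:ℝ) + 1) / a) * u)‖ₑ from rfl,
      ← ofReal_integral_norm_eq_lintegral_enorm (integrable_mul_exp (hc k))]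
    congr 1
    rw [← hint k]
    apply setIntegral_congr_fun measurableSet_Ioi
    intro u hu
    dsimp only
    rw [Real.norm_eq_abs, abs_of_nonneg]
    have hu' : (0:ℝ) < u := hu
    positivity
  have hswap := MeasureTheory.integral_tsum (μ := volume.restrict (Ioi (0:ℝ)))
    (f := fun (k : ℕ) (u : ℝ) => u * Real.exp (-(t + ((k:ℝ) + 1) / a) * u)) hmeas ?_
  · calc ∫ u in Ioi (0:ℝ), u * (1 / (Real.exp (u / a) - 1)) * Real.exp (-t * u)
        = ∫ u in Ioi (0:ℝ), ∑' k : ℕ, u * Real.exp (-(t + ((k:ℝ) + 1) / a) * u) := by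
          apply setIntegral_congr_fun measurableSet_Ioi
          intro u hu
          exact (pointwise_tsum ha hu).symm
      _ = ∑' k : ℕ, ∫ u in Ioi (0:ℝ), u * Real.exp (-(t + ((k:ℝ) + 1) / a) * u) := hswap
      _ = ∑' k : ℕ, 1 / (t + ((k:ℝ) + 1) / a) ^ 2 := tsum_congr hint
      _ = ∑' k : ℕ, a ^ 2 * (1 / ((1 + a * t) + (k:ℝ)) ^ 2) := by
          apply tsum_congr
          intro k
          have h1 : t + ((k:ℝ) + 1) / a = ((1 + a * t) + (k:ℝ)) / a := by
            field_simp
            ring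
          rw [h1, div_pow, one_div, inv_div, mul_one_div]
      _ = a ^ 2 * trig (1 + a * t) := by rw [tsum_mul_left]; rfl
  · show (∑' (i : ℕ), ∫⁻ u in Ioi (0:ℝ),
        (‖u * Real.exp (-(t + ((i:ℝ) + 1) / a) * u)‖₊ : ENNReal)) ≠ ⊤
    rw [tsum_congr hnorm,
      ← ENNReal.ofReal_tsum_of_nonneg (fun k => by positivity) (summable_inv_c_sq ha ht)]
    exact ENNReal.ofReal_ne_top

lemma G_integrable {a t : ℝ} (ha : 0 < a) (ht : 0 < t) :
    IntegrableOn (fun u : ℝ => u * (1 / (Real.exp (u / a) - 1)) * Real.exp (-t * u)) (Ioi 0) := by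
  have hg : IntegrableOn (fun u : ℝ => a * Real.exp (-t * u)) (Ioi 0) :=
    (exp_neg_integrableOn_Ioi 0 ht).const_mul a
  apply Integrable.mono' hg
  · apply ContinuousOn.aestronglyMeasurable _ measurableSet_Ioi
    apply ContinuousOn.mul
    apply ContinuousOn.mul continuousOn_id
    · apply ContinuousOn.div continuousOn_const
      · exact (Real.continuous_exp.comp (continuous_id.div_const a)).continuousOn.sub
          continuousOn_const
      · intro u hu
        exact (exp_sub_one_pos ha hu).ne'
    · exact (Real.continuous_exp.comp (continuous_const.mul continuous_id)).continuousOn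
  · rw [ae_restrict_iff' measurableSet_Ioi]
    apply Eventually.of_forall
    intro u hu
    rw [Real.norm_eq_abs, abs_of_nonneg]
    · apply mul_le_mul_of_nonneg_right (div_exp_sub_one_le ha hu) (Real.exp_pos _).le
    · have := exp_sub_one_pos ha hu
      have hu' := le_of_lt (show (0:ℝ) < u from hu)
      positivity


lemma hasDerivAt_logGamma_affine {a s : ℝ} (ha : 0 < a) (hs : 0 < s) :
    HasDerivAt (fun y : ℝ => Real.log (Real.Gamma (1 + a * y))) (a * dig (1 + a * s)) s := by
  have h1 : (0:ℝ) < 1 + a * s := by positivity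
  have hinner : HasDerivAt (fun y : ℝ => 1 + a * y) a s := by
    simpa using ((hasDerivAt_id s).const_mul a).const_add 1
  have := (hasDerivAt_logGamma h1).comp s hinner
  simpa [mul_comm, Function.comp_def] using this

lemma hasDerivAt_dig_affine {a s : ℝ} (ha : 0 < a) (hs : 0 < s) :
    HasDerivAt (fun y : ℝ => a * dig (1 + a * y)) (a ^ 2 * trig (1 + a * s)) s := by
  have h1 : (0:ℝ) < 1 + a * s := by positivity
  have hinner : HasDerivAt (fun y : ℝ => 1 + a * y) a s := by
    simpa using ((hasDerivAt_id s).const_mul a).const_add 1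
  have h2 := ((hasDerivAt_dig h1).comp s hinner).const_mul a
  have : a * (trig (1 + a * s) * a) = a ^ 2 * trig (1 + a * s) := by ring
  rw [this] at h2
  exact h2


end DigammaAux

open DigammaAux

theorem integral_representation_second_deriv_log_ratio_gamma
    (m n : ℕ) (hm : 0 < m) (hn : 0 < n)
    (lam : Fin m → Fin n → ℝ) (hlam : ∀ i j, 0 < lam i j)
    (α : Fin m → ℝ) (hα : ∀ i, α i = ∑ j : Fin n, lam i j)
    (β : Fin n → ℝ) (hβ : ∀ j, β j = ∑ i : Fin m, lam i j)
    (ρ : ℝ)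
    (f : ℝ → ℝ)
    (hf : ∀ t, f t =
      ((∏ i : Fin m, Real.Gamma (1 + α i * t)) * ∏ j : Fin n, Real.Gamma (1 + β j * t)) /
        (∏ i : Fin m, ∏ j : Fin n, Real.Gamma (1 + lam i j * t)) ^ ρ) :
    ∀ t : ℝ, 0 < t →
      iteratedDeriv 2 (fun s => Real.log (f s)) t =
        ∫ u in Set.Ioi (0 : ℝ),
          u * ((∑ i : Fin m, 1 / (Real.exp (u / α i) - 1)) +
                (∑ j : Fin n, 1 / (Real.exp (u / β j) - 1)) -
                ρ * ∑ i : Fin m, ∑ j : Fin n, 1 / (Real.exp (u / lam i j) - 1)) *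
            Real.exp (-t * u) := by
  intro t ht
  have : NeZero n := ⟨hn.ne'⟩
  have : NeZero m := ⟨hm.ne'⟩
  have hα_pos : ∀ i, 0 < α i := by
    intro i
    rw [hα i]
    exact Finset.sum_pos (fun j _ => hlam i j) Finset.univ_nonempty
  have hβ_pos : ∀ j, 0 < β j := by
    intro j
    rw [hβ j]
    exact Finset.sum_pos (fun i _ => hlam i j) Finset.univ_nonempty
  -- the log-decomposed function
  set A : ℝ → ℝ := fun s =>
    (∑ i : Fin m, Real.log (Real.Gamma (1 + α i * s))) +
    (∑ j : Fin n, Real.log (Real.Gamma (1 + β j * s))) -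
    ρ * ∑ i : Fin m, ∑ j : Fin n, Real.log (Real.Gamma (1 + lam i j * s)) with hA_def
  have hGpos : ∀ (a s : ℝ), 0 < a → 0 < s → 0 < Real.Gamma (1 + a * s) := by
    intro a s ha hs
    exact Real.Gamma_pos_of_pos (by positivity)
  have hlog : ∀ s ∈ Set.Ioi (0:ℝ), Real.log (f s) = A s := by
    intro s hs
    have hs0 : (0:ℝ) < s := hs
    have hP1 : 0 < ∏ i : Fin m, Real.Gamma (1 + α i * s) :=
      Finset.prod_pos fun i _ => hGpos _ _ (hα_pos i) hs0
    have hP2 : 0 < ∏ j : Fin n, Real.Gamma (1 + β j * s) :=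
      Finset.prod_pos fun j _ => hGpos _ _ (hβ_pos j) hs0
    have hP3 : 0 < ∏ i : Fin m, ∏ j : Fin n, Real.Gamma (1 + lam i j * s) :=
      Finset.prod_pos fun i _ => Finset.prod_pos fun j _ => hGpos _ _ (hlam i j) hs0
    rw [hf s, Real.log_div (mul_ne_zero hP1.ne' hP2.ne') (Real.rpow_pos_of_pos hP3 ρ).ne',
      Real.log_mul hP1.ne' hP2.ne', Real.log_rpow hP3,
      Real.log_prod (fun i _ => (hGpos _ _ (hα_pos i) hs0).ne'),
      Real.log_prod (fun j _ => (hGpos _ _ (hβ_pos j) hs0).ne'),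
      Real.log_prod (fun i _ =>
        (Finset.prod_pos fun j _ => hGpos _ _ (hlam i j) hs0).ne')]
    rw [hA_def]
    dsimp only
    congr 1
    congr 1
    exact Finset.sum_congr rfl fun i _ =>
      Real.log_prod (fun j _ => (hGpos _ _ (hlam i j) hs0).ne')
  -- first derivative of A
  set A' : ℝ → ℝ := fun s =>
    (∑ i : Fin m, α i * dig (1 + α i * s)) +
    (∑ j : Fin n, β j * dig (1 + β j * s)) -
    ρ * ∑ i : Fin m, ∑ j : Fin n, lam i j * dig (1 + lam i j * s) with hA'_def
  have hA' : ∀ s ∈ Set.Ioi (0:ℝ), HasDerivAt A (A' s) s := by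
    intro s hs
    have hs0 : (0:ℝ) < s := hs
    exact ((HasDerivAt.fun_sum fun i _ => hasDerivAt_logGamma_affine (hα_pos i) hs0).add
      (HasDerivAt.fun_sum fun j _ => hasDerivAt_logGamma_affine (hβ_pos j) hs0)).sub
      ((HasDerivAt.fun_sum fun i _ => HasDerivAt.fun_sum fun j _ =>
        hasDerivAt_logGamma_affine (hlam i j) hs0).const_mul ρ)
  have hA'' : HasDerivAt A'
      ((∑ i : Fin m, (α i) ^ 2 * trig (1 + α i * t)) +
       (∑ j : Fin n, (β j) ^ 2 * trig (1 + β j * t)) -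
       ρ * ∑ i : Fin m, ∑ j : Fin n, (lam i j) ^ 2 * trig (1 + lam i j * t)) t :=
    ((HasDerivAt.fun_sum fun i _ => hasDerivAt_dig_affine (hα_pos i) ht).add
      (HasDerivAt.fun_sum fun j _ => hasDerivAt_dig_affine (hβ_pos j) ht)).sub
      ((HasDerivAt.fun_sum fun i _ => HasDerivAt.fun_sum fun j _ =>
        hasDerivAt_dig_affine (hlam i j) ht).const_mul ρ)
  -- LHS computation
  have h_ev : (fun s => Real.log (f s)) =ᶠ[𝓝 t] A :=
    eventually_of_mem (Ioi_mem_nhds ht) hlog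
  have h_dev : deriv A =ᶠ[𝓝 t] A' :=
    eventually_of_mem (Ioi_mem_nhds ht) (fun s hs => (hA' s hs).deriv)
  have hLHS : iteratedDeriv 2 (fun s => Real.log (f s)) t =
      (∑ i : Fin m, (α i) ^ 2 * trig (1 + α i * t)) +
      (∑ j : Fin n, (β j) ^ 2 * trig (1 + β j * t)) -
      ρ * ∑ i : Fin m, ∑ j : Fin n, (lam i j) ^ 2 * trig (1 + lam i j * t) := by
    rw [iteratedDeriv_succ, iteratedDeriv_one]
    rw [h_ev.deriv.deriv_eq, h_dev.deriv_eq, hA''.deriv]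
  rw [hLHS]
  -- RHS computation
  have hsplit : ∀ u : ℝ,
      u * ((∑ i : Fin m, 1 / (Real.exp (u / α i) - 1)) +
            (∑ j : Fin n, 1 / (Real.exp (u / β j) - 1)) -
            ρ * ∑ i : Fin m, ∑ j : Fin n, 1 / (Real.exp (u / lam i j) - 1)) *
          Real.exp (-t * u)
      = (∑ i : Fin m, u * (1 / (Real.exp (u / α i) - 1)) * Real.exp (-t * u)) +
        (∑ j : Fin n, u * (1 / (Real.exp (u / β j) - 1)) * Real.exp (-t * u)) -
        ρ * ∑ i : Fin m, ∑ j : Fin n,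
          u * (1 / (Real.exp (u / lam i j) - 1)) * Real.exp (-t * u) := by
    intro u
    have e1 : ∀ (k : ℕ) (g : Fin k → ℝ),
        u * (∑ i, g i) * Real.exp (-t * u) = ∑ i, u * g i * Real.exp (-t * u) := by
      intro k g
      rw [Finset.mul_sum, Finset.sum_mul]
    calc u * ((∑ i : Fin m, 1 / (Real.exp (u / α i) - 1)) +
            (∑ j : Fin n, 1 / (Real.exp (u / β j) - 1)) -
            ρ * ∑ i : Fin m, ∑ j : Fin n, 1 / (Real.exp (u / lam i j) - 1)) *
          Real.exp (-t * u)
        = u * (∑ i : Fin m, 1 / (Real.exp (u / α i) - 1)) * Real.exp (-t * u) +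
          u * (∑ j : Fin n, 1 / (Real.exp (u / β j) - 1)) * Real.exp (-t * u) -
          ρ * (u * (∑ i : Fin m, ∑ j : Fin n, 1 / (Real.exp (u / lam i j) - 1)) *
            Real.exp (-t * u)) := by ring
      _ = _ := by
          rw [e1 m _, e1 n _, e1 m _]
          congr 1
          congr 1
          exact Finset.sum_congr rfl fun i _ => e1 n _
  have H1 : IntegrableOn
      (fun u : ℝ => ∑ i : Fin m, u * (1 / (Real.exp (u / α i) - 1)) * Real.exp (-t * u))
      (Set.Ioi 0) := integrable_finset_sum _ fun i _ => G_integrable (hα_pos i) ht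
  have H2 : IntegrableOn
      (fun u : ℝ => ∑ j : Fin n, u * (1 / (Real.exp (u / β j) - 1)) * Real.exp (-t * u))
      (Set.Ioi 0) := integrable_finset_sum _ fun j _ => G_integrable (hβ_pos j) ht
  have H3 : IntegrableOn
      (fun u : ℝ => ∑ i : Fin m, ∑ j : Fin n,
        u * (1 / (Real.exp (u / lam i j) - 1)) * Real.exp (-t * u))
      (Set.Ioi 0) := integrable_finset_sum _ fun i _ =>
        integrable_finset_sum _ fun j _ => G_integrable (hlam i j) ht
  calc (∑ i : Fin m, (α i) ^ 2 * trig (1 + α i * t)) +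
      (∑ j : Fin n, (β j) ^ 2 * trig (1 + β j * t)) -
      ρ * ∑ i : Fin m, ∑ j : Fin n, (lam i j) ^ 2 * trig (1 + lam i j * t)
      = (∑ i : Fin m, ∫ u in Set.Ioi (0:ℝ),
            u * (1 / (Real.exp (u / α i) - 1)) * Real.exp (-t * u)) +
        (∑ j : Fin n, ∫ u in Set.Ioi (0:ℝ),
            u * (1 / (Real.exp (u / β j) - 1)) * Real.exp (-t * u)) -
        ρ * ∑ i : Fin m, ∑ j : Fin n, ∫ u in Set.Ioi (0:ℝ),
            u * (1 / (Real.exp (u / lam i j) - 1)) * Real.exp (-t * u) := by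
        congr 1
        · congr 1
          · exact Finset.sum_congr rfl fun i _ => (key_integral (hα_pos i) ht).symm
          · exact Finset.sum_congr rfl fun j _ => (key_integral (hβ_pos j) ht).symm
        · congr 1
          exact Finset.sum_congr rfl fun i _ => Finset.sum_congr rfl fun j _ =>
            (key_integral (hlam i j) ht).symm
    _ = (∫ u in Set.Ioi (0:ℝ), ∑ i : Fin m,
            u * (1 / (Real.exp (u / α i) - 1)) * Real.exp (-t * u)) +
        (∫ u in Set.Ioi (0:ℝ), ∑ j : Fin n,
            u * (1 / (Real.exp (u / β j) - 1)) * Real.exp (-t * u)) -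
        ρ * ∫ u in Set.Ioi (0:ℝ), ∑ i : Fin m, ∑ j : Fin n,
            u * (1 / (Real.exp (u / lam i j) - 1)) * Real.exp (-t * u) := by
        rw [integral_finset_sum _ fun i _ => G_integrable (hα_pos i) ht,
          integral_finset_sum _ fun j _ => G_integrable (hβ_pos j) ht,
          integral_finset_sum _ fun i _ =>
            integrable_finset_sum _ fun j _ => G_integrable (hlam i j) ht]
        congr 2
        exact Finset.sum_congr rfl fun i _ =>
          (integral_finset_sum _ fun j _ => G_integrable (hlam i j) ht).symm
    _ = ∫ u in Set.Ioi (0:ℝ),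
          ((∑ i : Fin m, u * (1 / (Real.exp (u / α i) - 1)) * Real.exp (-t * u)) +
           (∑ j : Fin n, u * (1 / (Real.exp (u / β j) - 1)) * Real.exp (-t * u)) -
           ρ * ∑ i : Fin m, ∑ j : Fin n,
             u * (1 / (Real.exp (u / lam i j) - 1)) * Real.exp (-t * u)) := by
        have Hsum : IntegrableOn
            (fun u : ℝ => (∑ i : Fin m, u * (1 / (Real.exp (u / α i) - 1)) * Real.exp (-t * u)) +
              ∑ j : Fin n, u * (1 / (Real.exp (u / β j) - 1)) * Real.exp (-t * u))
            (Set.Ioi 0) := by exact H1.add H2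
        have Hc : IntegrableOn
            (fun u : ℝ => ρ * ∑ i : Fin m, ∑ j : Fin n,
              u * (1 / (Real.exp (u / lam i j) - 1)) * Real.exp (-t * u))
            (Set.Ioi 0) := by exact H3.const_mul ρ
        rw [integral_sub Hsum Hc, integral_add H1 H2, integral_const_mul]
    _ = ∫ u in Set.Ioi (0:ℝ),
          u * ((∑ i : Fin m, 1 / (Real.exp (u / α i) - 1)) +
                (∑ j : Fin n, 1 / (Real.exp (u / β j) - 1)) -
                ρ * ∑ i : Fin m, ∑ j : Fin n, 1 / (Real.exp (u / lam i j) - 1)) *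
            Real.exp (-t * u) := by
        congr 1
        funext u
        exact (hsplit u).symm
end

section
/- Let m, n be positive integers with m ≥ 2 or n ≥ 2, and let λ_{ij} > 0 for 1 ≤ i ≤ m, 1 ≤ j ≤ n. Set α_i = ∑_{j=1}^n λ_{ij} and β_j = ∑_{i=1}^m λ_{ij}. Then ∏_{i=1}^m α_i^{α_i} · ∏_{j=1}^n β_j^{β_j} > ( ∏_{i=1}^m ∏_{j=1}^n λ_{ij}^{λ_{ij}} )². -/
open Finset

theorem prod_rpow_self_row_col_gt_sq
    (m n : ℕ) (hm : 0 < m) (hn : 0 < n) (hmn : 2 ≤ m ∨ 2 ≤ n)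
    (lam : Fin m → Fin n → ℝ) (hlam : ∀ i j, 0 < lam i j)
    (α : Fin m → ℝ) (hα : ∀ i, α i = ∑ j : Fin n, lam i j)
    (β : Fin n → ℝ) (hβ : ∀ j, β j = ∑ i : Fin m, lam i j) :
    (∏ i : Fin m, ∏ j : Fin n, lam i j ^ lam i j) ^ 2 <
      (∏ i : Fin m, α i ^ α i) * ∏ j : Fin n, β j ^ β j := by
  have hαpos : ∀ i, 0 < α i := fun i => by
    rw [hα]; exact Finset.sum_pos (fun j _ => hlam i j) (univ_nonempty_iff.2 (Fin.pos_iff_nonempty.1 hn))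
  have hβpos : ∀ j, 0 < β j := fun j => by
    rw [hβ]; exact Finset.sum_pos (fun i _ => hlam i j) (univ_nonempty_iff.2 (Fin.pos_iff_nonempty.1 hm))
  have hL : 0 < ∏ i : Fin m, ∏ j : Fin n, lam i j ^ lam i j :=
    Finset.prod_pos fun i _ => Finset.prod_pos fun j _ => Real.rpow_pos_of_pos (hlam i j) _
  have hA : 0 < ∏ i : Fin m, α i ^ α i :=
    Finset.prod_pos fun i _ => Real.rpow_pos_of_pos (hαpos i) _
  have hB : 0 < ∏ j : Fin n, β j ^ β j :=
    Finset.prod_pos fun j _ => Real.rpow_pos_of_pos (hβpos j) _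
  rw [← Real.log_lt_log_iff (by positivity) (by positivity)]
  rw [Real.log_pow, Real.log_mul (ne_of_gt hA) (ne_of_gt hB)]
  rw [Real.log_prod (fun i _ => ne_of_gt (Real.rpow_pos_of_pos (hαpos i) _)),
    Real.log_prod (fun j _ => ne_of_gt (Real.rpow_pos_of_pos (hβpos j) _)),
    Real.log_prod (fun i _ => ne_of_gt (Finset.prod_pos fun j _ => Real.rpow_pos_of_pos (hlam i j) _))]
  simp_rw [Real.log_prod (fun j _ => ne_of_gt (Real.rpow_pos_of_pos (hlam _ j) _)),
    Real.log_rpow (hlam _ _), Real.log_rpow (hαpos _), Real.log_rpow (hβpos _)]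
  -- abbreviations
  have hle_row : ∀ i, ∑ j : Fin n, lam i j * Real.log (lam i j) ≤ α i * Real.log (α i) := by
    intro i
    rw [hα, Finset.sum_mul]
    refine Finset.sum_le_sum fun j _ => ?_
    exact mul_le_mul_of_nonneg_left
      (Real.log_le_log (hlam i j) (Finset.single_le_sum (fun k _ => (hlam i k).le) (mem_univ j)))
      (hlam i j).le
  have hle_col : ∀ j, ∑ i : Fin m, lam i j * Real.log (lam i j) ≤ β j * Real.log (β j) := by
    intro j
    rw [hβ, Finset.sum_mul]
    refine Finset.sum_le_sum fun i _ => ?_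
    exact mul_le_mul_of_nonneg_left
      (Real.log_le_log (hlam i j) (Finset.single_le_sum (fun k _ => (hlam k j).le) (mem_univ i)))
      (hlam i j).le
  have hlt_row : 2 ≤ n → ∀ i, ∑ j : Fin n, lam i j * Real.log (lam i j) < α i * Real.log (α i) := by
    intro h2 i
    rw [hα, Finset.sum_mul]
    refine Finset.sum_lt_sum (fun j _ => mul_le_mul_of_nonneg_left
      (Real.log_le_log (hlam i j) (Finset.single_le_sum (fun k _ => (hlam i k).le) (mem_univ j)))
      (hlam i j).le) ?_
    obtain ⟨j⟩ : Nonempty (Fin n) := Fin.pos_iff_nonempty.1 hn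
    obtain ⟨j', hj'⟩ : ∃ j' : Fin n, j' ≠ j :=
      Fintype.exists_ne_of_one_lt_card (by simp; omega) j
    refine ⟨j, mem_univ j, mul_lt_mul_of_pos_left
      (Real.log_lt_log (hlam i j) ?_) (hlam i j)⟩
    exact Finset.single_lt_sum hj' (mem_univ j) (mem_univ j') (hlam i j') (fun k _ _ => (hlam i k).le)
  have hlt_col : 2 ≤ m → ∀ j, ∑ i : Fin m, lam i j * Real.log (lam i j) < β j * Real.log (β j) := by
    intro h2 j
    rw [hβ, Finset.sum_mul]
    refine Finset.sum_lt_sum (fun i _ => mul_le_mul_of_nonneg_left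
      (Real.log_le_log (hlam i j) (Finset.single_le_sum (fun k _ => (hlam k j).le) (mem_univ i)))
      (hlam i j).le) ?_
    obtain ⟨i⟩ : Nonempty (Fin m) := Fin.pos_iff_nonempty.1 hm
    obtain ⟨i', hi'⟩ : ∃ i' : Fin m, i' ≠ i :=
      Fintype.exists_ne_of_one_lt_card (by simp; omega) i
    refine ⟨i, mem_univ i, mul_lt_mul_of_pos_left
      (Real.log_lt_log (hlam i j) ?_) (hlam i j)⟩
    exact Finset.single_lt_sum hi' (mem_univ i) (mem_univ i') (hlam i' j) (fun k _ _ => (hlam k j).le)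
  have hsum_comm : ∑ i : Fin m, ∑ j : Fin n, lam i j * Real.log (lam i j)
      = ∑ j : Fin n, ∑ i : Fin m, lam i j * Real.log (lam i j) := Finset.sum_comm
  have key : 2 * ∑ i : Fin m, ∑ j : Fin n, lam i j * Real.log (lam i j) <
      (∑ i : Fin m, α i * Real.log (α i)) + ∑ j : Fin n, β j * Real.log (β j) := by
    rw [two_mul]
    rcases hmn with h2 | h2
    · refine add_lt_add_of_le_of_lt (Finset.sum_le_sum fun i _ => hle_row i) ?_
      rw [hsum_comm]
      exact Finset.sum_lt_sum_of_nonempty (univ_nonempty_iff.2 (Fin.pos_iff_nonempty.1 hn))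
        (fun j _ => hlt_col h2 j)
    · refine add_lt_add_of_lt_of_le ?_ ?_
      · exact Finset.sum_lt_sum_of_nonempty (univ_nonempty_iff.2 (Fin.pos_iff_nonempty.1 hm))
          (fun i _ => hlt_row h2 i)
      · rw [hsum_comm]
        exact Finset.sum_le_sum fun j _ => hle_col j
  exact_mod_cast key
end

section
/- Let m, n be positive integers, λ_{ij} > 0 for 1 ≤ i ≤ m, 1 ≤ j ≤ n, let ℓ be a positive integer, θ_k ∈ (0,1) for 1 ≤ k ≤ ℓ with ∑_{k=1}^ℓ θ_k = 1, and y_k > 0 for 1 ≤ k ≤ ℓ; put s = ∑_{k=1}^ℓ θ_k y_k. For positive reals a_1,…,a_r define the multivariate beta function B(a_1,…,a_r) = ∏_{q=1}^r Γ(a_q) / Γ(∑_{q=1}^r a_q). Then, with N = 2mn − m − n, [∏_{i=1}^m B(λ_{i1}s, …, λ_{in}s) · ∏_{j=1}^n B(λ_{1j}s, …, λ_{mj}s)] / ∏_{k=1}^ℓ [∏_{i=1}^m B(λ_{i1}y_k, …, λ_{in}y_k) · ∏_{j=1}^n B(λ_{1j}y_k, …, λ_{mj}y_k)]^{θ_k}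 ≥ (∏_{k=1}^ℓ y_k^{θ_k})^N / s^N. -/
open Finset Filter Topology

set_option linter.unusedSectionVars false
set_option linter.unusedVariables false
set_option maxHeartbeats 1000000

/-- The multivariate beta function `∏ Γ(a_q) / Γ(∑ a_q)` for real arguments. -/
noncomputable def multivariateBeta {r : ℕ} (a : Fin r → ℝ) : ℝ :=
  (∏ q, Real.Gamma (a q)) / Real.Gamma (∑ q, a q)

namespace MBAux

variable {ℓ : ℕ} (θ y : Fin ℓ → ℝ)

/-- The auxiliary function `J(v) = log (v+s) - ∑ θ k log (v + y k)` with `s = ∑ θ k y k`. -/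
noncomputable def Jf (v : ℝ) : ℝ :=
  Real.log (v + ∑ k, θ k * y k) - ∑ k, θ k * Real.log (v + y k)

variable {θ y}

section Jlemmas

variable (hθ : ∀ k, 0 < θ k) (hθsum : ∑ k, θ k = 1) (hy : ∀ k, 0 < y k)
include hθ hθsum hy

lemma nonempty_of_sum_one : Nonempty (Fin ℓ) := by
  rcases Nat.eq_zero_or_pos ℓ with h | h
  · subst h; simp at hθsum
  · exact Fin.pos_iff_nonempty.mp h

lemma s_pos : 0 < ∑ k, θ k * y k := by
  have : Nonempty (Fin ℓ) := nonempty_of_sum_one hθ hθsum hy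
  exact Finset.sum_pos (fun k _ => mul_pos (hθ k) (hy k)) univ_nonempty

lemma sum_theta_mul (v : ℝ) : ∑ k, θ k * (v + y k) = v + ∑ k, θ k * y k := by
  simp only [mul_add, Finset.sum_add_distrib, ← Finset.sum_mul, hθsum, one_mul]

lemma Jf_nonneg {v : ℝ} (hv : 0 ≤ v) : 0 ≤ Jf θ y v := by
  have hvy : ∀ k, 0 < v + y k := fun k => by have := hy k; linarith
  have key := Real.geom_mean_le_arith_mean_weighted univ θ (fun k => v + y k)
    (fun k _ => (hθ k).le) hθsum (fun k _ => (hvy k).le)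
  have h1 : ∑ k, θ k * (v + y k) = v + ∑ k, θ k * y k := sum_theta_mul hθ hθsum hy v
  have h2 : ∑ k, θ k * Real.log (v + y k) = Real.log (∏ k, (v + y k) ^ θ k) := by
    rw [Real.log_prod (fun k _ => (Real.rpow_pos_of_pos (hvy k) _).ne')]
    exact Finset.sum_congr rfl fun k _ => (Real.log_rpow (hvy k) _).symm
  have hprodpos : 0 < ∏ k, (v + y k) ^ θ k :=
    Finset.prod_pos fun k _ => Real.rpow_pos_of_pos (hvy k) _
  have hs := s_pos hθ hθsum hy
  rw [Jf, sub_nonneg, h2]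
  exact (Real.log_le_log_iff hprodpos (by linarith)).mpr (by rw [← h1]; exact key)

lemma Jf_hasDerivAt {v : ℝ} (hv : 0 < v) :
    HasDerivAt (Jf θ y)
      ((v + ∑ k, θ k * y k)⁻¹ - ∑ k, θ k * (v + y k)⁻¹) v := by
  have hs := s_pos hθ hθsum hy
  have h1 : HasDerivAt (fun v : ℝ => Real.log (v + ∑ k, θ k * y k))
      ((v + ∑ k, θ k * y k)⁻¹) v := by
    have := ((hasDerivAt_id v).add_const (∑ k, θ k * y k)).log
      (by simp only [id_eq]; positivity)
    simpa [one_div] using this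
  have h2 : HasDerivAt (fun v : ℝ => ∑ k, θ k * Real.log (v + y k))
      (∑ k, θ k * (v + y k)⁻¹) v := by
    apply HasDerivAt.fun_sum
    intro k _
    have hyk := hy k
    have := (((hasDerivAt_id v).add_const (y k)).log
      (by simp only [id_eq]; positivity)).const_mul (θ k)
    simpa [one_div] using this
  exact h1.sub h2

lemma Jf_deriv_nonpos {v : ℝ} (hv : 0 < v) :
    (v + ∑ k, θ k * y k)⁻¹ - ∑ k, θ k * (v + y k)⁻¹ ≤ 0 := by
  have hvy : ∀ k, 0 < v + y k := fun k => by have := hy k; linarith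
  have hs := s_pos hθ hθsum hy
  have hcs := Finset.sum_mul_sq_le_sq_mul_sq univ
    (fun k => Real.sqrt (θ k * (v + y k))) (fun k => Real.sqrt (θ k * (v + y k)⁻¹))
  have e1 : ∀ k : Fin ℓ,
      Real.sqrt (θ k * (v + y k)) * Real.sqrt (θ k * (v + y k)⁻¹) = θ k := by
    intro k
    rw [← Real.sqrt_mul (mul_nonneg (hθ k).le (hvy k).le)]
    have : θ k * (v + y k) * (θ k * (v + y k)⁻¹) = θ k ^ 2 := by
      rw [mul_mul_mul_comm, mul_inv_cancel₀ (hvy k).ne', mul_one, sq]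
    rw [this, Real.sqrt_sq (hθ k).le]
  have e2 : ∀ k : Fin ℓ, Real.sqrt (θ k * (v + y k)) ^ 2 = θ k * (v + y k) := by
    intro k; exact Real.sq_sqrt (mul_nonneg (hθ k).le (hvy k).le)
  have e3 : ∀ k : Fin ℓ, Real.sqrt (θ k * (v + y k)⁻¹) ^ 2 = θ k * (v + y k)⁻¹ := by
    intro k; exact Real.sq_sqrt (mul_nonneg (hθ k).le (inv_pos.mpr (hvy k)).le)
  rw [Finset.sum_congr rfl (fun k _ => e1 k), Finset.sum_congr rfl (fun k _ => e2 k),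
    Finset.sum_congr rfl (fun k _ => e3 k), hθsum, sum_theta_mul hθ hθsum hy] at hcs
  have hH : 0 < ∑ k, θ k * (v + y k)⁻¹ := by
    have : Nonempty (Fin ℓ) := nonempty_of_sum_one hθ hθsum hy
    exact Finset.sum_pos (fun k _ => mul_pos (hθ k) (inv_pos.mpr (hvy k))) univ_nonempty
  have hvs : 0 < v + ∑ k, θ k * y k := by linarith
  have : (v + ∑ k, θ k * y k)⁻¹ ≤ ∑ k, θ k * (v + y k)⁻¹ := by
    rw [inv_eq_one_div, div_le_iff₀ hvs]
    nlinarith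
  linarith

lemma Jf_antitoneOn : AntitoneOn (Jf θ y) (Set.Ioi 0) :=
  antitoneOn_of_deriv_nonpos (convex_Ioi (0:ℝ))
    (fun v hv => (Jf_hasDerivAt hθ hθsum hy (by simpa using hv)).continuousAt.continuousWithinAt)
    (fun v hv =>
      ((Jf_hasDerivAt hθ hθsum hy
        (by simpa [interior_Ioi] using hv)).differentiableAt).differentiableWithinAt)
    (fun v hv => by
      rw [(Jf_hasDerivAt hθ hθsum hy (by simpa [interior_Ioi] using hv)).deriv]
      exact Jf_deriv_nonpos hθ hθsum hy (by simpa [interior_Ioi] using hv))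

end Jlemmas


section Jlemmas2

variable {θ y : Fin ℓ → ℝ}
variable (hθ : ∀ k, 0 < θ k) (hθsum : ∑ k, θ k = 1) (hy : ∀ k, 0 < y k)
include hθ hθsum hy

lemma Jf_le_bound {v : ℝ} (hv : 0 < v) (hne : Nonempty (Fin ℓ))
    (hs : 0 < ∑ k, θ k * y k) :
    Jf θ y v ≤ (∑ k, θ k * ((∑ j, θ j * y j) - y k) ^ 2) / v ^ 2 := by
  set s := ∑ k, θ k * y k with hsdef
  have hvy : ∀ k, 0 < v + y k := fun k => by have := hy k; linarith
  set H := ∑ k, θ k * (v + y k)⁻¹ with hHdef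
  have hH : 0 < H :=
    Finset.sum_pos (fun k _ => mul_pos (hθ k) (inv_pos.mpr (hvy k))) univ_nonempty
  have hvs : 0 < v + s := by linarith
  -- step 1 : - ∑ θ log (v+y) ≤ log H
  have key := Real.geom_mean_le_arith_mean_weighted univ θ (fun k => (v + y k)⁻¹)
    (fun k _ => (hθ k).le) hθsum (fun k _ => (inv_pos.mpr (hvy k)).le)
  have hprodpos : 0 < ∏ k, ((v + y k)⁻¹) ^ θ k :=
    Finset.prod_pos fun k _ => Real.rpow_pos_of_pos (inv_pos.mpr (hvy k)) _
  have h2 : -(∑ k, θ k * Real.log (v + y k)) = Real.log (∏ k, ((v + y k)⁻¹) ^ θ k) := by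
    rw [Real.log_prod (fun k _ => (Real.rpow_pos_of_pos (inv_pos.mpr (hvy k)) _).ne')]
    rw [← Finset.sum_neg_distrib]
    exact Finset.sum_congr rfl fun k _ => by
      rw [Real.log_rpow (inv_pos.mpr (hvy k)), Real.log_inv]; ring
  have step1 : Jf θ y v ≤ Real.log (v + s) + Real.log H := by
    have hlog : Real.log (∏ k, ((v + y k)⁻¹) ^ θ k) ≤ Real.log H :=
      (Real.log_le_log_iff hprodpos hH).mpr key
    rw [Jf, sub_eq_add_neg, h2]
    exact add_le_add le_rfl hlog
  -- step 2
  have step2 : Real.log (v + s) + Real.log H ≤ (v + s) * H - 1 := by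
    rw [← Real.log_mul hvs.ne' hH.ne']
    exact Real.log_le_sub_one_of_pos (mul_pos hvs hH)
  -- step 3 : identity
  have step3 : (v + s) * H - 1 = ∑ k, θ k * (s - y k) ^ 2 / ((v + y k) * (v + s)) := by
    have e1 : ∀ k : Fin ℓ, θ k * ((v + s) * (v + y k)⁻¹)
        = θ k * (s - y k) ^ 2 / ((v + y k) * (v + s)) + θ k + θ k * (s - y k) / (v + s) := by
      intro k
      have h1 : v + y k ≠ 0 := (hvy k).ne'
      have h2 : v + s ≠ 0 := hvs.ne'
      field_simp
      ring
    calc (v + s) * H - 1 = ∑ k, θ k * ((v + s) * (v + y k)⁻¹) - 1 := by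
          rw [hHdef, Finset.mul_sum]
          congr 1
          exact Finset.sum_congr rfl fun k _ => by ring
      _ = (∑ k, θ k * (s - y k) ^ 2 / ((v + y k) * (v + s)))
            + (∑ k, θ k) + (∑ k, θ k * (s - y k)) / (v + s) - 1 := by
          rw [Finset.sum_congr rfl fun k _ => e1 k, Finset.sum_add_distrib,
            Finset.sum_add_distrib, ← Finset.sum_div]
      _ = _ := by
          have : ∑ k, θ k * (s - y k) = 0 := by
            simp only [mul_sub, Finset.sum_sub_distrib, ← Finset.sum_mul, hθsum, one_mul]
            simp [hsdef]
          rw [this, hθsum]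
          ring
  -- step 4 : bound each term
  have step4 : ∑ k, θ k * (s - y k) ^ 2 / ((v + y k) * (v + s))
      ≤ (∑ k, θ k * (s - y k) ^ 2) / v ^ 2 := by
    rw [Finset.sum_div]
    apply Finset.sum_le_sum
    intro k _
    apply div_le_div_of_nonneg_left (mul_nonneg (hθ k).le (sq_nonneg _)) (pow_pos hv 2)
    have := hvy k
    nlinarith [hy k]
  calc Jf θ y v ≤ (v + s) * H - 1 := step1.trans step2
    _ = _ := step3
    _ ≤ _ := step4

lemma Jf_summable {a0 : ℝ} (ha0 : 0 < a0) :
    Summable (fun j : ℕ => Jf θ y ((1 + j) / a0)) := by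
  have hne : Nonempty (Fin ℓ) := nonempty_of_sum_one hθ hθsum hy
  have hs : 0 < ∑ k, θ k * y k := s_pos hθ hθsum hy
  have hnn : ∀ v : ℝ, 0 ≤ v → 0 ≤ Jf θ y v := fun v hv => Jf_nonneg hθ hθsum hy hv
  set C0 := ∑ k, θ k * ((∑ j, θ j * y j) - y k) ^ 2 with hC0
  have hC0nn : 0 ≤ C0 :=
    Finset.sum_nonneg fun k _ => mul_nonneg (hθ k).le (sq_nonneg _)
  have hbase : Summable (fun j : ℕ => C0 * a0 ^ 2 * (1 / ((j : ℝ) + 1) ^ 2)) := by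
    apply Summable.mul_left
    have h1 : Summable (fun n : ℕ => 1 / ((n : ℝ)) ^ 2) :=
      Real.summable_one_div_nat_pow.mpr one_lt_two
    have h2 := (summable_nat_add_iff 1).mpr h1
    refine h2.congr fun n => ?_
    push_cast
    ring
  apply Summable.of_nonneg_of_le (fun j => hnn _ (by positivity)) _ hbase
  intro j
  have hv : (0:ℝ) < (1 + j) / a0 := by positivity
  refine (Jf_le_bound hθ hθsum hy hv hne hs).trans (le_of_eq ?_)
  rw [← hC0]
  have hj : (1 : ℝ) + (j:ℝ) ≠ 0 := by positivity
  rw [div_pow, div_div_eq_mul_div, mul_one_div, add_comm (1:ℝ) (j:ℝ)]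


end Jlemmas2

lemma exists_grid_injection {r : ℕ} (a : Fin r → ℝ) (ha : ∀ q, 0 < a q) :
    ∃ ι : Fin r × ℕ → ℕ, Function.Injective ι ∧
      ∀ p : Fin r × ℕ, ((ι p : ℝ) + 1) ≤ (∑ q, a q) * ((1 + p.2) / a p.1) := by
  classical
  set A := ∑ q, a q with hA
  set b : Fin r × ℕ → ℝ := fun p => (1 + p.2) / a p.1 with hb
  have hbpos : ∀ p, 0 < b p := fun p => by
    have := ha p.1
    have : (0:ℝ) < 1 + p.2 := by positivity
    positivity
  have haA : ∀ q, a q ≤ A := fun q =>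
    Finset.single_le_sum (fun q' _ => (ha q').le) (mem_univ q)
  have hmul : ∀ p : Fin r × ℕ, a p.1 * b p = 1 + p.2 := fun p => by
    rw [hb]; exact mul_div_cancel₀ _ (ha p.1).ne'
  -- the strict order
  set keylt : Fin r × ℕ → Fin r × ℕ → Prop :=
    fun p' p => b p' < b p ∨ (b p' = b p ∧ p'.1 < p.1) with hkeylt
  have keylt_trans : ∀ {p1 p2 p3}, keylt p1 p2 → keylt p2 p3 → keylt p1 p3 := by
    rintro p1 p2 p3 (h12 | ⟨e12, l12⟩) (h23 | ⟨e23, l23⟩)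
    · exact Or.inl (h12.trans h23)
    · exact Or.inl (e23 ▸ h12)
    · exact Or.inl (e12 ▸ h23)
    · exact Or.inr ⟨e12.trans e23, l12.trans l23⟩
  have keylt_irrefl : ∀ p, ¬ keylt p p := by
    rintro p (h | ⟨_, h⟩) <;> exact lt_irrefl _ h
  have keylt_total : ∀ {p p'}, p ≠ p' → keylt p p' ∨ keylt p' p := by
    intro p p' hne
    rcases lt_trichotomy (b p) (b p') with h | h | h
    · exact Or.inl (Or.inl h)
    · rcases lt_trichotomy p.1 p'.1 with h1 | h1 | h1
      · exact Or.inl (Or.inr ⟨h, h1⟩)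
      · exfalso
        apply hne
        have h2 : (1 : ℝ) + p.2 = 1 + p'.2 := by
          have := hmul p
          have := hmul p'
          rw [h1] at *
          nlinarith [ha p'.1, hbpos p', h]
        have : p.2 = p'.2 := by exact_mod_cast (by linarith : ((p.2:ℝ)) = p'.2)
        exact Prod.ext h1 this
      · exact Or.inr (Or.inr ⟨h.symm, h1⟩)
    · exact Or.inr (Or.inl h)
  -- the finite set of predecessors
  set S : Fin r × ℕ → Finset (Fin r × ℕ) :=
    fun p => (univ ×ˢ range (Nat.ceil (A * b p))).filter (fun p' => keylt p' p) with hS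
  have hmemS : ∀ p p', keylt p' p → p' ∈ S p := by
    intro p p' h
    rw [hS, mem_filter, mem_product]
    refine ⟨⟨mem_univ _, ?_⟩, h⟩
    rw [mem_range, Nat.lt_ceil]
    have hble : b p' ≤ b p := by
      rcases h with h | ⟨h, _⟩; exacts [h.le, h.le]
    have h1 : (1:ℝ) + p'.2 ≤ a p'.1 * b p := by
      rw [← hmul p']
      exact mul_le_mul_of_nonneg_left hble (ha p'.1).le
    have h2 : a p'.1 * b p ≤ A * b p :=
      mul_le_mul_of_nonneg_right (haA p'.1) (hbpos p).le
    calc (p'.2 : ℝ) < 1 + p'.2 := by linarith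
      _ ≤ A * b p := h1.trans h2
  have hcard_lt : ∀ p p', keylt p p' → (S p).card < (S p').card := by
    intro p p' h
    apply Finset.card_lt_card
    rw [Finset.ssubset_iff_of_subset]
    · exact ⟨p, hmemS p' p h, fun hmem => keylt_irrefl p ((mem_filter.mp hmem).2)⟩
    · intro q hq
      exact hmemS p' q (keylt_trans ((mem_filter.mp hq).2) h)
  refine ⟨fun p => (S p).card, ?_, ?_⟩
  · intro p p' he
    by_contra hne
    rcases keylt_total hne with h | h
    · exact absurd he (hcard_lt p p' h).ne
    · exact absurd he.symm (hcard_lt p' p h).ne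
  · intro p
    -- bound : card (insert p (S p)) ≤ ∑ q' ⌊a q' * b p⌋₊
    have hnotmem : p ∉ S p := fun hmem => keylt_irrefl p ((mem_filter.mp hmem).2)
    set T : Finset (Fin r × ℕ) := univ.biUnion
      (fun q' => (range (Nat.floor (a q' * b p))).map
        ⟨fun k => (q', k), fun k1 k2 h => by simpa using h⟩) with hT
    have hsub : insert p (S p) ⊆ T := by
      intro p' hp'
      have hble : b p' ≤ b p := by
        rcases Finset.mem_insert.mp hp' with h | h
        · rw [h]
        · rcases (mem_filter.mp h).2 with h | ⟨h, _⟩; exacts [h.le, h.le]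
      rw [hT, mem_biUnion]
      refine ⟨p'.1, mem_univ _, ?_⟩
      rw [Finset.mem_map]
      refine ⟨p'.2, ?_, rfl⟩
      rw [mem_range]
      have h1 : (1:ℝ) + p'.2 ≤ a p'.1 * b p := by
        rw [← hmul p']
        exact mul_le_mul_of_nonneg_left hble (ha p'.1).le
      have : (p'.2 + 1 : ℕ) ≤ Nat.floor (a p'.1 * b p) := by
        apply Nat.le_floor
        push_cast
        linarith
      omega
    have hcardT : T.card ≤ ∑ q', Nat.floor (a q' * b p) := by
      refine (Finset.card_biUnion_le).trans ?_
      apply Finset.sum_le_sum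
      intro q' _
      rw [Finset.card_map, Finset.card_range]
    have hfin : ((S p).card + 1 : ℝ) ≤ ∑ q', (Nat.floor (a q' * b p) : ℝ) := by
      have h1 : (S p).card + 1 = (insert p (S p)).card :=
        (Finset.card_insert_of_notMem hnotmem).symm
      have h2 : (insert p (S p)).card ≤ T.card := Finset.card_le_card hsub
      have h3 : (S p).card + 1 ≤ ∑ q', Nat.floor (a q' * b p) := by omega
      push_cast
      exact_mod_cast h3
    show ((S p).card : ℝ) + 1 ≤ A * b p
    refine hfin.trans ?_
    rw [hA, Finset.sum_mul]
    apply Finset.sum_le_sum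
    intro q' _
    exact Nat.floor_le (mul_nonneg (ha q').le (hbpos p).le)


theorem keyIneq {r : ℕ} (hr : 0 < r) (a : Fin r → ℝ) (ha : ∀ q, 0 < a q)
    {θ y : Fin ℓ → ℝ} (hθ : ∀ k, 0 < θ k) (hθsum : ∑ k, θ k = 1) (hy : ∀ k, 0 < y k) :
    Real.Gamma (1 + (∑ q, a q) * (∑ k, θ k * y k)) /
        ∏ q, Real.Gamma (1 + a q * (∑ k, θ k * y k))
      ≤ ∏ k, (Real.Gamma (1 + (∑ q, a q) * y k) /
          ∏ q, Real.Gamma (1 + a q * y k)) ^ θ k := by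
  classical
  have hne : Nonempty (Fin ℓ) := nonempty_of_sum_one hθ hθsum hy
  have hrne : Nonempty (Fin r) := Fin.pos_iff_nonempty.mp hr
  set s := ∑ k, θ k * y k with hsdef
  have hs : 0 < s := s_pos hθ hθsum hy
  set A := ∑ q, a q with hAdef
  have hA : 0 < A := Finset.sum_pos (fun q _ => ha q) univ_nonempty
  have harg : ∀ (c t : ℝ), 0 < c → 0 < t → (0:ℝ) < 1 + c * t := fun c t hc ht => by positivity
  -- positivity of both sides
  have hCpos : ∀ t : ℝ, 0 < t →
      0 < Real.Gamma (1 + A * t) / ∏ q, Real.Gamma (1 + a q * t) := fun t ht =>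
    div_pos (Real.Gamma_pos_of_pos (harg A t hA ht))
      (Finset.prod_pos fun q _ => Real.Gamma_pos_of_pos (harg (a q) t (ha q) ht))
  have hRpos : 0 < ∏ k, (Real.Gamma (1 + A * y k) / ∏ q, Real.Gamma (1 + a q * y k)) ^ θ k :=
    Finset.prod_pos fun k _ => Real.rpow_pos_of_pos (hCpos (y k) (hy k)) _
  rw [← Real.log_le_log_iff (hCpos s hs) hRpos]
  -- the log-combination function
  set L : ℝ → ℝ := fun t =>
    Real.log (Real.Gamma (1 + A * t)) - ∑ q, Real.log (Real.Gamma (1 + a q * t)) with hL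
  have hlogC : ∀ t : ℝ, 0 < t →
      Real.log (Real.Gamma (1 + A * t) / ∏ q, Real.Gamma (1 + a q * t)) = L t := by
    intro t ht
    rw [Real.log_div (Real.Gamma_pos_of_pos (harg A t hA ht)).ne'
        (Finset.prod_pos fun q _ => Real.Gamma_pos_of_pos (harg (a q) t (ha q) ht)).ne',
      Real.log_prod fun q _ => (Real.Gamma_pos_of_pos (harg (a q) t (ha q) ht)).ne']
  have hlogR : Real.log (∏ k, (Real.Gamma (1 + A * y k) /
        ∏ q, Real.Gamma (1 + a q * y k)) ^ θ k) = ∑ k, θ k * L (y k) := by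
    rw [Real.log_prod fun k _ => (Real.rpow_pos_of_pos (hCpos (y k) (hy k)) _).ne']
    refine Finset.sum_congr rfl fun k _ => ?_
    rw [Real.log_rpow (hCpos (y k) (hy k)), hlogC (y k) (hy k)]
  rw [hlogC s hs, hlogR]
  -- main: L s ≤ ∑ θ k * L (y k)
  set LGS := Real.BohrMollerup.logGammaSeq with hLGS
  set E : ℕ → ℝ := fun nn =>
    (∑ k, θ k * (LGS (1 + A * y k) nn - ∑ q, LGS (1 + a q * y k) nn)) -
      (LGS (1 + A * s) nn - ∑ q, LGS (1 + a q * s) nn) with hE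
  have hE_tendsto : Tendsto E atTop (𝓝 ((∑ k, θ k * L (y k)) - L s)) := by
    apply Tendsto.sub
    · apply tendsto_finset_sum
      intro k _
      exact ((Real.BohrMollerup.tendsto_log_gamma (harg A (y k) hA (hy k))).sub
        (tendsto_finset_sum _ fun q _ =>
          Real.BohrMollerup.tendsto_log_gamma (harg (a q) (y k) (ha q) (hy k)))).const_mul _
    · exact (Real.BohrMollerup.tendsto_log_gamma (harg A s hA hs)).sub
        (tendsto_finset_sum _ fun q _ =>
          Real.BohrMollerup.tendsto_log_gamma (harg (a q) s (ha q) hs))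
  -- pointwise identity
  have hGc : ∀ c : ℝ, 0 < c → ∀ m : ℕ,
      Real.log (1 + c * s + m) - ∑ k, θ k * Real.log (1 + c * y k + m)
        = Jf θ y ((1 + m) / c) := by
    intro c hc m
    have key : ∀ t : ℝ, 0 < t →
        Real.log (1 + c * t + m) = Real.log c + Real.log ((1 + m) / c + t) := by
      intro t ht
      rw [← Real.log_mul hc.ne' (by positivity)]
      congr 1
      field_simp
      ring
    have hsplit : ∑ k, θ k * Real.log (1 + c * y k + m)
        = Real.log c + ∑ k, θ k * Real.log ((1 + m) / c + y k) := by
      calc ∑ k, θ k * Real.log (1 + c * y k + m)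
          = ∑ k, (θ k * Real.log c + θ k * Real.log ((1 + m) / c + y k)) :=
            Finset.sum_congr rfl fun k _ => by rw [key (y k) (hy k)]; ring
        _ = Real.log c + ∑ k, θ k * Real.log ((1 + m) / c + y k) := by
            rw [Finset.sum_add_distrib, ← Finset.sum_mul, hθsum, one_mul]
    rw [key s hs, hsplit]
    simp only [Jf]
    rw [← hsdef]
    ring
  -- expand the logGammaSeq combination
  set P : ℝ → ℕ → ℝ := fun t nn => ∑ m ∈ range (nn + 1), Real.log (1 + A * t + m) with hP
  set Q : ℝ → ℕ → ℝ := fun t nn =>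
    ∑ q, ∑ m ∈ range (nn + 1), Real.log (1 + a q * t + m) with hQ
  set K : ℕ → ℝ := fun nn =>
    (1 - (r : ℝ)) * (Real.log nn + Real.log (Nat.factorial nn)) with hK
  have expand : ∀ t : ℝ, ∀ nn : ℕ,
      LGS (1 + A * t) nn - ∑ q, LGS (1 + a q * t) nn = K nn - P t nn + Q t nn := by
    intro t nn
    have hsum1 : ∑ q, ((1 + a q * t) * Real.log nn) = ((r : ℝ) + A * t) * Real.log nn := by
      rw [← Finset.sum_mul]
      congr 1
      rw [Finset.sum_add_distrib, Finset.sum_const, card_univ, Fintype.card_fin,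
        nsmul_eq_mul, mul_one, ← Finset.sum_mul, ← hAdef]
    have hexp : ∑ q, LGS (1 + a q * t) nn
        = ((r : ℝ) + A * t) * Real.log nn + (r : ℝ) * Real.log (Nat.factorial nn)
            - ∑ q, ∑ m ∈ range (nn + 1), Real.log (1 + a q * t + m) := by
      rw [hLGS]
      simp only [Real.BohrMollerup.logGammaSeq]
      rw [Finset.sum_sub_distrib, Finset.sum_add_distrib, hsum1, Finset.sum_const,
        card_univ, Fintype.card_fin, nsmul_eq_mul]
    rw [hexp, hLGS]
    simp only [Real.BohrMollerup.logGammaSeq]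
    rw [hP, hQ, hK]
    ring
  have hE_eq : ∀ nn : ℕ, E nn = (∑ m ∈ range (nn + 1), Jf θ y ((1 + m) / A))
      - ∑ q, ∑ m ∈ range (nn + 1), Jf θ y ((1 + m) / a q) := by
    intro nn
    have e1 : ∑ k, θ k * (LGS (1 + A * y k) nn - ∑ q, LGS (1 + a q * y k) nn)
        = ∑ k, (θ k * K nn - θ k * P (y k) nn + θ k * Q (y k) nn) :=
      Finset.sum_congr rfl fun k _ => by rw [expand (y k) nn]; ring
    have e2 : ∑ k, (θ k * K nn - θ k * P (y k) nn + θ k * Q (y k) nn)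
        = K nn - ∑ k, θ k * P (y k) nn + ∑ k, θ k * Q (y k) nn := by
      rw [Finset.sum_add_distrib, Finset.sum_sub_distrib, ← Finset.sum_mul, hθsum, one_mul]
    have e3 : ∑ k, θ k * P (y k) nn
        = ∑ m ∈ range (nn + 1), ∑ k, θ k * Real.log (1 + A * y k + m) := by
      rw [show ∑ k, θ k * P (y k) nn
          = ∑ k, ∑ m ∈ range (nn + 1), θ k * Real.log (1 + A * y k + m) from
        Finset.sum_congr rfl fun k _ => by rw [hP]; exact Finset.mul_sum _ _ _]
      exact Finset.sum_comm
    have e4 : ∑ k, θ k * Q (y k) nn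
        = ∑ q, ∑ m ∈ range (nn + 1), ∑ k, θ k * Real.log (1 + a q * y k + m) := by
      rw [show ∑ k, θ k * Q (y k) nn
          = ∑ k, ∑ q, ∑ m ∈ range (nn + 1), θ k * Real.log (1 + a q * y k + m) from
        Finset.sum_congr rfl fun k _ => by
          rw [hQ]
          rw [Finset.mul_sum]
          exact Finset.sum_congr rfl fun q _ => Finset.mul_sum _ _ _]
      rw [Finset.sum_comm]
      exact Finset.sum_congr rfl fun q _ => Finset.sum_comm
    have e5 : P s nn - ∑ k, θ k * P (y k) nn
        = ∑ m ∈ range (nn + 1), Jf θ y ((1 + m) / A) := by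
      rw [e3, hP, ← Finset.sum_sub_distrib]
      exact Finset.sum_congr rfl fun m _ => hGc A hA m
    have e6 : Q s nn - ∑ k, θ k * Q (y k) nn
        = ∑ q, ∑ m ∈ range (nn + 1), Jf θ y ((1 + m) / a q) := by
      rw [e4, hQ, ← Finset.sum_sub_distrib]
      refine Finset.sum_congr rfl fun q _ => ?_
      rw [← Finset.sum_sub_distrib]
      exact Finset.sum_congr rfl fun m _ => hGc (a q) (ha q) m
    have : E nn = (P s nn - ∑ k, θ k * P (y k) nn) - (Q s nn - ∑ k, θ k * Q (y k) nn) := by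
      rw [hE]
      simp only
      rw [e1, e2, expand s nn]
      ring
    rw [this, e5, e6]
  -- summability and limits
  have hnn' : ∀ v : ℝ, 0 ≤ v → 0 ≤ Jf θ y v := fun v hv => Jf_nonneg hθ hθsum hy hv
  have hsumF : Summable (fun m : ℕ => Jf θ y ((1 + m) / A)) := Jf_summable hθ hθsum hy hA
  have hsumU : ∀ q, Summable (fun m : ℕ => Jf θ y ((1 + m) / a q)) :=
    fun q => Jf_summable hθ hθsum hy (ha q)
  have hF : Tendsto (fun nn => ∑ m ∈ range (nn + 1), Jf θ y ((1 + m) / A)) atTop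
      (𝓝 (∑' m : ℕ, Jf θ y ((1 + m) / A))) :=
    hsumF.hasSum.tendsto_sum_nat.comp (tendsto_add_atTop_nat 1)
  have hU : Tendsto (fun nn => ∑ q, ∑ m ∈ range (nn + 1), Jf θ y ((1 + m) / a q)) atTop
      (𝓝 (∑ q, ∑' m : ℕ, Jf θ y ((1 + m) / a q))) :=
    tendsto_finset_sum _ fun q _ =>
      (hsumU q).hasSum.tendsto_sum_nat.comp (tendsto_add_atTop_nat 1)
  have hE_tendsto2 : Tendsto E atTop
      (𝓝 ((∑' m : ℕ, Jf θ y ((1 + m) / A)) - ∑ q, ∑' m : ℕ, Jf θ y ((1 + m) / a q))) :=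
    Tendsto.congr (fun nn => (hE_eq nn).symm) (hF.sub hU)
  have huniq : (∑ k, θ k * L (y k)) - L s
      = (∑' m : ℕ, Jf θ y ((1 + m) / A)) - ∑ q, ∑' m : ℕ, Jf θ y ((1 + m) / a q) :=
    tendsto_nhds_unique hE_tendsto hE_tendsto2
  -- grid comparison
  obtain ⟨ι, hinj, hbd⟩ := exists_grid_injection a ha
  have hgnn : ∀ p : Fin r × ℕ, 0 ≤ Jf θ y ((1 + p.2) / a p.1) := fun p =>
    hnn' _ (by have := ha p.1; positivity)
  have hgsum : Summable (fun p : Fin r × ℕ => Jf θ y ((1 + p.2) / a p.1)) := by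
    rw [summable_prod_of_nonneg (fun p => hgnn p)]
    exact ⟨fun q => hsumU q, Summable.of_finite⟩
  have hcomp : ∀ p : Fin r × ℕ,
      Jf θ y ((1 + p.2) / a p.1) ≤ Jf θ y ((1 + (ι p : ℝ)) / A) := by
    intro p
    have h1 : (0:ℝ) < (1 + (ι p : ℝ)) / A := by positivity
    have h2 : (0:ℝ) < (1 + (p.2 : ℝ)) / a p.1 := by have := ha p.1; positivity
    apply Jf_antitoneOn hθ hθsum hy (Set.mem_Ioi.mpr h1) (Set.mem_Ioi.mpr h2)
    rw [div_le_iff₀ hA] at *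
    calc (1 + (ι p : ℝ)) = (ι p : ℝ) + 1 := by ring
      _ ≤ A * ((1 + p.2) / a p.1) := hbd p
      _ = (1 + p.2) / a p.1 * A := by ring
  have hUF : ∑ q, ∑' m : ℕ, Jf θ y ((1 + m) / a q) ≤ ∑' m : ℕ, Jf θ y ((1 + m) / A) := by
    have h1 : ∑' p : Fin r × ℕ, Jf θ y ((1 + p.2) / a p.1)
        = ∑ q, ∑' m : ℕ, Jf θ y ((1 + m) / a q) := by
      rw [Summable.tsum_prod' hgsum (fun q => hsumU q), tsum_fintype]
    calc ∑ q, ∑' m : ℕ, Jf θ y ((1 + m) / a q)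
        = ∑' p : Fin r × ℕ, Jf θ y ((1 + p.2) / a p.1) := h1.symm
      _ ≤ ∑' p : Fin r × ℕ, Jf θ y ((1 + (ι p : ℝ)) / A) :=
          Summable.tsum_le_tsum hcomp hgsum (hsumF.comp_injective hinj)
      _ ≤ ∑' m : ℕ, Jf θ y ((1 + m) / A) :=
          tsum_comp_le_tsum_of_inj hsumF (fun m => hnn' _ (by positivity)) hinj
  have hfinal : 0 ≤ (∑ k, θ k * L (y k)) - L s := by
    rw [huniq]
    linarith
  linarith


lemma prod_rpow_one {ℓ : ℕ} (θ : Fin ℓ → ℝ) (hθsum : ∑ k, θ k = 1) {c : ℝ} (hc : 0 < c) :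
    ∏ k, c ^ θ k = c := by
  rw [Finset.prod_congr rfl fun (k : Fin ℓ) _ => Real.rpow_def_of_pos hc (θ k),
    ← Real.exp_sum, ← Finset.mul_sum, hθsum, mul_one, Real.exp_log hc]

lemma beta_pow_eq {r : ℕ} (hr : 0 < r) (a : Fin r → ℝ) (ha : ∀ q, 0 < a q)
    {t : ℝ} (ht : 0 < t) :
    t ^ ((r : ℝ) - 1) * multivariateBeta (fun q => a q * t)
      = ((∑ q, a q) / ∏ q, a q) *
        ((∏ q, Real.Gamma (1 + a q * t)) / Real.Gamma (1 + (∑ q, a q) * t)) := by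
  have : Nonempty (Fin r) := Fin.pos_iff_nonempty.mp hr
  have hA : 0 < ∑ q, a q := Finset.sum_pos (fun q _ => ha q) univ_nonempty
  have hprodA : 0 < ∏ q, a q := Finset.prod_pos fun q _ => ha q
  unfold multivariateBeta
  rw [show ∑ q, a q * t = (∑ q, a q) * t from (Finset.sum_mul _ _ _).symm]
  have h1 : ∏ q, Real.Gamma (1 + a q * t)
      = ((∏ q, a q) * t ^ (r:ℕ)) * ∏ q, Real.Gamma (a q * t) := by
    rw [Finset.prod_congr rfl fun q _ =>
      show Real.Gamma (1 + a q * t) = a q * t * Real.Gamma (a q * t) by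
        rw [add_comm]; exact Real.Gamma_add_one (mul_pos (ha q) ht).ne']
    rw [Finset.prod_mul_distrib, Finset.prod_mul_distrib, Finset.prod_const,
      card_univ, Fintype.card_fin]
  have h2 : Real.Gamma (1 + (∑ q, a q) * t)
      = ((∑ q, a q) * t) * Real.Gamma ((∑ q, a q) * t) := by
    rw [add_comm]; exact Real.Gamma_add_one (by positivity)
  have h3 : t ^ ((r:ℝ) - 1) = t ^ (r:ℕ) / t := by
    rw [Real.rpow_sub ht, Real.rpow_one, Real.rpow_natCast]
  have hGpos : 0 < Real.Gamma ((∑ q, a q) * t) := Real.Gamma_pos_of_pos (by positivity)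
  rw [h1, h2, h3]
  have ht' : t ≠ 0 := ht.ne'
  have hG' : Real.Gamma ((∑ q, a q) * t) ≠ 0 := hGpos.ne'
  have hA' : (∑ q, a q) ≠ 0 := hA.ne'
  have hP' : (∏ q, a q) ≠ 0 := hprodA.ne'
  field_simp

lemma per_vector {r ℓ : ℕ} (hr : 0 < r) (a : Fin r → ℝ) (ha : ∀ q, 0 < a q)
    {θ y : Fin ℓ → ℝ} (hθ : ∀ k, 0 < θ k) (hθsum : ∑ k, θ k = 1) (hy : ∀ k, 0 < y k) :
    ∏ k, (y k ^ ((r:ℝ) - 1) * multivariateBeta (fun q => a q * y k)) ^ θ k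
      ≤ (∑ k, θ k * y k) ^ ((r:ℝ) - 1)
          * multivariateBeta (fun q => a q * (∑ k, θ k * y k)) := by
  have : Nonempty (Fin r) := Fin.pos_iff_nonempty.mp hr
  have hA : 0 < ∑ q, a q := Finset.sum_pos (fun q _ => ha q) univ_nonempty
  have hprodA : 0 < ∏ q, a q := Finset.prod_pos fun q _ => ha q
  have hs : 0 < ∑ k, θ k * y k := s_pos hθ hθsum hy
  set s := ∑ k, θ k * y k with hsdef
  set c := (∑ q, a q) / ∏ q, a q with hc
  have hcpos : 0 < c := div_pos hA hprodA
  set D : ℝ → ℝ := fun t =>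
    (∏ q, Real.Gamma (1 + a q * t)) / Real.Gamma (1 + (∑ q, a q) * t) with hD
  have hCpos : ∀ t : ℝ, 0 < t →
      0 < Real.Gamma (1 + (∑ q, a q) * t) / ∏ q, Real.Gamma (1 + a q * t) := fun t htp =>
    div_pos (Real.Gamma_pos_of_pos (by positivity))
      (Finset.prod_pos fun q _ => Real.Gamma_pos_of_pos (by have := ha q; positivity))
  have hDC : ∀ t : ℝ, D t
      = (Real.Gamma (1 + (∑ q, a q) * t) / ∏ q, Real.Gamma (1 + a q * t))⁻¹ := fun t => by
    rw [hD, inv_div]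
  have hDpos : ∀ t : ℝ, 0 < t → 0 < D t := fun t htp => by
    rw [hDC t]; exact inv_pos.mpr (hCpos t htp)
  calc ∏ k, (y k ^ ((r:ℝ) - 1) * multivariateBeta (fun q => a q * y k)) ^ θ k
      = ∏ k, (c * D (y k)) ^ θ k := Finset.prod_congr rfl fun k _ => by
        rw [beta_pow_eq hr a ha (hy k)]
    _ = (∏ k, c ^ θ k) * ∏ k, D (y k) ^ θ k := by
        rw [← Finset.prod_mul_distrib]
        exact Finset.prod_congr rfl fun k _ =>
          Real.mul_rpow hcpos.le (hDpos (y k) (hy k)).le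
    _ = c * ∏ k, D (y k) ^ θ k := by rw [prod_rpow_one θ hθsum hcpos]
    _ ≤ c * D s := by
        apply mul_le_mul_of_nonneg_left _ hcpos.le
        rw [hDC s]
        have h2 : ∏ k, D (y k) ^ θ k
            = (∏ k, (Real.Gamma (1 + (∑ q, a q) * y k) /
                ∏ q, Real.Gamma (1 + a q * y k)) ^ θ k)⁻¹ := by
          rw [← Finset.prod_inv_distrib]
          exact Finset.prod_congr rfl fun k _ => by
            rw [hDC (y k), ← Real.inv_rpow (hCpos (y k) (hy k)).le]
        rw [h2]
        exact inv_anti₀ (hCpos s hs) (keyIneq hr a ha hθ hθsum hy)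
    _ = s ^ ((r:ℝ) - 1) * multivariateBeta (fun q => a q * s) :=
        (beta_pow_eq hr a ha hs).symm


end MBAux

theorem multivariate_beta_log_convexity_inequality
    (m n ℓ : ℕ) (hm : 0 < m) (hn : 0 < n) (hℓ : 0 < ℓ)
    (lam : Fin m → Fin n → ℝ) (hlam : ∀ i j, 0 < lam i j)
    (θ : Fin ℓ → ℝ) (hθ : ∀ k, θ k ∈ Set.Ioo (0 : ℝ) 1) (hθsum : ∑ k, θ k = 1)
    (y : Fin ℓ → ℝ) (hy : ∀ k, 0 < y k)
    (s : ℝ) (hs : s = ∑ k, θ k * y k) :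
    (∏ k : Fin ℓ, y k ^ θ k) ^ (2 * (m : ℝ) * n - m - n) /
        s ^ (2 * (m : ℝ) * n - m - n) ≤
      ((∏ i : Fin m, multivariateBeta (fun j : Fin n => lam i j * s)) *
          ∏ j : Fin n, multivariateBeta (fun i : Fin m => lam i j * s)) /
        ∏ k : Fin ℓ,
          ((∏ i : Fin m, multivariateBeta (fun j : Fin n => lam i j * y k)) *
            ∏ j : Fin n, multivariateBeta (fun i : Fin m => lam i j * y k)) ^ θ k := by
  have hθ' : ∀ k, 0 < θ k := fun k => (hθ k).1
  have hmne : Nonempty (Fin m) := Fin.pos_iff_nonempty.mp hm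
  have hnne : Nonempty (Fin n) := Fin.pos_iff_nonempty.mp hn
  have hspos : 0 < s := hs ▸ MBAux.s_pos hθ' hθsum hy
  set N : ℝ := 2 * (m : ℝ) * n - m - n with hN
  -- positivity of beta factors
  have hrowpos : ∀ t : ℝ, 0 < t → ∀ i,
      0 < multivariateBeta (fun j : Fin n => lam i j * t) := by
    intro t ht i
    unfold multivariateBeta
    exact div_pos
      (Finset.prod_pos fun j _ => Real.Gamma_pos_of_pos (mul_pos (hlam i j) ht))
      (Real.Gamma_pos_of_pos (Finset.sum_pos (fun j _ => mul_pos (hlam i j) ht)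
        univ_nonempty))
  have hcolpos : ∀ t : ℝ, 0 < t → ∀ j,
      0 < multivariateBeta (fun i : Fin m => lam i j * t) := by
    intro t ht j
    unfold multivariateBeta
    exact div_pos
      (Finset.prod_pos fun i _ => Real.Gamma_pos_of_pos (mul_pos (hlam i j) ht))
      (Real.Gamma_pos_of_pos (Finset.sum_pos (fun i _ => mul_pos (hlam i j) ht)
        univ_nonempty))
  have hPpos : ∀ t : ℝ, 0 < t →
      0 < (∏ i, multivariateBeta (fun j : Fin n => lam i j * t)) *
          ∏ j, multivariateBeta (fun i : Fin m => lam i j * t) := fun t ht =>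
    mul_pos (Finset.prod_pos fun i _ => hrowpos t ht i)
      (Finset.prod_pos fun j _ => hcolpos t ht j)
  have hZpos : 0 < ∏ k : Fin ℓ,
      ((∏ i, multivariateBeta (fun j : Fin n => lam i j * y k)) *
        ∏ j, multivariateBeta (fun i : Fin m => lam i j * y k)) ^ θ k :=
    Finset.prod_pos fun k _ => Real.rpow_pos_of_pos (hPpos (y k) (hy k)) _
  rw [div_le_div_iff₀ (Real.rpow_pos_of_pos hspos _) hZpos]
  -- generic identity
  have hGid : ∀ t : ℝ, 0 < t →
      t ^ N * ((∏ i, multivariateBeta (fun j : Fin n => lam i j * t)) *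
          ∏ j, multivariateBeta (fun i : Fin m => lam i j * t))
        = (∏ i, (t ^ ((n:ℝ) - 1) * multivariateBeta (fun j : Fin n => lam i j * t))) *
          ∏ j, (t ^ ((m:ℝ) - 1) * multivariateBeta (fun i : Fin m => lam i j * t)) := by
    intro t ht
    rw [Finset.prod_mul_distrib, Finset.prod_mul_distrib, Finset.prod_const,
      Finset.prod_const, card_univ, card_univ, Fintype.card_fin, Fintype.card_fin]
    rw [← Real.rpow_natCast (t ^ ((n:ℝ) - 1)) m, ← Real.rpow_natCast (t ^ ((m:ℝ) - 1)) n,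
      ← Real.rpow_mul ht.le, ← Real.rpow_mul ht.le]
    rw [show t ^ N = t ^ (((n:ℝ) - 1) * m) * t ^ (((m:ℝ) - 1) * n) by
      rw [← Real.rpow_add ht, hN]; ring_nf]
    ring
  -- row and column inequalities
  have hrow : ∀ i, ∏ k, (y k ^ ((n:ℝ) - 1) *
        multivariateBeta (fun j : Fin n => lam i j * y k)) ^ θ k
      ≤ s ^ ((n:ℝ) - 1) * multivariateBeta (fun j : Fin n => lam i j * s) := by
    intro i
    rw [hs]
    exact MBAux.per_vector hn (fun j => lam i j) (hlam i) hθ' hθsum hy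
  have hcol : ∀ j, ∏ k, (y k ^ ((m:ℝ) - 1) *
        multivariateBeta (fun i : Fin m => lam i j * y k)) ^ θ k
      ≤ s ^ ((m:ℝ) - 1) * multivariateBeta (fun i : Fin m => lam i j * s) := by
    intro j
    rw [hs]
    exact MBAux.per_vector hm (fun i => lam i j) (fun i => hlam i j) hθ' hθsum hy
  -- LHS rewriting
  have hLHS : (∏ k : Fin ℓ, y k ^ θ k) ^ N *
      ∏ k : Fin ℓ, ((∏ i, multivariateBeta (fun j : Fin n => lam i j * y k)) *
        ∏ j, multivariateBeta (fun i : Fin m => lam i j * y k)) ^ θ k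
      = (∏ i, ∏ k, (y k ^ ((n:ℝ) - 1) *
            multivariateBeta (fun j : Fin n => lam i j * y k)) ^ θ k) *
        ∏ j, ∏ k, (y k ^ ((m:ℝ) - 1) *
            multivariateBeta (fun i : Fin m => lam i j * y k)) ^ θ k := by
    have h1 : (∏ k : Fin ℓ, y k ^ θ k) ^ N = ∏ k : Fin ℓ, (y k ^ N) ^ θ k := by
      rw [← Real.finset_prod_rpow univ _ (fun k _ => (Real.rpow_pos_of_pos (hy k) _).le) N]
      exact Finset.prod_congr rfl fun k _ => by
        rw [← Real.rpow_mul (hy k).le, ← Real.rpow_mul (hy k).le, mul_comm]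
    rw [h1, ← Finset.prod_mul_distrib]
    have h2 : ∀ k : Fin ℓ, (y k ^ N) ^ θ k *
        ((∏ i, multivariateBeta (fun j : Fin n => lam i j * y k)) *
          ∏ j, multivariateBeta (fun i : Fin m => lam i j * y k)) ^ θ k
        = (∏ i, (y k ^ ((n:ℝ) - 1) *
              multivariateBeta (fun j : Fin n => lam i j * y k)) ^ θ k) *
          ∏ j, (y k ^ ((m:ℝ) - 1) *
              multivariateBeta (fun i : Fin m => lam i j * y k)) ^ θ k := by
      intro k
      rw [← Real.mul_rpow (Real.rpow_pos_of_pos (hy k) _).le (hPpos (y k) (hy k)).le,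
        hGid (y k) (hy k),
        Real.mul_rpow
          (Finset.prod_pos fun i _ => mul_pos (Real.rpow_pos_of_pos (hy k) _)
            (hrowpos (y k) (hy k) i)).le
          (Finset.prod_pos fun j _ => mul_pos (Real.rpow_pos_of_pos (hy k) _)
            (hcolpos (y k) (hy k) j)).le,
        ← Real.finset_prod_rpow univ _ (fun i _ => (mul_pos (Real.rpow_pos_of_pos (hy k) _)
            (hrowpos (y k) (hy k) i)).le) _,
        ← Real.finset_prod_rpow univ _ (fun j _ => (mul_pos (Real.rpow_pos_of_pos (hy k) _)
            (hcolpos (y k) (hy k) j)).le) _]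
    rw [Finset.prod_congr rfl fun k _ => h2 k, Finset.prod_mul_distrib]
    congr 1
    · exact Finset.prod_comm
    · exact Finset.prod_comm
  calc (∏ k : Fin ℓ, y k ^ θ k) ^ N *
      ∏ k : Fin ℓ, ((∏ i, multivariateBeta (fun j : Fin n => lam i j * y k)) *
        ∏ j, multivariateBeta (fun i : Fin m => lam i j * y k)) ^ θ k
      = (∏ i, ∏ k, (y k ^ ((n:ℝ) - 1) *
            multivariateBeta (fun j : Fin n => lam i j * y k)) ^ θ k) *
        ∏ j, ∏ k, (y k ^ ((m:ℝ) - 1) *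
            multivariateBeta (fun i : Fin m => lam i j * y k)) ^ θ k := hLHS
    _ ≤ (∏ i, (s ^ ((n:ℝ) - 1) * multivariateBeta (fun j : Fin n => lam i j * s))) *
        ∏ j, (s ^ ((m:ℝ) - 1) * multivariateBeta (fun i : Fin m => lam i j * s)) := by
        apply mul_le_mul
        · exact Finset.prod_le_prod
            (fun i _ => Finset.prod_nonneg fun k _ =>
              (Real.rpow_pos_of_pos (mul_pos (Real.rpow_pos_of_pos (hy k) _)
                (hrowpos (y k) (hy k) i)) _).le)
            (fun i _ => hrow i)
        · exact Finset.prod_le_prod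
            (fun j _ => Finset.prod_nonneg fun k _ =>
              (Real.rpow_pos_of_pos (mul_pos (Real.rpow_pos_of_pos (hy k) _)
                (hcolpos (y k) (hy k) j)) _).le)
            (fun j _ => hcol j)
        · exact Finset.prod_nonneg fun j _ => Finset.prod_nonneg fun k _ =>
            (Real.rpow_pos_of_pos (mul_pos (Real.rpow_pos_of_pos (hy k) _)
              (hcolpos (y k) (hy k) j)) _).le
        · exact Finset.prod_nonneg fun i _ =>
            (mul_pos (Real.rpow_pos_of_pos hspos _) (hrowpos s hspos i)).le
    _ = ((∏ i, multivariateBeta (fun j : Fin n => lam i j * s)) *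
          ∏ j, multivariateBeta (fun i : Fin m => lam i j * s)) * s ^ N := by
        rw [← hGid s hspos]; ring
end
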